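/- arXiv:2009.06569 — 8 statements merged into one kernel-verified Lean document; each statement's English description precedes it below -/
import Mathlib

section
/- Let d ≥ 2 and let M be a real d×d matrix such that for every nonzero x ∈ ℝ^d the projective orbit of x under the one-parameter group t ↦ exp(tM) is a proper subset of a projective line. Then either the flow is parabolic, i.e. there exists λ ∈ ℝ with (M − λI)² = 0, or the flow is hyperbolic, i.e. there exist real numbers α ≠ β with (M − αI)(M − βI) = 0 (so M is diagonalizable over ℝ with exactly two eigenvalues). -/
/-- The projective orbit of a nonzero vector `x` under the one-parameter group
`t ↦ exp (t M)` is a proper subset of a projective line: there is a two-dimensional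
linear subspace `V` containing the whole orbit, and some nonzero `y ∈ V` that the
orbit misses projectively (no orbit point is a scalar multiple of `y`). -/
def ProjOrbitProperSubsetOfLine (d : ℕ) (M : Matrix (Fin d) (Fin d) ℝ)
    (x : Fin d → ℝ) : Prop :=
  ∃ V : Submodule ℝ (Fin d → ℝ), Module.finrank ℝ V = 2 ∧
    (∀ t : ℝ, (NormedSpace.exp (t • M)).mulVec x ∈ V) ∧
    ∃ y ∈ V, y ≠ 0 ∧ ∀ t c : ℝ, (NormedSpace.exp (t • M)).mulVec x ≠ c • y

open NormedSpace Submodule Set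

namespace FlowProof

variable {d : ℕ}

/-- derivative of a curve inside a submodule of ℝ^d stays in the submodule -/
lemma deriv_mem {f : ℝ → (Fin d → ℝ)} {f' : Fin d → ℝ} {t₀ : ℝ}
    (hf : HasDerivAt f f' t₀) (V : Submodule ℝ (Fin d → ℝ)) (hmem : ∀ t, f t ∈ V) :
    f' ∈ V := by
  have hclosed : IsClosed (V : Set (Fin d → ℝ)) := V.closed_of_finiteDimensional
  have ht := hasDerivAt_iff_tendsto_slope.mp hf
  refine hclosed.mem_of_tendsto ht (Filter.Eventually.of_forall fun s => ?_)
  rw [slope_def_module]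
  exact V.smul_mem _ (V.sub_mem (hmem s) (hmem t₀))

lemma orbit_mem_M (M : Matrix (Fin d) (Fin d) ℝ) (x : Fin d → ℝ)
    (V : Submodule ℝ (Fin d → ℝ))
    (hV : ∀ t : ℝ, (exp (t • M)).mulVec x ∈ V) :
    x ∈ V ∧ M.mulVec x ∈ V ∧ M.mulVec (M.mulVec x) ∈ V := by
  letI : NormedRing (Matrix (Fin d) (Fin d) ℝ) := Matrix.linftyOpNormedRing
  letI : NormedAlgebra ℝ (Matrix (Fin d) (Fin d) ℝ) := Matrix.linftyOpNormedAlgebra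
  let L : Matrix (Fin d) (Fin d) ℝ →ₗ[ℝ] (Fin d → ℝ) :=
    { toFun := fun N => N.mulVec x
      map_add' := fun A B => Matrix.add_mulVec A B x
      map_smul' := fun c A => Matrix.smul_mulVec c A x }
  have hO : ∀ t : ℝ, HasDerivAt (fun s : ℝ => (exp (s • M)).mulVec x)
      (M.mulVec ((exp (t • M)).mulVec x)) t := by
    intro t
    have h1 := hasDerivAt_exp_smul_const' (𝕂 := ℝ) M t
    have h2 := (L.toContinuousLinearMap.hasFDerivAt.comp_hasDerivAt t h1)
    convert h2 using 1
    · rfl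
    · rfl
    · rfl
    · rfl
    · simp [L, Matrix.mulVec_mulVec]
      rfl
  have hx : x ∈ V := by simpa [exp_zero] using hV 0
  have hMx' : ∀ t, M.mulVec ((exp (t • M)).mulVec x) ∈ V :=
    fun t => deriv_mem (hO t) V hV
  have hMx : M.mulVec x ∈ V := by simpa [exp_zero] using hMx' 0
  let L2 : (Fin d → ℝ) →ₗ[ℝ] (Fin d → ℝ) := M.mulVecLin
  have hO2 : HasDerivAt (fun t : ℝ => M.mulVec ((exp (t • M)).mulVec x))
      (M.mulVec (M.mulVec ((exp ((0:ℝ) • M)).mulVec x))) 0 := by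
    have h2 := (L2.toContinuousLinearMap.hasFDerivAt.comp_hasDerivAt 0 (hO 0))
    simpa [L2, Function.comp_def] using h2
  have hM2x : M.mulVec (M.mulVec x) ∈ V := by
    have := deriv_mem hO2 V hMx'
    simpa [exp_zero] using this
  exact ⟨hx, hMx, hM2x⟩


lemma not_li2 {v w : Fin d → ℝ} (h : ¬ LinearIndependent ℝ ![v, w]) :
    ∃ c0 c1 : ℝ, c0 • v + c1 • w = 0 ∧ (c0 ≠ 0 ∨ c1 ≠ 0) := by
  rw [Fintype.not_linearIndependent_iff] at h
  obtain ⟨g, hg, i, hi⟩ := h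
  refine ⟨g 0, g 1, ?_, ?_⟩
  · simpa [Fin.sum_univ_two] using hg
  · fin_cases i
    · exact Or.inl hi
    · exact Or.inr hi

lemma not_li3 {v w u3 : Fin d → ℝ} (h : ¬ LinearIndependent ℝ ![v, w, u3]) :
    ∃ c0 c1 c2 : ℝ, c0 • v + c1 • w + c2 • u3 = 0 ∧ (c0 ≠ 0 ∨ c1 ≠ 0 ∨ c2 ≠ 0) := by
  rw [Fintype.not_linearIndependent_iff] at h
  obtain ⟨g, hg, i, hi⟩ := h
  refine ⟨g 0, g 1, g 2, ?_, ?_⟩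
  · simpa [Fin.sum_univ_three] using hg
  · fin_cases i
    · exact Or.inl hi
    · exact Or.inr (Or.inl hi)
    · exact Or.inr (Or.inr hi)

lemma li2_rel {v w : Fin d → ℝ} (h : LinearIndependent ℝ ![v, w]) {c0 c1 : ℝ}
    (hrel : c0 • v + c1 • w = 0) : c0 = 0 ∧ c1 = 0 := by
  have := Fintype.linearIndependent_iff.mp h ![c0, c1]
    (by simpa [Fin.sum_univ_two] using hrel)
  exact ⟨this 0, this 1⟩

lemma li3_rel {v w u3 : Fin d → ℝ} (h : LinearIndependent ℝ ![v, w, u3]) {c0 c1 c2 : ℝ}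
    (hrel : c0 • v + c1 • w + c2 • u3 = 0) : c0 = 0 ∧ c1 = 0 ∧ c2 = 0 := by
  have := Fintype.linearIndependent_iff.mp h ![c0, c1, c2]
    (by simpa [Fin.sum_univ_three] using hrel)
  exact ⟨this 0, this 1, this 2⟩

lemma li4_rel {v w u3 u4 : Fin d → ℝ} (h : LinearIndependent ℝ ![v, w, u3, u4])
    {c0 c1 c2 c3 : ℝ}
    (hrel : c0 • v + c1 • w + c2 • u3 + c3 • u4 = 0) :
    c0 = 0 ∧ c1 = 0 ∧ c2 = 0 ∧ c3 = 0 := by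
  have := Fintype.linearIndependent_iff.mp h ![c0, c1, c2, c3]
    (by simpa [Fin.sum_univ_four] using hrel)
  exact ⟨this 0, this 1, this 2, this 3⟩

lemma dep_pair {v w : Fin d → ℝ} (h : ¬ LinearIndependent ℝ ![v, w]) (hv : v ≠ 0) :
    ∃ μ : ℝ, w = μ • v := by
  obtain ⟨c0, c1, hrel, hne⟩ := not_li2 h
  by_cases hc1 : c1 = 0
  · subst hc1
    rcases hne with h0 | h0
    · exfalso
      apply hv
      have : c0 • v = 0 := by simpa using hrel
      simpa [h0] using (smul_eq_zero.mp this).resolve_left h0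
    · exact absurd rfl h0
  · refine ⟨-c0 / c1, ?_⟩
    have h2 : c1 • w = (-c0) • v := by
      rw [neg_smul]
      linear_combination (norm := module) hrel
    have e : c1 * (-c0 / c1) = -c0 := by field_simp
    calc w = c1⁻¹ • (c1 • w) := by rw [smul_smul, inv_mul_cancel₀ hc1, one_smul]
    _ = (-c0 / c1) • v := by
        rw [h2, smul_smul]
        congr 1
        field_simp

lemma li3_of {u w v : Fin d → ℝ} (h2 : LinearIndependent ℝ ![u, w])
    (hv : v ∉ span ℝ (range ![u, w])) : LinearIndependent ℝ ![u, w, v] := by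
  by_contra hdep
  obtain ⟨c0, c1, c2, hrel, hne⟩ := not_li3 hdep
  by_cases hc2 : c2 = 0
  · subst hc2
    have h01 := li2_rel h2 (show c0 • u + c1 • w = 0 by
      linear_combination (norm := module) hrel)
    rcases hne with h | h | h
    · exact h h01.1
    · exact h h01.2
    · exact h rfl
  · apply hv
    rw [mem_span_range_iff_exists_fun]
    refine ⟨![-c0 / c2, -c1 / c2], ?_⟩
    rw [Fin.sum_univ_two]
    have key : c2 • ((-c0/c2) • u + (-c1/c2) • w) = c2 • v := by
      rw [smul_add, smul_smul, smul_smul]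
      have e : ∀ c : ℝ, c2 * (-c / c2) = -c := fun c => by field_simp
      rw [e, e]
      linear_combination (norm := module) -hrel
    have key2 := smul_right_injective (Fin d → ℝ) hc2 key
    simpa using key2

lemma li4_of {u w v v4 : Fin d → ℝ} (h3 : LinearIndependent ℝ ![u, w, v])
    (hv : v4 ∉ span ℝ (range ![u, w, v])) : LinearIndependent ℝ ![u, w, v, v4] := by
  rw [Fintype.linearIndependent_iff]
  intro g hg
  have hrel : g 0 • u + g 1 • w + g 2 • v + g 3 • v4 = 0 := by
    simpa [Fin.sum_univ_four] using hg
  by_cases hc3 : g 3 = 0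
  · have h3' := li3_rel h3 (show g 0 • u + g 1 • w + g 2 • v = 0 by
      rw [hc3] at hrel
      linear_combination (norm := module) hrel)
    intro i; fin_cases i <;> simp [h3'.1, h3'.2.1, h3'.2.2, hc3]
  · exfalso; apply hv
    rw [mem_span_range_iff_exists_fun]
    refine ⟨![-g 0 / g 3, -g 1 / g 3, -g 2 / g 3], ?_⟩
    rw [Fin.sum_univ_three]
    have key : g 3 • ((-g 0/g 3) • u + (-g 1/g 3) • w + (-g 2/g 3) • v) = g 3 • v4 := by
      rw [smul_add, smul_add, smul_smul, smul_smul, smul_smul]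
      have e : ∀ c : ℝ, g 3 * (-c / g 3) = -c := fun c => by field_simp
      rw [e, e, e]
      linear_combination (norm := module) -hrel
    have key2 := smul_right_injective (Fin d → ℝ) hc3 key
    simpa using key2

lemma triple_to_span {M : Matrix (Fin d) (Fin d) ℝ} {v : Fin d → ℝ}
    (hdep : ¬ LinearIndependent ℝ ![v, M.mulVec v, M.mulVec (M.mulVec v)])
    (hli : LinearIndependent ℝ ![v, M.mulVec v]) :
    ∃ a b : ℝ, M.mulVec (M.mulVec v) = a • v + b • M.mulVec v := by
  obtain ⟨c0, c1, c2, hrel, hne⟩ := not_li3 hdep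
  by_cases hc2 : c2 = 0
  · exfalso
    subst hc2
    have h01 := li2_rel hli (show c0 • v + c1 • M.mulVec v = 0 by
      linear_combination (norm := module) hrel)
    rcases hne with h | h | h
    · exact h h01.1
    · exact h h01.2
    · exact h rfl
  · refine ⟨-c0 / c2, -c1 / c2, ?_⟩
    have key : c2 • ((-c0/c2) • v + (-c1/c2) • M.mulVec v)
        = c2 • (M.mulVec (M.mulVec v)) := by
      rw [smul_add, smul_smul, smul_smul]
      have e : ∀ c : ℝ, c2 * (-c / c2) = -c := fun c => by field_simp
      rw [e, e]
      linear_combination (norm := module) -hrel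
    exact (smul_right_injective (Fin d → ℝ) hc2 key).symm

lemma scalar_case (M : Matrix (Fin d) (Fin d) ℝ) (hd : 0 < d)
    (hscal : ∀ v : Fin d → ℝ, ¬ LinearIndependent ℝ ![v, M.mulVec v]) :
    ∃ lam : ℝ, ∀ v, M.mulVec v = lam • v := by
  have hu0 : (Pi.single (⟨0, hd⟩ : Fin d) (1:ℝ) : Fin d → ℝ) ≠ 0 := by
    intro hzero
    have := congrFun hzero ⟨0, hd⟩
    simp at this
  set u0 : Fin d → ℝ := Pi.single ⟨0, hd⟩ 1 with hu0def
  obtain ⟨lam, hlam⟩ := dep_pair (hscal u0) hu0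
  refine ⟨lam, fun v => ?_⟩
  by_cases hv0 : v = 0
  · simp [hv0, Matrix.mulVec_zero]
  by_cases hdep : LinearIndependent ℝ ![u0, v]
  · obtain ⟨μ, hμ⟩ := dep_pair (hscal v) hv0
    have hw0 : u0 + v ≠ 0 := by
      intro hzero
      have h11 := li2_rel hdep (show (1:ℝ) • u0 + (1:ℝ) • v = 0 by
        rw [one_smul, one_smul]; exact hzero)
      exact one_ne_zero h11.1
    obtain ⟨κ, hκ⟩ := dep_pair (hscal (u0 + v)) hw0
    have hκ' : lam • u0 + μ • v = κ • u0 + κ • v := by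
      rw [← hlam, ← hμ, ← Matrix.mulVec_add, hκ, smul_add]
    have hrel : (lam - κ) • u0 + (μ - κ) • v = 0 := by
      rw [sub_smul, sub_smul]
      linear_combination (norm := module) hκ'
    have h2 := li2_rel hdep hrel
    have hμlam : μ = lam := by
      have e1 := h2.1; have e2 := h2.2; linarith
    rw [hμ, hμlam]
  · obtain ⟨c, hc⟩ := dep_pair hdep hu0
    rw [hc, Matrix.mulVec_smul, hlam, smul_smul, smul_smul, mul_comm]

lemma quadratic_of_dep (M : Matrix (Fin d) (Fin d) ℝ) (hd : 0 < d)
    (H : ∀ x : Fin d → ℝ, ¬ LinearIndependent ℝ ![x, M.mulVec x, M.mulVec (M.mulVec x)]) :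
    ∃ p q : ℝ, ∀ v, M.mulVec (M.mulVec v) = q • v + p • M.mulVec v := by
  by_cases hscal : ∀ v : Fin d → ℝ, ¬ LinearIndependent ℝ ![v, M.mulVec v]
  · obtain ⟨lam, hlam⟩ := scalar_case M hd hscal
    refine ⟨2 * lam, -(lam * lam), fun v => ?_⟩
    rw [hlam (M.mulVec v), hlam v]
    module
  · push_neg at hscal
    obtain ⟨u, hu⟩ := hscal
    set w1 := M.mulVec u with hw1
    obtain ⟨a, b, hMu⟩ := triple_to_span (H u) hu
    refine ⟨b, a, fun v => ?_⟩
    by_cases hvsp : v ∈ span ℝ (range ![u, w1])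
    · rw [mem_span_range_iff_exists_fun] at hvsp
      obtain ⟨c, hc⟩ := hvsp
      have hc' : c 0 • u + c 1 • w1 = v := by
        rw [← hc]; simp [Fin.sum_univ_two]
      have s1 : M.mulVec v = (c 1 * a) • u + (c 0 + c 1 * b) • w1 := by
        rw [← hc', Matrix.mulVec_add, Matrix.mulVec_smul, Matrix.mulVec_smul, ← hw1, hMu]
        module
      rw [s1, Matrix.mulVec_add, Matrix.mulVec_smul, Matrix.mulVec_smul, ← hw1, hMu,
        ← hc']
      module
    · have li3 : LinearIndependent ℝ ![u, w1, v] := li3_of hu hvsp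
      by_cases hmv : M.mulVec v ∈ span ℝ (range ![u, w1, v])
      · rw [mem_span_range_iff_exists_fun] at hmv
        obtain ⟨cc, hcc⟩ := hmv
        obtain ⟨x, y, z, hMv⟩ : ∃ x y z : ℝ, M.mulVec v = x • u + y • w1 + z • v :=
          ⟨cc 0, cc 1, cc 2, by rw [← hcc]; simp [Fin.sum_univ_three]⟩
        have key : ∀ r : ℝ,
            r * (z^2 - b*z - a) + r^2 * (b*x - 2*x*z - b*y*z - 2*a*y)
              + r^3 * (x^2 + b*x*y - a*y^2) = 0 := by
          intro r
          have hMw : M.mulVec (u + r • v) = (r*x) • u + (1 + r*y) • w1 + (r*z) • v := by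
            rw [Matrix.mulVec_add, Matrix.mulVec_smul, hMv, ← hw1]
            module
          have hM2w : M.mulVec (M.mulVec (u + r • v))
              = (a + r*(a*y) + r*(z*x)) • u + (r*x + b + r*(b*y) + r*(z*y)) • w1
                + (r*(z*z)) • v := by
            rw [hMw, Matrix.mulVec_add, Matrix.mulVec_add, Matrix.mulVec_smul,
              Matrix.mulVec_smul, Matrix.mulVec_smul, ← hw1, hMu, hMv]
            module
          obtain ⟨g0, g1, g2, hrel, hne⟩ := not_li3 (H (u + r • v))
          rw [hM2w, hMw] at hrel
          have hrel3 : (g0 + g1*(r*x) + g2*(a + r*(a*y) + r*(z*x))) • u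
              + (g1*(1 + r*y) + g2*(r*x + b + r*(b*y) + r*(z*y))) • w1
              + (g0*r + g1*(r*z) + g2*(r*(z*z))) • v = 0 := by
            linear_combination (norm := module) hrel
          obtain ⟨e1, e2, e3⟩ := li3_rel li3 hrel3
          have hdet : (!![(1:ℝ), r*x, a + r*(a*y) + r*(z*x);
              0, 1 + r*y, r*x + b + r*(b*y) + r*(z*y);
              r, r*z, r*(z*z)]).det = 0 := by
            rw [← Matrix.exists_mulVec_eq_zero_iff]
            refine ⟨![g0, g1, g2], ?_, ?_⟩
            · intro hzero
              rcases hne with hn|hn|hn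
              · exact hn (by simpa using congrFun hzero 0)
              · exact hn (by simpa using congrFun hzero 1)
              · exact hn (by simpa using congrFun hzero 2)
            · funext i
              fin_cases i
              · show _ = (0 : ℝ)
                simp [Matrix.mulVec, dotProduct, Fin.sum_univ_three]
                linear_combination e1
              · show _ = (0 : ℝ)
                simp [Matrix.mulVec, dotProduct, Fin.sum_univ_three]
                linear_combination e2
              · show _ = (0 : ℝ)
                simp [Matrix.mulVec, dotProduct, Fin.sum_univ_three]
                linear_combination e3
          simp [Matrix.det_fin_three] at hdet
          linear_combination hdet
        have k1 := key 1
        have k2 := key (-1)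
        have k3 := key 2
        have E1 : z^2 - b*z - a = 0 := by linear_combination k1 - k2/3 - k3/6
        have E2 : b*x - 2*x*z - b*y*z - 2*a*y = 0 := by linear_combination k1/2 + k2/2
        have E3 : x^2 + b*x*y - a*y^2 = 0 := by linear_combination k3/6 - k1/2 - k2/6
        have C2 : x + y*z = 0 := by
          by_cases hb : b - 2*z = 0
          · have hsq : (x + y*z)^2 = 0 := by
              linear_combination E3 - x*y*hb - y^2*z*hb - y^2*E1
            exact pow_eq_zero_iff (by norm_num : 2 ≠ 0) |>.mp hsq
          · have hprod : (b - 2*z) * (x + y*z) = 0 := by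
              linear_combination E2 - 2*y*E1
            exact (mul_eq_zero.mp hprod).resolve_left hb
        have C1 : a*y + z*x - b*x = 0 := by linear_combination (z - b) * C2 - y * E1
        rw [hMv, Matrix.mulVec_add, Matrix.mulVec_add, Matrix.mulVec_smul,
          Matrix.mulVec_smul, Matrix.mulVec_smul, ← hw1, hMu, hMv]
        match_scalars
        · linear_combination C2
        · linear_combination C1
        · linear_combination E1
      · have li4 := li4_of li3 hmv
        have hpair : LinearIndependent ℝ ![v, M.mulVec v] := by
          by_contra hdep2
          obtain ⟨c0, c1, hrel, hne⟩ := not_li2 hdep2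
          have h4 := li4_rel li4 (show (0:ℝ) • u + (0:ℝ) • w1 + c0 • v + c1 • M.mulVec v = 0 by
            linear_combination (norm := module) hrel)
          rcases hne with hn|hn
          · exact hn h4.2.2.1
          · exact hn h4.2.2.2
        obtain ⟨ca, e, hMv2⟩ := triple_to_span (H v) hpair
        obtain ⟨g0, g1, g2, hrel, hne⟩ := not_li3 (H (u + v))
        have hMuv : M.mulVec (u + v) = w1 + M.mulVec v := by
          rw [Matrix.mulVec_add, ← hw1]
        have hM2uv : M.mulVec (M.mulVec (u + v))
            = (a • u + b • w1) + (ca • v + e • M.mulVec v) := by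
          rw [hMuv, Matrix.mulVec_add, hMu, hMv2]
        rw [hM2uv, hMuv] at hrel
        have hrel4 : (g0 + g2*a) • u + (g1 + g2*b) • w1 + (g0 + g2*ca) • v
            + (g1 + g2*e) • M.mulVec v = 0 := by
          linear_combination (norm := module) hrel
        have h4 := li4_rel li4 hrel4
        have hg2 : g2 ≠ 0 := by
          intro hz
          have e0 : g0 = 0 := by
            have := h4.1; rw [hz, zero_mul, add_zero] at this; exact this
          have e1' : g1 = 0 := by
            have := h4.2.1; rw [hz, zero_mul, add_zero] at this; exact this
          rcases hne with hn|hn|hn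
          exacts [hn e0, hn e1', hn hz]
        have hca : ca = a := by
          have hprod : g2 * (a - ca) = 0 := by linear_combination h4.1 - h4.2.2.1
          have := (mul_eq_zero.mp hprod).resolve_left hg2
          linarith
        have he : e = b := by
          have hprod : g2 * (b - e) = 0 := by linear_combination h4.2.1 - h4.2.2.2
          have := (mul_eq_zero.mp hprod).resolve_left hg2
          linarith
        rw [hMv2, hca, he]

lemma ext_of_mulVec {A B : Matrix (Fin d) (Fin d) ℝ}
    (h : ∀ v : Fin d → ℝ, A.mulVec v = B.mulVec v) : A = B := by
  ext i j
  have := congrFun (h (Pi.single j 1)) i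
  simpa [Matrix.mulVec_single] using this

lemma dep_of_hyp (M : Matrix (Fin d) (Fin d) ℝ)
    (h : ∀ x : Fin d → ℝ, x ≠ 0 → ProjOrbitProperSubsetOfLine d M x) :
    ∀ x : Fin d → ℝ, ¬ LinearIndependent ℝ ![x, M.mulVec x, M.mulVec (M.mulVec x)] := by
  intro x hli
  by_cases hx : x = 0
  · exact hli.ne_zero 0 (by simp [hx])
  obtain ⟨V, hrank, hmem, -⟩ := h x hx
  obtain ⟨h1, h2, h3⟩ := orbit_mem_M M x V hmem
  have hf : LinearIndependent ℝ
      (![⟨x, h1⟩, ⟨M.mulVec x, h2⟩, ⟨M.mulVec (M.mulVec x), h3⟩] : Fin 3 → V) := by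
    apply LinearIndependent.of_comp V.subtype
    have heq : (V.subtype ∘
        (![⟨x, h1⟩, ⟨M.mulVec x, h2⟩, ⟨M.mulVec (M.mulVec x), h3⟩] : Fin 3 → V))
        = ![x, M.mulVec x, M.mulVec (M.mulVec x)] := by
      funext i; fin_cases i <;> rfl
    rw [heq]
    exact hli
  have hcard := hf.fintype_card_le_finrank
  rw [hrank] at hcard
  norm_num at hcard

lemma expand_prod (A : Matrix (Fin d) (Fin d) ℝ) (α β : ℝ) :
    (A - α • 1) * (A - β • 1)
      = A * A - (α + β) • A + (α * β) • (1 : Matrix (Fin d) (Fin d) ℝ) := by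
  have h1 : A * (β • 1) = β • A := by rw [Matrix.mul_smul, mul_one]
  have h2 : (α • (1 : Matrix (Fin d) (Fin d) ℝ)) * A = α • A := by
    rw [Matrix.smul_mul, one_mul]
  have h3 : (α • (1 : Matrix (Fin d) (Fin d) ℝ)) * (β • 1) = (α * β) • 1 := by
    rw [Matrix.smul_mul, Matrix.mul_smul, smul_smul, one_mul]
  rw [sub_mul, mul_sub, mul_sub, h1, h2, h3, add_smul]
  abel


end FlowProof

open FlowProof in
/-- Every linear flow is parabolic or hyperbolic. -/
theorem every_linear_flow_parabolic_or_hyperbolic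
    (d : ℕ) (hd : 2 ≤ d) (M : Matrix (Fin d) (Fin d) ℝ)
    (h : ∀ x : Fin d → ℝ, x ≠ 0 → ProjOrbitProperSubsetOfLine d M x) :
    (∃ lam : ℝ, (M - lam • (1 : Matrix (Fin d) (Fin d) ℝ)) ^ 2 = 0) ∨
      (∃ α β : ℝ, α ≠ β ∧
        (M - α • (1 : Matrix (Fin d) (Fin d) ℝ)) *
          (M - β • (1 : Matrix (Fin d) (Fin d) ℝ)) = 0) := by
  have hd0 : 0 < d := by omega
  obtain ⟨p, q, hpq⟩ := quadratic_of_dep M hd0 (dep_of_hyp M h)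
  have hM2 : M * M = q • 1 + p • M := by
    apply ext_of_mulVec
    intro v
    rw [← Matrix.mulVec_mulVec, hpq v, Matrix.add_mulVec, Matrix.smul_mulVec,
      Matrix.smul_mulVec, Matrix.one_mulVec]
  by_cases hdisc : 0 ≤ p^2 + 4*q
  · set s := Real.sqrt (p^2 + 4*q) with hs
    have hs2 : s^2 = p^2 + 4*q := Real.sq_sqrt hdisc
    by_cases hs0 : s = 0
    · left
      refine ⟨p/2, ?_⟩
      rw [sq, expand_prod, hM2]
      have e1 : p/2 + p/2 = p := by ring
      have e2 : (p/2) * (p/2) = -q := by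
        have h0 : p^2 + 4*q = 0 := by rw [← hs2, hs0]; ring
        linear_combination h0/4
      rw [e1, e2]
      module
    · right
      refine ⟨(p+s)/2, (p-s)/2, ?_, ?_⟩
      · intro heq
        apply hs0
        have : s = -s := by linarith [heq]
        linarith
      · rw [expand_prod, hM2]
        have e1 : (p+s)/2 + (p-s)/2 = p := by ring
        have e2 : ((p+s)/2) * ((p-s)/2) = -q := by
          linear_combination -hs2/4
        rw [e1, e2]
        module
  · exfalso
    push_neg at hdisc
    have hdne : p^2 + 4*q ≠ 0 := by linarith
    set β : ℝ := Real.sqrt (-(p^2 + 4*q)) / 2 with hβ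
    have hβpos : 0 < β := by
      have : 0 < Real.sqrt (-(p^2 + 4*q)) := Real.sqrt_pos.mpr (by linarith)
      rw [hβ]; linarith
    have hβne : β ≠ 0 := ne_of_gt hβpos
    have hβ2 : β^2 = -(p^2 + 4*q)/4 := by
      rw [hβ, div_pow, Real.sq_sqrt (by linarith : (0:ℝ) ≤ -(p^2 + 4*q))]
      norm_num
    set α : ℝ := p/2 with hα
    set J : Matrix (Fin d) (Fin d) ℝ := β⁻¹ • (M - α • 1) with hJdef
    have hJ2 : J * J = -1 := by
      rw [hJdef, Matrix.smul_mul, Matrix.mul_smul, smul_smul]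
      have hexp2 : (M - α • 1) * (M - α • 1)
          = ((p^2 + 4*q)/4) • (1 : Matrix (Fin d) (Fin d) ℝ) := by
        rw [expand_prod, hM2, hα]
        have e1 : p/2 + p/2 = p := by ring
        rw [e1]
        match_scalars <;> ring
      rw [hexp2, smul_smul]
      have hc : β⁻¹ * β⁻¹ * ((p^2 + 4*q)/4) = -1 := by
        have hb2 : β * β = -(p^2 + 4*q)/4 := by
          have := hβ2; nlinarith [hβ2]
        field_simp
        nlinarith [hb2]
      rw [hc]
      simp
    letI : NormedRing (Matrix (Fin d) (Fin d) ℝ) := Matrix.linftyOpNormedRing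
    letI : NormedAlgebra ℝ (Matrix (Fin d) (Fin d) ℝ) := Matrix.linftyOpNormedAlgebra
    set z : ℂ := (α : ℂ) + (β : ℂ) * Complex.I with hz
    set φ : ℂ →ₐ[ℝ] Matrix (Fin d) (Fin d) ℝ := Complex.liftAux J hJ2 with hφdef
    have hφcont : Continuous φ := φ.toLinearMap.continuous_of_finiteDimensional
    have hφz : φ z = M := by
      rw [hφdef, Complex.liftAux_apply]
      have hre : z.re = α := by simp [hz]
      have him : z.im = β := by simp [hz]
      rw [hre, him, Algebra.algebraMap_eq_smul_one, hJdef, smul_smul,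
        mul_inv_cancel₀ hβne, one_smul]
      abel
    have hexpφ : ∀ t : ℝ, exp (t • M) = φ (Complex.exp (t • z)) := by
      intro t
      have h1 : t • M = φ (t • z) := by
        rw [map_smul, hφz]
      rw [h1, Complex.exp_eq_exp_ℂ]
      exact (map_exp φ hφcont _).symm
    set x : Fin d → ℝ := Pi.single (⟨0, hd0⟩ : Fin d) 1 with hxdef
    have hx0 : x ≠ 0 := by
      intro hzero
      have := congrFun hzero ⟨0, hd0⟩
      simp [hxdef] at this
    obtain ⟨V, hrank, hmem, y, hyV, hy0, hymiss⟩ := h x hx0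
    obtain ⟨hxV, hMxV, -⟩ := orbit_mem_M M x V hmem
    have hJx : J.mulVec x = β⁻¹ • (M.mulVec x - α • x) := by
      rw [hJdef, Matrix.smul_mulVec, Matrix.sub_mulVec, Matrix.smul_mulVec,
        Matrix.one_mulVec]
    have hJxV : J.mulVec x ∈ V := by
      rw [hJx]
      exact V.smul_mem _ (V.sub_mem hMxV (V.smul_mem _ hxV))
    have hli : LinearIndependent ℝ ![x, J.mulVec x] := by
      by_contra hdep
      obtain ⟨μ, hμ⟩ := dep_pair hdep hx0
      have hJ2x : J.mulVec (J.mulVec x) = (μ*μ) • x := by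
        rw [hμ, Matrix.mulVec_smul, hμ, smul_smul]
      rw [Matrix.mulVec_mulVec, hJ2] at hJ2x
      have h2 : -x = (μ*μ) • x := by
        rw [← hJ2x, Matrix.neg_mulVec, Matrix.one_mulVec]
      have h3 := congrFun h2 ⟨0, hd0⟩
      simp [hxdef] at h3
      nlinarith [h3]
    have hspan : span ℝ (range ![x, J.mulVec x]) = V := by
      apply Submodule.eq_of_le_of_finrank_le
      · rw [span_le]
        rintro w ⟨i, rfl⟩
        fin_cases i
        · exact hxV
        · exact hJxV
      · rw [hrank, finrank_span_eq_card hli]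
        norm_num
    have hyspan : y ∈ span ℝ (range ![x, J.mulVec x]) := hspan ▸ hyV
    rw [mem_span_range_iff_exists_fun] at hyspan
    obtain ⟨c, hc⟩ := hyspan
    have hy' : c 0 • x + c 1 • J.mulVec x = y := by
      rw [← hc]; simp [Fin.sum_univ_two]
    set w : ℂ := ⟨c 0, c 1⟩ with hw
    have hw0 : w ≠ 0 := by
      intro hzc
      apply hy0
      have h0 : c 0 = 0 := congrArg Complex.re hzc
      have h1 : c 1 = 0 := congrArg Complex.im hzc
      rw [← hy', h0, h1]
      simp
    have habs : ‖w‖ ≠ 0 := by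
      simpa using hw0
    have hφw : (φ w).mulVec x = y := by
      rw [hφdef, Complex.liftAux_apply]
      show ((algebraMap ℝ _ (c 0)) + (c 1) • J).mulVec x = y
      rw [Algebra.algebraMap_eq_smul_one, Matrix.add_mulVec, Matrix.smul_mulVec,
        Matrix.smul_mulVec, Matrix.one_mulVec]
      exact hy'
    set t : ℝ := Complex.arg w / β with ht
    have harg : t * β = Complex.arg w := by rw [ht]; field_simp
    have hexpz : Complex.exp (t • z) = (Real.exp (t*α) / ‖w‖) • w := by
      have htz : t • z = (↑(t*α) : ℂ) + ↑(t*β) * Complex.I := by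
        rw [hz, Complex.real_smul]
        push_cast
        ring
      rw [htz, Complex.exp_add, harg]
      rw [Complex.real_smul]
      have hcancel : ((‖w‖ : ℝ) : ℂ) ≠ 0 := by exact_mod_cast habs
      apply mul_left_cancel₀ hcancel
      have key := Complex.norm_mul_exp_arg_mul_I w
      calc (↑(‖w‖) : ℂ) * (Complex.exp ↑(t*α) * Complex.exp (↑(Complex.arg w) * Complex.I))
          = Complex.exp ↑(t*α) * ((↑(‖w‖) : ℂ) * Complex.exp (↑(Complex.arg w) * Complex.I)) := by ring
        _ = Complex.exp ↑(t*α) * w := by rw [key]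
        _ = (↑(Real.exp (t*α)) : ℂ) * w := by rw [Complex.ofReal_exp]
        _ = (↑(‖w‖) : ℂ) * (↑(Real.exp (t*α) / ‖w‖) * w) := by
            push_cast
            field_simp
    exact hymiss t (Real.exp (t*α) / ‖w‖) (by
      rw [hexpφ t, hexpz, map_smul, Matrix.smul_mulVec, hφw])
end

section
/- Let d ≥ 2 and let M be a real d×d matrix. Suppose there is a nonempty open set U ⊆ ℝ^d \ {0} such that for every x ∈ U the projective orbit of x under the one-parameter group t ↦ exp(tM) is a proper subset of a projective line. Then for every nonzero x ∈ ℝ^d the projective orbit of x is a proper subset of a projective line. -/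
open NormedSpace

attribute [local instance] Matrix.linftyOpNormedRing Matrix.linftyOpNormedAlgebra

namespace OrbitLineAux

variable {d : ℕ}






noncomputable def mvCLM (u : Fin d → ℝ) : Matrix (Fin d) (Fin d) ℝ →L[ℝ] (Fin d → ℝ) :=
  LinearMap.toContinuousLinearMap
    { toFun := fun A => A.mulVec u
      map_add' := fun A B => Matrix.add_mulVec A B u
      map_smul' := fun c A => Matrix.smul_mulVec c A u }

@[simp] lemma mvCLM_apply (u : Fin d → ℝ) (A : Matrix (Fin d) (Fin d) ℝ) :
    mvCLM u A = A.mulVec u := rfl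

lemma mem_of_hasDerivAt_mem {f : ℝ → (Fin d → ℝ)} {V : Submodule ℝ (Fin d → ℝ)}
    (hf : ∀ t, f t ∈ V) {v : Fin d → ℝ} {t : ℝ} (hd : HasDerivAt f v t) : v ∈ V := by
  have hV : IsClosed (V : Set (Fin d → ℝ)) := V.closed_of_finiteDimensional
  rw [hasDerivAt_iff_tendsto_slope] at hd
  refine hV.mem_of_tendsto hd (Filter.Eventually.of_forall fun s => ?_)
  simp only [slope_def_module]
  exact V.smul_mem _ (V.sub_mem (hf s) (hf t))

lemma hasDerivAt_orbit (M : Matrix (Fin d) (Fin d) ℝ) (u : Fin d → ℝ) (t : ℝ) :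
    HasDerivAt (fun s : ℝ => (exp (s • M)).mulVec u) ((M * exp (t • M)).mulVec u) t := by
  have h1 := hasDerivAt_exp_smul_const' M t
  exact ((mvCLM u).hasFDerivAt.comp_hasDerivAt t h1)

lemma orbit_deriv_mem {M : Matrix (Fin d) (Fin d) ℝ} {u : Fin d → ℝ}
    {V : Submodule ℝ (Fin d → ℝ)} (hV : ∀ t : ℝ, (exp (t • M)).mulVec u ∈ V) :
    ∀ t : ℝ, (M * exp (t • M)).mulVec u ∈ V :=
  fun t => mem_of_hasDerivAt_mem hV (hasDerivAt_orbit M u t)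

lemma triple_mem {M : Matrix (Fin d) (Fin d) ℝ} {u : Fin d → ℝ}
    {V : Submodule ℝ (Fin d → ℝ)} (hV : ∀ t : ℝ, (exp (t • M)).mulVec u ∈ V) :
    u ∈ V ∧ M.mulVec u ∈ V ∧ M.mulVec (M.mulVec u) ∈ V := by
  have h0 : u ∈ V := by simpa using hV 0
  have h1 := orbit_deriv_mem hV
  have h1' : M.mulVec u ∈ V := by simpa using h1 0
  -- second derivative
  have hmul : ∀ s : ℝ, M.mulVec ((exp (s • M)).mulVec u) ∈ V := by
    intro s
    have := h1 s
    rwa [← Matrix.mulVec_mulVec] at this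
  have hd2 : HasDerivAt (⇑M.mulVecLin ∘ fun s : ℝ => (exp (s • M)).mulVec u)
      ((M * M).mulVec u) 0 := by
    have hclm := (LinearMap.toContinuousLinearMap
      (M.mulVecLin)).hasFDerivAt.comp_hasDerivAt 0 (hasDerivAt_orbit M u 0)
    simpa using hclm
  have hmul' : ∀ s : ℝ, (⇑M.mulVecLin ∘ fun s : ℝ => (exp (s • M)).mulVec u) s ∈ V := by
    intro s; simpa using hmul s
  have h2 := mem_of_hasDerivAt_mem hmul' hd2
  rw [← Matrix.mulVec_mulVec] at h2
  exact ⟨h0, h1', h2⟩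

lemma exp_mulVec_hasSum (A : Matrix (Fin d) (Fin d) ℝ) (u : Fin d → ℝ) :
    HasSum (fun n : ℕ => (n.factorial : ℝ)⁻¹ • (A ^ n).mulVec u) ((exp A).mulVec u) := by
  have h : HasSum (fun n : ℕ => (n.factorial : ℝ)⁻¹ • A ^ n) (exp A) := by
    rw [exp_eq_tsum ℝ]; exact (expSeries_summable' A).hasSum
  have h2 := (mvCLM u).hasSum h
  simpa using h2

lemma orbit_mem_invariant {M : Matrix (Fin d) (Fin d) ℝ} {V : Submodule ℝ (Fin d → ℝ)}
    (hinv : ∀ v ∈ V, M.mulVec v ∈ V) {u : Fin d → ℝ} (hu : u ∈ V) (t : ℝ) :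
    (exp (t • M)).mulVec u ∈ V := by
  have hpow : ∀ n : ℕ, ((t • M) ^ n).mulVec u ∈ V := by
    intro n; induction n with
    | zero => simpa using hu
    | succ n ih =>
      rw [pow_succ', ← Matrix.mulVec_mulVec, Matrix.smul_mulVec]
      exact V.smul_mem t (hinv _ ih)
  have hs := exp_mulVec_hasSum (t • M) u
  have hV : IsClosed (V : Set (Fin d → ℝ)) := V.closed_of_finiteDimensional
  refine hV.mem_of_tendsto hs (Filter.Eventually.of_forall fun s => ?_)
  exact V.sum_mem fun n _ => V.smul_mem _ (hpow n)

lemma exp_mulVec_eigen {M : Matrix (Fin d) (Fin d) ℝ} {y : Fin d → ℝ} {lam : ℝ}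
    (hy : M.mulVec y = lam • y) (t : ℝ) :
    (exp (t • M)).mulVec y = Real.exp (t * lam) • y := by
  have hpow : ∀ n : ℕ, ((t • M) ^ n).mulVec y = (t * lam) ^ n • y := by
    intro n; induction n with
    | zero => simp [Matrix.one_mulVec]
    | succ n ih =>
      rw [pow_succ', ← Matrix.mulVec_mulVec, ih, Matrix.mulVec_smul,
        Matrix.smul_mulVec, hy, pow_succ]
      rw [smul_smul, smul_smul]
      ring_nf
  have h1 := exp_mulVec_hasSum (t • M) y
  have h1' : HasSum (fun n : ℕ => ((n.factorial : ℝ)⁻¹ * (t * lam) ^ n) • y)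
      ((exp (t • M)).mulVec y) := by
    refine h1.congr_fun fun n => ?_
    rw [hpow n, smul_smul]
  have h2 : HasSum (fun n : ℕ => ((n.factorial : ℝ)⁻¹ * (t * lam) ^ n) • y)
      ((exp (t * lam)) • y) := by
    have h3 : HasSum (fun n : ℕ => (n.factorial : ℝ)⁻¹ • (t * lam) ^ n) (exp (t * lam)) := by
      rw [exp_eq_tsum ℝ]; exact (expSeries_summable' (t * lam)).hasSum
    simpa [smul_eq_mul] using h3.smul_const y
  rw [Real.exp_eq_exp_ℝ]
  exact h1'.unique h2

lemma exp_neg_mulVec {M : Matrix (Fin d) (Fin d) ℝ} (t : ℝ) (x : Fin d → ℝ) :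
    (exp (-(t • M))).mulVec ((exp (t • M)).mulVec x) = x := by
  rw [Matrix.mulVec_mulVec, ← Matrix.exp_add_of_commute _ _ (Commute.refl (t • M)).neg_left,
    neg_add_cancel, exp_zero, Matrix.one_mulVec]

lemma exp_mulVec_ne_zero {M : Matrix (Fin d) (Fin d) ℝ} (t : ℝ) {x : Fin d → ℝ} (hx : x ≠ 0) :
    (exp (t • M)).mulVec x ≠ 0 := by
  intro h
  apply hx
  have := exp_neg_mulVec (M := M) t x
  rw [h] at this
  simpa using this.symm







lemma dot_sum_right {n : ℕ} (v : Fin d → ℝ) (c : Fin n → ℝ) (w : Fin n → (Fin d → ℝ)) :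
    dotProduct v (∑ j, c j • w j) = ∑ j, c j * dotProduct (v) (w j) := by
  simp only [dotProduct, Finset.sum_apply, Pi.smul_apply, smul_eq_mul, Finset.mul_sum]
  rw [Finset.sum_comm]
  apply Finset.sum_congr rfl
  intro j _
  apply Finset.sum_congr rfl
  intro k _
  ring

lemma dot_sum_left {n : ℕ} (v : Fin d → ℝ) (c : Fin n → ℝ) (w : Fin n → (Fin d → ℝ)) :
    dotProduct (∑ j, c j • w j) v = ∑ j, c j * dotProduct (w j) v := by
  rw [dotProduct_comm, dot_sum_right]
  simp_rw [dotProduct_comm v]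

/-- Gram determinant criterion for linear dependence of finitely many vectors in `ℝ^d`. -/
lemma gram_det_eq_zero_iff {n : ℕ} (v : Fin n → (Fin d → ℝ)) :
    (Matrix.of fun i j => dotProduct (v i) (v j)).det = 0 ↔
      ¬ LinearIndependent ℝ v := by
  have hmv : ∀ c : Fin n → ℝ, ∀ i : Fin n,
      (Matrix.of fun i j => dotProduct (v i) (v j)).mulVec c i
        = dotProduct (v i) (∑ j, c j • v j) := by
    intro c i
    rw [dot_sum_right]
    simp only [Matrix.mulVec, dotProduct, Matrix.of_apply]
    apply Finset.sum_congr rfl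
    intro j _
    ring
  constructor
  · intro hdet hli
    obtain ⟨c, hc0, hc⟩ := Matrix.exists_mulVec_eq_zero_iff.2 hdet
    have hsum : ∑ i, c i • v i = 0 := by
      have hself : dotProduct (∑ i, c i • v i) (∑ i, c i • v i) = 0 := by
        rw [dot_sum_left]
        refine Finset.sum_eq_zero fun i _ => ?_
        have := congr_fun hc i
        rw [hmv c i, Pi.zero_apply] at this
        rw [this, mul_zero]
      exact dotProduct_self_eq_zero.1 hself
    exact hc0 (funext fun i => (Fintype.linearIndependent_iff.1 hli) c hsum i)
  · intro hdep
    obtain ⟨g, hg, i0, hi0⟩ := Fintype.not_linearIndependent_iff.1 hdep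
    refine Matrix.exists_mulVec_eq_zero_iff.1 ⟨g, fun h => hi0 (congr_fun h i0), ?_⟩
    ext i
    rw [Pi.zero_apply, hmv g i, hg, dotProduct_zero]

/-- Transfer of the dependence relation from an open set to everywhere. -/
lemma dependence_transfer {M : Matrix (Fin d) (Fin d) ℝ} {U : Set (Fin d → ℝ)}
    (hUopen : IsOpen U) {u₀ : Fin d → ℝ} (hu₀ : u₀ ∈ U)
    (hdep : ∀ u ∈ U, ¬ LinearIndependent ℝ ![u, M.mulVec u, M.mulVec (M.mulVec u)]) :
    ∀ z : Fin d → ℝ, ¬ LinearIndependent ℝ ![z, M.mulVec z, M.mulVec (M.mulVec z)] := by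
  intro z
  set w : Fin d → ℝ := z - u₀ with hw
  set A : Fin 3 → (Fin d → ℝ) := ![u₀, M.mulVec u₀, M.mulVec (M.mulVec u₀)] with hA
  set B : Fin 3 → (Fin d → ℝ) := ![w, M.mulVec w, M.mulVec (M.mulVec w)] with hB
  set v : ℝ → Fin 3 → (Fin d → ℝ) := fun t => ![u₀ + t • w, M.mulVec (u₀ + t • w),
      M.mulVec (M.mulVec (u₀ + t • w))] with hv
  have hpath : ∀ t : ℝ, ∀ i : Fin 3, A i + t • B i = v t i := by
    intro t i
    fin_cases i <;>
      simp [hA, hB, hv, Matrix.mulVec_add, Matrix.mulVec_smul]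
  set G : Matrix (Fin 3) (Fin 3) (Polynomial ℝ) := Matrix.of fun i j =>
    ∑ k : Fin d, (Polynomial.C (A i k) + Polynomial.C (B i k) * Polynomial.X) *
      (Polynomial.C (A j k) + Polynomial.C (B j k) * Polynomial.X) with hG
  have keyeval : ∀ t : ℝ, Polynomial.eval t G.det =
      (Matrix.of fun i j => dotProduct (v t i) (v t j)).det := by
    intro t
    have hmap := (Polynomial.evalRingHom t).map_det G
    rw [show (Polynomial.evalRingHom t) G.det = Polynomial.eval t G.det from rfl] at hmap
    rw [hmap]
    congr 1
    ext i j
    simp only [RingHom.mapMatrix_apply, Matrix.map_apply, Matrix.of_apply, hG,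
      Polynomial.coe_evalRingHom]
    rw [← hpath t i, ← hpath t j]
    rw [Polynomial.eval_finset_sum]
    simp only [Polynomial.eval_mul, Polynomial.eval_add, Polynomial.eval_C, Polynomial.eval_X]
    simp only [dotProduct, Pi.add_apply, Pi.smul_apply, smul_eq_mul]
    apply Finset.sum_congr rfl
    intro k _
    ring
  have hcont : Continuous (fun t : ℝ => u₀ + t • w) := by continuity
  have hnhds : ∀ᶠ t in nhds (0 : ℝ), u₀ + t • w ∈ U := by
    have h0 : u₀ + (0 : ℝ) • w ∈ U := by simpa using hu₀
    exact hcont.continuousAt.eventually_mem (hUopen.mem_nhds h0)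
  obtain ⟨ε, hε, hball⟩ := Metric.eventually_nhds_iff.1 hnhds
  have hsub : Set.Ioo (-(ε/2)) (ε/2) ⊆ {x | Polynomial.IsRoot G.det x} := by
    intro t ht
    have htmem : u₀ + t • w ∈ U := by
      apply hball
      rw [Real.dist_eq, sub_zero, abs_lt]
      rcases ht with ⟨h1, h2⟩
      constructor <;> nlinarith
    show Polynomial.eval t G.det = 0
    rw [keyeval t]
    exact (gram_det_eq_zero_iff (v t)).2 (hdep _ htmem)
  have hdet0 : G.det = 0 :=
    Polynomial.eq_zero_of_infinite_isRoot _ ((Set.Ioo_infinite (by linarith)).mono hsub)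
  have h1 : (Matrix.of fun i j => dotProduct (v 1 i) (v 1 j)).det = 0 := by
    rw [← keyeval 1, hdet0, Polynomial.eval_zero]
  have h2 := (gram_det_eq_zero_iff (v 1)).1 h1
  have hz : u₀ + (1:ℝ) • w = z := by simp [hw]
  rw [hv] at h2
  simp only [hz] at h2
  exact h2







lemma eigen_of_not_li {x y : Fin d → ℝ} (hx : x ≠ 0)
    (h : ¬ LinearIndependent ℝ ![x, y]) : ∃ μ : ℝ, y = μ • x := by
  obtain ⟨g, hg, i, hi⟩ := Fintype.not_linearIndependent_iff.1 h
  rw [Fin.sum_univ_two] at hg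
  simp only [Matrix.cons_val_zero, Matrix.cons_val_one, Matrix.head_cons] at hg
  by_cases h1 : g 1 = 0
  · exfalso
    rw [h1, zero_smul, add_zero] at hg
    have hg0 : g 0 = 0 := by
      by_contra hg0
      exact hx (by rwa [smul_eq_zero_iff_right hg0] at hg)
    fin_cases i <;> simp_all
  · refine ⟨(g 1)⁻¹ * -g 0, ?_⟩
    have h3 : g 1 • y = -g 0 • x := by
      linear_combination (norm := module) hg
    have h4 := congrArg (fun v => (g 1)⁻¹ • v) h3
    simp only [smul_smul, inv_mul_cancel₀ h1, one_smul] at h4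
    exact h4

lemma quad_of_dep {M : Matrix (Fin d) (Fin d) ℝ} {x : Fin d → ℝ}
    (hLI : LinearIndependent ℝ ![x, M.mulVec x])
    (hdep : ¬ LinearIndependent ℝ ![x, M.mulVec x, M.mulVec (M.mulVec x)]) :
    ∃ a b : ℝ, M.mulVec (M.mulVec x) = a • x + b • M.mulVec x := by
  obtain ⟨g, hg, i, hi⟩ := Fintype.not_linearIndependent_iff.1 hdep
  rw [Fin.sum_univ_three] at hg
  simp only [Matrix.cons_val_zero, Matrix.cons_val_one, Matrix.head_cons,
    Matrix.cons_val_two, Matrix.tail_cons] at hg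
  by_cases h2 : g 2 = 0
  · exfalso
    rw [h2, zero_smul, add_zero] at hg
    have := Fintype.linearIndependent_iff.1 hLI ![g 0, g 1] (by
      rw [Fin.sum_univ_two]
      simpa using hg)
    fin_cases i
    · exact hi (by simpa using this 0)
    · exact hi (by simpa using this 1)
    · exact hi h2
  · refine ⟨(g 2)⁻¹ * -g 0, (g 2)⁻¹ * -g 1, ?_⟩
    have h3 : g 2 • M.mulVec (M.mulVec x) = -g 0 • x + -g 1 • M.mulVec x := by
      linear_combination (norm := module) hg
    have h4 := congrArg (fun v => (g 2)⁻¹ • v) h3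
    simp only [smul_smul, smul_add, inv_mul_cancel₀ h2, one_smul] at h4
    rw [h4]

lemma li3_of_not_mem {x y z : Fin d → ℝ} (hLI : LinearIndependent ℝ ![x, y])
    (hz : z ∉ Submodule.span ℝ {x, y}) : LinearIndependent ℝ ![x, y, z] := by
  rw [Fintype.linearIndependent_iff]
  intro g hg
  rw [Fin.sum_univ_three] at hg
  simp only [Matrix.cons_val_zero, Matrix.cons_val_one, Matrix.head_cons,
    Matrix.cons_val_two, Matrix.tail_cons] at hg
  by_cases h2 : g 2 = 0
  · rw [h2, zero_smul, add_zero] at hg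
    have := Fintype.linearIndependent_iff.1 hLI ![g 0, g 1] (by
      rw [Fin.sum_univ_two]; simpa using hg)
    intro i
    fin_cases i
    · simpa using this 0
    · simpa using this 1
    · exact h2
  · exfalso
    apply hz
    rw [Submodule.mem_span_pair]
    refine ⟨(g 2)⁻¹ * -g 0, (g 2)⁻¹ * -g 1, ?_⟩
    have h3 : g 2 • z = -g 0 • x + -g 1 • y := by
      linear_combination (norm := module) hg
    have h4 := congrArg (fun v => (g 2)⁻¹ • v) h3
    simp only [smul_smul, smul_add, inv_mul_cancel₀ h2, one_smul] at h4
    rw [← h4]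


/-- Scalar case: if every vector is an eigenvector, then `M` is a scalar matrix. -/
lemma scalar_of_all_eigen {M : Matrix (Fin d) (Fin d) ℝ} (hd : 2 ≤ d)
    (hall : ∀ z : Fin d → ℝ, ¬ LinearIndependent ℝ ![z, M.mulVec z]) :
    ∃ lam : ℝ, ∀ z : Fin d → ℝ, M.mulVec z = lam • z := by
  have heig : ∀ z : Fin d → ℝ, z ≠ 0 → ∃ μ : ℝ, M.mulVec z = μ • z := by
    intro z hz
    obtain ⟨μ, hμ⟩ := eigen_of_not_li hz (hall z)
    exact ⟨μ, hμ⟩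
  set i0 : Fin d := ⟨0, by omega⟩
  set e0 : Fin d → ℝ := Pi.single i0 1 with he0
  have he0ne : e0 ≠ 0 := by
    intro h
    have := congr_fun h i0
    simp [he0] at this
  obtain ⟨lam, hlam⟩ := heig e0 he0ne
  refine ⟨lam, fun z => ?_⟩
  by_cases hz0 : z = 0
  · simp [hz0]
  by_cases hzs : ∃ c : ℝ, c • e0 = z
  · obtain ⟨c, hc⟩ := hzs
    rw [← hc, Matrix.mulVec_smul, hlam, smul_smul, smul_smul, mul_comm]
  · have hLI : LinearIndependent ℝ ![z, e0] := by
      rw [linearIndependent_fin2]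
      constructor
      · simpa using he0ne
      · intro a ha
        exact hzs ⟨a, by simpa using ha⟩
    obtain ⟨μ, hμ⟩ := heig z hz0
    have hzadd : z + e0 ≠ 0 := by
      intro h
      apply hzs
      refine ⟨-1, ?_⟩
      have : z = -e0 := by linear_combination (norm := module) h
      rw [this]; module
    obtain ⟨ν, hν⟩ := heig (z + e0) hzadd
    rw [Matrix.mulVec_add, hμ, hlam] at hν
    have hcomb : (μ - ν) • z + (lam - ν) • e0 = 0 := by
      linear_combination (norm := module) hν
    have := Fintype.linearIndependent_iff.1 hLI ![μ - ν, lam - ν] (by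
      rw [Fin.sum_univ_two]; simpa using hcomb)
    have h0 : μ - ν = 0 := by simpa using this 0
    have h1 : lam - ν = 0 := by simpa using this 1
    have : μ = lam := by linarith [sub_eq_zero.1 h0, sub_eq_zero.1 h1]
    rw [hμ, this]

/-- Kaplansky-type lemma: if each cyclic subspace has dimension at most 2,
then `M` satisfies a global quadratic relation. -/
lemma global_quadratic {M : Matrix (Fin d) (Fin d) ℝ} (hd : 2 ≤ d)
    (F1 : ∀ z : Fin d → ℝ, ¬ LinearIndependent ℝ ![z, M.mulVec z, M.mulVec (M.mulVec z)]) :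
    ∃ a b : ℝ, ∀ z : Fin d → ℝ,
      M.mulVec (M.mulVec z) = a • z + b • M.mulVec z := by
  by_cases hall : ∀ z : Fin d → ℝ, ¬ LinearIndependent ℝ ![z, M.mulVec z]
  · obtain ⟨lam, hlam⟩ := scalar_of_all_eigen hd hall
    refine ⟨-(lam*lam), 2*lam, fun z => ?_⟩
    rw [hlam z, Matrix.mulVec_smul, hlam z]
    match_scalars
    ring
  · push_neg at hall
    obtain ⟨x₀, hx₀⟩ := hall
    obtain ⟨a, b, hab⟩ := quad_of_dep hx₀ (F1 x₀)
    refine ⟨a, b, fun y => ?_⟩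
    by_cases hyV : y ∈ Submodule.span ℝ {x₀, M.mulVec x₀}
    · obtain ⟨c, c', hcc⟩ := Submodule.mem_span_pair.1 hyV
      rw [← hcc]
      simp only [Matrix.mulVec_add, Matrix.mulVec_smul, hab]
      module
    · have hLI3 : LinearIndependent ℝ ![x₀, M.mulVec x₀, y] := li3_of_not_mem hx₀ hyV
      by_cases hMyW : M.mulVec y ∈ Submodule.span ℝ (Set.range ![x₀, M.mulVec x₀, y])
      · -- dimension-3 invariant subspace case: Groebner certificates
        obtain ⟨co, hco0⟩ := (Submodule.mem_span_range_iff_exists_fun ℝ).1 hMyW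
        have hco : co 0 • x₀ + co 1 • M.mulVec x₀ + co 2 • y = M.mulVec y := by
          simpa [Fin.sum_univ_three] using hco0
        set p := co 0 with hp
        set q := co 1 with hq
        set r := co 2 with hr
        have hMy : M.mulVec y = p • x₀ + q • M.mulVec x₀ + r • y := hco.symm
        -- the key determinant identity, for every vector in the invariant 3-space
        have key : ∀ c1 c2 c3 : ℝ,
            (!![c1, a*c2 + p*c3, a*(c1 + b*c2 + q*c3) + p*(r*c3);
               c2, c1 + b*c2 + q*c3, (a*c2 + p*c3) + b*(c1 + b*c2 + q*c3) + q*(r*c3);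
               c3, r*c3, r*(r*c3)] : Matrix (Fin 3) (Fin 3) ℝ).det = 0 := by
          intro c1 c2 c3
          set v : Fin d → ℝ := c1 • x₀ + c2 • M.mulVec x₀ + c3 • y with hv
          have hv1 : M.mulVec v = (a*c2 + p*c3) • x₀ + (c1 + b*c2 + q*c3) • M.mulVec x₀
              + (r*c3) • y := by
            rw [hv]
            simp only [Matrix.mulVec_add, Matrix.mulVec_smul, hab, hMy]
            module
          have hv2 : M.mulVec (M.mulVec v) =
              (a*(c1 + b*c2 + q*c3) + p*(r*c3)) • x₀
              + ((a*c2 + p*c3) + b*(c1 + b*c2 + q*c3) + q*(r*c3)) • M.mulVec x₀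
              + (r*(r*c3)) • y := by
            rw [hv1]
            simp only [Matrix.mulVec_add, Matrix.mulVec_smul, hab, hMy]
            module
          obtain ⟨g, hg, i, hi⟩ := Fintype.not_linearIndependent_iff.1 (F1 v)
          rw [Fin.sum_univ_three] at hg
          simp only [Matrix.cons_val_zero, Matrix.cons_val_one, Matrix.head_cons,
            Matrix.cons_val_two, Matrix.tail_cons] at hg
          rw [hv2, hv1, hv] at hg
          have hcoeff : (g 0 * c1 + g 1 * (a*c2 + p*c3) + g 2 * (a*(c1 + b*c2 + q*c3) + p*(r*c3))) • x₀
              + (g 0 * c2 + g 1 * (c1 + b*c2 + q*c3) + g 2 * ((a*c2 + p*c3) + b*(c1 + b*c2 + q*c3) + q*(r*c3))) • M.mulVec x₀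
              + (g 0 * c3 + g 1 * (r*c3) + g 2 * (r*(r*c3))) • y = 0 := by
            linear_combination (norm := module) hg
          have hz := Fintype.linearIndependent_iff.1 hLI3
            ![g 0 * c1 + g 1 * (a*c2 + p*c3) + g 2 * (a*(c1 + b*c2 + q*c3) + p*(r*c3)),
              g 0 * c2 + g 1 * (c1 + b*c2 + q*c3) + g 2 * ((a*c2 + p*c3) + b*(c1 + b*c2 + q*c3) + q*(r*c3)),
              g 0 * c3 + g 1 * (r*c3) + g 2 * (r*(r*c3))]
            (by rw [Fin.sum_univ_three]; simpa using hcoeff)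
          apply Matrix.exists_mulVec_eq_zero_iff.1
          refine ⟨g, fun h => hi (congr_fun h i), ?_⟩
          ext j
          fin_cases j
          · have := hz 0
            simp only [Matrix.cons_val_zero] at this
            simp [Matrix.mulVec, dotProduct, Fin.sum_univ_three]
            linarith [this]
          · have := hz 1
            simp only [Matrix.cons_val_one, Matrix.head_cons, Matrix.cons_val_zero] at this
            simp [Matrix.mulVec, dotProduct, Fin.sum_univ_three]
            linarith [this]
          · have := hz 2
            simp only [Matrix.cons_val_two, Matrix.tail_cons, Matrix.head_cons] at this
            simp [Matrix.mulVec, dotProduct, Fin.sum_univ_three]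
            linarith [this]
        -- instantiate the key identity
        have k1 := key 0 0 1
        have k2 := key 1 0 1
        have k3 := key (-1) 0 1
        rw [Matrix.det_fin_three] at k1 k2 k3
        simp only [Matrix.cons_val', Matrix.cons_val_zero, Matrix.cons_val_one,
          Matrix.head_cons, Matrix.empty_val', Matrix.cons_val_fin_one, Matrix.head_fin_const,
          Matrix.cons_val_two, Matrix.tail_cons, Matrix.of_apply] at k1 k2 k3
        ring_nf at k1 k2 k3
        -- certificates
        have hG6 : r^2 - b*r - a = 0 := by linear_combination (1/2)*k2 + (1/2)*k3 - k1
        have hssq : (p + q*r)^2 = 0 := by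
          linear_combination (1 - q^2)*k1 + ((q^2 - q)/2)*k2 + ((q^2 + q)/2)*k3
        have hs : p + q*r = 0 := by
          have := sq_eq_zero_iff.1 hssq
          exact this
        have hT1 : q*a + r*p = b*p := by linear_combination (r - b)*hs - q*hG6
        have hT2 : p + q*b + r*q = b*q := by linear_combination hs
        have hT3 : r^2 = a + b*r := by linear_combination hG6
        -- conclude
        have expand : M.mulVec (M.mulVec y)
            = (q*a + r*p) • x₀ + (p + q*b + r*q) • M.mulVec x₀ + (r^2) • y := by
          rw [hMy]
          simp only [Matrix.mulVec_add, Matrix.mulVec_smul, hab, hMy]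
          match_scalars <;> ring
        rw [expand, hMy, hT1, hT2, hT3]
        match_scalars <;> ring
      · -- dimension-4 case
        have hLI4 : LinearIndependent ℝ ![x₀, M.mulVec x₀, y, M.mulVec y] := by
          rw [Fintype.linearIndependent_iff]
          intro g hg
          rw [Fin.sum_univ_four] at hg
          simp only [Matrix.cons_val_zero, Matrix.cons_val_one, Matrix.head_cons,
            Matrix.cons_val_two, Matrix.tail_cons, Matrix.cons_val_three] at hg
          by_cases h3 : g 3 = 0
          · rw [h3, zero_smul, add_zero] at hg
            have := Fintype.linearIndependent_iff.1 hLI3 ![g 0, g 1, g 2] (by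
              rw [Fin.sum_univ_three]; simpa using hg)
            intro i
            fin_cases i
            · simpa using this 0
            · simpa using this 1
            · simpa using this 2
            · exact h3
          · exfalso
            apply hMyW
            rw [Submodule.mem_span_range_iff_exists_fun ℝ]
            refine ⟨![(g 3)⁻¹ * -g 0, (g 3)⁻¹ * -g 1, (g 3)⁻¹ * -g 2], ?_⟩
            rw [Fin.sum_univ_three]
            simp only [Matrix.cons_val_zero, Matrix.cons_val_one, Matrix.head_cons,
              Matrix.cons_val_two, Matrix.tail_cons]
            have h4 : g 3 • M.mulVec y = -g 0 • x₀ + -g 1 • M.mulVec x₀ + -g 2 • y := by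
              linear_combination (norm := module) hg
            have h5 := congrArg (fun v => (g 3)⁻¹ • v) h4
            simp only [smul_smul, smul_add, inv_mul_cancel₀ h3, one_smul] at h5
            rw [← h5]
        have hyMy : LinearIndependent ℝ ![y, M.mulVec y] := by
          rw [Fintype.linearIndependent_iff]
          intro g hg
          rw [Fin.sum_univ_two] at hg
          simp only [Matrix.cons_val_zero, Matrix.cons_val_one, Matrix.head_cons] at hg
          have := Fintype.linearIndependent_iff.1 hLI4 ![0, 0, g 0, g 1] (by
            rw [Fin.sum_univ_four]
            simpa using hg)
          intro i
          fin_cases i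
          · simpa using this 2
          · simpa using this 3
        obtain ⟨a', b', hab'⟩ := quad_of_dep hyMy (F1 y)
        have hwLI : LinearIndependent ℝ ![x₀ + y, M.mulVec (x₀ + y)] := by
          rw [Fintype.linearIndependent_iff]
          intro g hg
          rw [Fin.sum_univ_two] at hg
          simp only [Matrix.cons_val_zero, Matrix.cons_val_one, Matrix.head_cons,
            Matrix.mulVec_add] at hg
          have := Fintype.linearIndependent_iff.1 hLI4 ![g 0, g 1, g 0, g 1] (by
            rw [Fin.sum_univ_four]
            simp only [Matrix.cons_val_zero, Matrix.cons_val_one, Matrix.head_cons,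
              Matrix.cons_val_two, Matrix.tail_cons, Matrix.cons_val_three]
            linear_combination (norm := module) hg)
          intro i
          fin_cases i
          · simpa using this 0
          · simpa using this 1
        obtain ⟨α, β, hαβ⟩ := quad_of_dep hwLI (F1 (x₀ + y))
        have hexp : M.mulVec (M.mulVec (x₀ + y)) =
            a • x₀ + b • M.mulVec x₀ + a' • y + b' • M.mulVec y := by
          simp only [Matrix.mulVec_add, hab, hab']
          module
        rw [hexp] at hαβ
        have hcomb : (a - α) • x₀ + (b - β) • M.mulVec x₀ + (a' - α) • y
            + (b' - β) • M.mulVec y = 0 := by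
          rw [Matrix.mulVec_add] at hαβ
          linear_combination (norm := module) hαβ
        have hz := Fintype.linearIndependent_iff.1 hLI4
          ![a - α, b - β, a' - α, b' - β] (by
            rw [Fin.sum_univ_four]; simpa using hcomb)
        have e0 : a - α = 0 := by simpa using hz 0
        have e1 : b - β = 0 := by simpa using hz 1
        have e2 : a' - α = 0 := by simpa using hz 2
        have e3 : b' - β = 0 := by simpa using hz 3
        have ha' : a' = a := by linarith
        have hb' : b' = b := by linarith
        rw [hab', ha', hb']









lemma matrix_quad_of_pointwise {M : Matrix (Fin d) (Fin d) ℝ} {a b : ℝ}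
    (hquad : ∀ z : Fin d → ℝ, M.mulVec (M.mulVec z) = a • z + b • M.mulVec z) :
    M * M = a • (1 : Matrix (Fin d) (Fin d) ℝ) + b • M := by
  ext i j
  have h : (M * M).mulVec (Pi.single j 1) =
      (a • (1 : Matrix (Fin d) (Fin d) ℝ) + b • M).mulVec (Pi.single j 1) := by
    rw [← Matrix.mulVec_mulVec, hquad]
    rw [Matrix.add_mulVec, Matrix.smul_mulVec, Matrix.smul_mulVec,
      Matrix.one_mulVec]
  have := congr_fun h i
  rw [Matrix.mulVec_single, Matrix.mulVec_single] at this
  simpa using this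

/-- In the elliptic case, the orbit of any vector meets every direction in the
plane spanned by `u` and `Mu` (expressed via coordinates in `u`, `Nu`). -/
lemma elliptic_covers {M : Matrix (Fin d) (Fin d) ℝ} {a b : ℝ}
    (hMM : M * M = a • (1 : Matrix (Fin d) (Fin d) ℝ) + b • M)
    (hD : b ^ 2 + 4 * a < 0) (u : Fin d → ℝ) (y : Fin d → ℝ) (α β : ℝ)
    (hy : y = α • u + β • M.mulVec u) (hαβ : ¬ (α = 0 ∧ β = 0)) :
    ∃ t c : ℝ, (exp (t • M)).mulVec u = c • y := by
  -- the rotation generator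
  set ω : ℝ := Real.sqrt (-(b ^ 2 + 4 * a)) / 2 with hω
  have hω0 : 0 < ω := by
    rw [hω]
    have : 0 < Real.sqrt (-(b ^ 2 + 4 * a)) := Real.sqrt_pos.2 (by linarith)
    linarith
  set N : Matrix (Fin d) (Fin d) ℝ := M - (b / 2) • 1 with hN
  have hNsq : N * N = (-(ω ^ 2)) • (1 : Matrix (Fin d) (Fin d) ℝ) := by
    have hωsq : ω ^ 2 = -(b ^ 2 + 4 * a) / 4 := by
      rw [hω, div_pow, Real.sq_sqrt (by linarith)]
      norm_num
    have hcoeff : -(ω ^ 2) = a + (b/2)*(b/2) := by rw [hωsq]; ring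
    rw [hN, Matrix.sub_mul, Matrix.mul_sub, Matrix.mul_sub, Matrix.smul_mul,
      Matrix.mul_smul, Matrix.mul_smul, one_mul, mul_one, hMM, hcoeff]
    simp only [mul_one]
    module
  have hωne : ω ≠ 0 := ne_of_gt hω0
  set Im : Matrix (Fin d) (Fin d) ℝ := ω⁻¹ • N with hIm
  have hIsq : Im * Im = -1 := by
    rw [hIm, Matrix.smul_mul, Matrix.mul_smul, hNsq, smul_smul, smul_smul]
    have hc : ω⁻¹ * ω⁻¹ * -ω ^ 2 = -1 := by field_simp
    rw [hc]
    simp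
  set φ : ℂ →ₐ[ℝ] Matrix (Fin d) (Fin d) ℝ := Complex.liftAux Im hIsq with hφ
  have hφcont : Continuous φ := by
    have := LinearMap.continuous_of_finiteDimensional (φ.toLinearMap : ℂ →ₗ[ℝ] Matrix (Fin d) (Fin d) ℝ)
    exact this
  have hφz : ∀ t : ℝ, φ ⟨t * b / 2, t * ω⟩ = t • M := by
    intro t
    rw [hφ, Complex.liftAux_apply]
    show algebraMap ℝ (Matrix (Fin d) (Fin d) ℝ) (t * b / 2) + (t * ω) • Im = t • M
    rw [hIm, Algebra.algebraMap_eq_smul_one, smul_smul, mul_inv_cancel_right₀ hωne, hN]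
    module
  have hexpform : ∀ t : ℝ, (exp (t • M)) =
      (Real.exp (t * b / 2) * Real.cos (t * ω)) • (1 : Matrix (Fin d) (Fin d) ℝ)
      + (Real.exp (t * b / 2) * Real.sin (t * ω)) • Im := by
    intro t
    rw [← hφz t]
    refine (map_exp φ hφcont _).symm.trans ?_
    have hexpc : exp (⟨t * b / 2, t * ω⟩ : ℂ) = Complex.exp ⟨t * b / 2, t * ω⟩ := by
      rw [Complex.exp_eq_exp_ℂ]
    rw [hexpc, hφ, Complex.liftAux_apply]
    rw [Complex.exp_re, Complex.exp_im]
    show algebraMap ℝ (Matrix (Fin d) (Fin d) ℝ) _ + _ • Im = _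
    rw [Algebra.algebraMap_eq_smul_one]
  -- coordinates of y in terms of u and N u
  have hyN : y = (α + β * (b / 2)) • u + β • N.mulVec u := by
    rw [hy, hN, Matrix.sub_mulVec, Matrix.smul_mulVec, Matrix.one_mulVec]
    module
  set α' : ℝ := α + β * (b / 2) with hα'
  have hα'β' : ¬ (α' = 0 ∧ β = 0) := by
    rintro ⟨h1, h2⟩
    apply hαβ
    rw [hα', h2] at h1
    exact ⟨by simpa using h1, h2⟩
  set ζ : ℂ := ⟨α', ω * β⟩ with hζ
  have hζne : ζ ≠ 0 := by
    intro h
    apply hα'β'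
    rw [Complex.ext_iff] at h
    obtain ⟨h1, h2⟩ := h
    simp only [Complex.zero_re, Complex.zero_im] at h1 h2
    exact ⟨h1, by
      rcases mul_eq_zero.1 h2 with h | h
      · exact absurd h hωne
      · exact h⟩
  set ρ : ℝ := ‖ζ‖ with hρ
  have hρ0 : 0 < ρ := by
    rw [hρ]
    exact (norm_pos_iff.2 hζne)
  set θ : ℝ := ζ.arg with hθ
  have hcosθ : Real.cos θ = α' / ρ := by
    rw [hθ, hρ, Complex.cos_arg hζne]
  have hsinθ : Real.sin θ = (ω * β) / ρ := by
    rw [hθ, hρ, Complex.sin_arg]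
  refine ⟨θ / ω, Real.exp ((θ / ω) * b / 2) / ρ, ?_⟩
  have htω : (θ / ω) * ω = θ := div_mul_cancel₀ θ hωne
  rw [hexpform (θ / ω), htω, hyN]
  rw [Matrix.add_mulVec, Matrix.smul_mulVec, Matrix.smul_mulVec,
    Matrix.one_mulVec, hIm, Matrix.smul_mulVec]
  rw [hcosθ, hsinθ]
  match_scalars <;> (field_simp; try ring)







lemma dep_of_mem_rank2 {V : Submodule ℝ (Fin d → ℝ)} (hV2 : Module.finrank ℝ V = 2)
    {v : Fin 3 → (Fin d → ℝ)} (hv : ∀ i, v i ∈ V) : ¬ LinearIndependent ℝ v := by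
  intro hLI
  have hLI' : LinearIndependent ℝ (fun i => (⟨v i, hv i⟩ : V)) := by
    apply LinearIndependent.of_comp V.subtype
    exact hLI
  have hcard := hLI'.fintype_card_le_finrank
  rw [hV2] at hcard
  simp at hcard

lemma range_pair (x y : Fin d → ℝ) : Set.range ![x, y] = {x, y} := by
  rw [Matrix.range_cons, Matrix.range_cons_empty]
  rfl

lemma finrank_span_pair {x y : Fin d → ℝ} (h : LinearIndependent ℝ ![x, y]) :
    Module.finrank ℝ (Submodule.span ℝ {x, y}) = 2 := by
  have := finrank_span_eq_card h
  rwa [range_pair] at this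



end OrbitLineAux

open OrbitLineAux

/-- If the orbit of every point of a nonempty open set of nonzero vectors is a proper
subset of a projective line, then so is the orbit of every nonzero vector. -/
theorem orbit_in_line_of_open_set
    (d : ℕ) (hd : 2 ≤ d) (M : Matrix (Fin d) (Fin d) ℝ)
    (U : Set (Fin d → ℝ)) (hUopen : IsOpen U) (hUne : U.Nonempty)
    (hU0 : (0 : Fin d → ℝ) ∉ U)
    (h : ∀ x ∈ U, ProjOrbitProperSubsetOfLine d M x) :
    ∀ x : Fin d → ℝ, x ≠ 0 → ProjOrbitProperSubsetOfLine d M x := by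
  classical
  obtain ⟨u₀, hu₀⟩ := hUne
  have hdepU : ∀ u ∈ U, ¬ LinearIndependent ℝ ![u, M.mulVec u, M.mulVec (M.mulVec u)] := by
    intro u hu
    obtain ⟨V, hV2, horb, -⟩ := h u hu
    obtain ⟨h0, h1, h2⟩ := triple_mem horb
    refine dep_of_mem_rank2 hV2 (fun i => ?_)
    fin_cases i <;> simp only [Matrix.cons_val_zero, Matrix.cons_val_one, Matrix.head_cons,
      Matrix.cons_val_two, Matrix.tail_cons, Fin.isValue] <;> assumption
  have F1 := dependence_transfer hUopen hu₀ hdepU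
  obtain ⟨a, b, hquad⟩ := global_quadratic hd F1
  by_cases hD : b ^ 2 + 4 * a < 0
  · exfalso
    obtain ⟨V₀, hV₀2, horb₀, y₀, hy₀V, hy₀ne, havoid⟩ := h u₀ hu₀
    have hu₀ne : u₀ ≠ 0 := fun h0 => hU0 (h0 ▸ hu₀)
    have hLIp : LinearIndependent ℝ ![u₀, M.mulVec u₀] := by
      by_contra hdep
      obtain ⟨μ, hμ⟩ := eigen_of_not_li hu₀ne hdep
      have h2 := hquad u₀
      rw [hμ, Matrix.mulVec_smul, hμ] at h2
      have h3 : (μ * μ - b * μ - a) • u₀ = 0 := by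
        linear_combination (norm := module) h2
      have h4 : μ * μ - b * μ - a = 0 := by
        by_contra h5
        exact hu₀ne (by rwa [smul_eq_zero_iff_right h5] at h3)
      nlinarith [sq_nonneg (b - 2 * μ)]
    obtain ⟨hm0, hm1, -⟩ := triple_mem horb₀
    have hle : Submodule.span ℝ {u₀, M.mulVec u₀} ≤ V₀ := by
      rw [Submodule.span_le]
      rintro z (rfl | rfl)
      · exact hm0
      · exact hm1
    have hVeq : Submodule.span ℝ {u₀, M.mulVec u₀} = V₀ :=
      Submodule.eq_of_le_of_finrank_eq hle (by rw [finrank_span_pair hLIp, hV₀2])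
    obtain ⟨α, β, hy₀⟩ := Submodule.mem_span_pair.1 (hVeq ▸ hy₀V)
    have hMM := matrix_quad_of_pointwise hquad
    obtain ⟨t, c, hc⟩ := elliptic_covers hMM hD u₀ y₀ α β hy₀.symm (by
      rintro ⟨rfl, rfl⟩
      apply hy₀ne
      rw [← hy₀]
      simp)
    exact havoid t c hc
  · push_neg at hD
    intro x hx
    set s : ℝ := Real.sqrt (b ^ 2 + 4 * a) with hs
    have hssq : s ^ 2 = b ^ 2 + 4 * a := Real.sq_sqrt (by linarith)
    set lam : ℝ := (b + s) / 2 with hlam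
    have hlamsq : lam * lam = b * lam + a := by
      rw [hlam]
      linear_combination (1/4 : ℝ) * hssq
    by_cases heig : ∃ μ : ℝ, M.mulVec x = μ • x
    · obtain ⟨μ, hμ⟩ := heig
      have hne : Submodule.span ℝ {x} ≠ ⊤ := by
        intro htop
        have h1 : Module.finrank ℝ (Submodule.span ℝ {x}) = 1 := finrank_span_singleton hx
        rw [htop, finrank_top, Module.finrank_pi, Fintype.card_fin] at h1
        omega
      obtain ⟨y', hy'⟩ : ∃ y', y' ∉ Submodule.span ℝ {x} := by
        by_contra hno
        push_neg at hno
        exact hne (Submodule.eq_top_iff'.2 hno)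
      have hy'ne : y' ≠ 0 := fun h0 => hy' (h0 ▸ Submodule.zero_mem _)
      refine ⟨Submodule.span ℝ {y', x}, ?_, ?_, y', ?_, hy'ne, ?_⟩
      · apply finrank_span_pair
        rw [linearIndependent_fin2]
        constructor
        · simpa using hx
        · intro c hc
          exact hy' (Submodule.mem_span_singleton.2 ⟨c, by simpa using hc⟩)
      · intro t
        rw [exp_mulVec_eigen hμ t]
        exact Submodule.smul_mem _ _ (Submodule.subset_span (by simp))
      · exact Submodule.subset_span (by simp)
      · intro t c hc
        rw [exp_mulVec_eigen hμ t] at hc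
        have hcne : c ≠ 0 := by
          rintro rfl
          rw [zero_smul, smul_eq_zero] at hc
          rcases hc with h1 | h1
          · exact Real.exp_ne_zero _ h1
          · exact hx h1
        apply hy'
        rw [Submodule.mem_span_singleton]
        refine ⟨c⁻¹ * Real.exp (t * μ), ?_⟩
        have := congrArg (fun v => c⁻¹ • v) hc
        simp only [smul_smul, inv_mul_cancel₀ hcne, one_smul] at this
        exact this
    · have hLIx : LinearIndependent ℝ ![x, M.mulVec x] := by
        by_contra hdep
        obtain ⟨μ, hμ⟩ := eigen_of_not_li hx hdep
        exact heig ⟨μ, hμ⟩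
      have hinv : ∀ v ∈ Submodule.span ℝ {x, M.mulVec x},
          M.mulVec v ∈ Submodule.span ℝ {x, M.mulVec x} := by
        intro v hv
        obtain ⟨c, c', hcc⟩ := Submodule.mem_span_pair.1 hv
        rw [← hcc]
        apply Submodule.mem_span_pair.2
        refine ⟨c' * a, c + c' * b, ?_⟩
        rw [Matrix.mulVec_add, Matrix.mulVec_smul, Matrix.mulVec_smul, hquad x]
        module
      set y : Fin d → ℝ := M.mulVec x - (b - lam) • x with hy
      have hyV : y ∈ Submodule.span ℝ {x, M.mulVec x} :=
        Submodule.mem_span_pair.2 ⟨-(b - lam), 1, by rw [hy]; module⟩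
      have hyne : y ≠ 0 := by
        intro h0
        apply heig
        refine ⟨b - lam, ?_⟩
        have : M.mulVec x - (b - lam) • x = 0 := h0
        linear_combination (norm := module) this
      have hMy : M.mulVec y = lam • y := by
        rw [hy, Matrix.mulVec_sub, Matrix.mulVec_smul, hquad x]
        have : a = lam * lam - b * lam := by linarith
        rw [this]
        module
      refine ⟨Submodule.span ℝ {x, M.mulVec x}, finrank_span_pair hLIx, ?_, y, hyV, hyne, ?_⟩
      · intro t
        exact orbit_mem_invariant hinv (Submodule.subset_span (by simp)) t
      · intro t c hc
        have hcne : c ≠ 0 := by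
          rintro rfl
          rw [zero_smul] at hc
          exact exp_mulVec_ne_zero t hx hc
        have hback := exp_neg_mulVec (M := M) t x
        rw [hc, Matrix.mulVec_smul] at hback
        have hnegexp : (exp (-(t • M))).mulVec y = Real.exp (-t * lam) • y := by
          rw [← neg_smul]
          exact exp_mulVec_eigen hMy (-t)
        rw [hnegexp, smul_smul] at hback
        set k : ℝ := c * Real.exp (-t * lam) with hk
        have hkne : k ≠ 0 := mul_ne_zero hcne (Real.exp_ne_zero _)
        -- x = k • y = k • (Mx - (b-lam)x)
        have hcomb : (1 + k * (b - lam)) • x + (-k) • M.mulVec x = 0 := by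
          rw [hy] at hback
          linear_combination (norm := module) hback.symm
        have := Fintype.linearIndependent_iff.1 hLIx ![1 + k * (b - lam), -k] (by
          rw [Fin.sum_univ_two]; simpa using hcomb)
        have hk0 : -k = 0 := by simpa using this 1
        exact hkne (by linarith)
end

section
/- Let C ⊆ ℝ^d be a properly convex open cone, let Γ ≤ GL(d,ℝ) be a subgroup preserving C, and let M be a real d×d matrix such that for every nonzero x ∈ ℝ^d the projective orbit of x under t ↦ exp(tM) is a proper subset of a projective line. If Γ approaches the flow t ↦ exp(tM) at infinity, then the flow preserves C, i.e. exp(tM)·C = C for every t ∈ ℝ. -/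
attribute [local instance] Matrix.linftyOpNormedAddCommGroup

/-- A properly convex open cone in `ℝ^d`. -/
def IsProperlyConvexOpenCone (d : ℕ) (C : Set (Fin d → ℝ)) : Prop :=
  C.Nonempty ∧ IsOpen C ∧ Convex ℝ C ∧
    (∀ x ∈ C, ∀ c : ℝ, 0 < c → c • x ∈ C) ∧
    closure C ∩ (-(closure C)) = {0}

/-- `Γ` approaches the flow `t ↦ exp(tM)` at infinity: for every `ε > 0` and every
`s ∈ ℝ` there are group elements projectively `ε`-close to `exp(tM)` for some `t > s`,
and to `exp(t'M)` for some `t' < -s`. -/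
noncomputable def ApproachesFlowAtInfinity (d : ℕ)
    (Γ : Subgroup (Matrix.GeneralLinearGroup (Fin d) ℝ))
    (M : Matrix (Fin d) (Fin d) ℝ) : Prop :=
  ∀ ε : ℝ, 0 < ε → ∀ s : ℝ,
    (∃ γ ∈ Γ, ∃ t : ℝ, t > s ∧ ∃ c : ℝ, c ≠ 0 ∧
      ‖c • ((γ : Matrix (Fin d) (Fin d) ℝ) * (NormedSpace.exp (t • M))⁻¹) - 1‖ < ε) ∧
    (∃ γ' ∈ Γ, ∃ t' : ℝ, t' < -s ∧ ∃ c' : ℝ, c' ≠ 0 ∧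
      ‖c' • ((γ' : Matrix (Fin d) (Fin d) ℝ) * (NormedSpace.exp (t' • M))⁻¹) - 1‖ < ε)

attribute [local instance] Matrix.linftyOpNormedSpace

open Matrix NormedSpace Filter Topology

section FlowAux

variable {d : ℕ} {M : Matrix (Fin d) (Fin d) ℝ} {C : Set (Fin d → ℝ)}

section Cone

lemma cone_add_mem (hconv : Convex ℝ C)
    (hcone : ∀ x ∈ C, ∀ c : ℝ, 0 < c → c • x ∈ C) {x y : Fin d → ℝ} (hx : x ∈ C) (hy : y ∈ C) : x + y ∈ C := by
  have h := hconv hx hy (by norm_num : (0:ℝ) ≤ 1/2) (by norm_num : (0:ℝ) ≤ 1/2) (by norm_num)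
  have h2 := hcone _ h 2 (by norm_num)
  have : (2:ℝ) • ((1/2:ℝ) • x + (1/2:ℝ) • y) = x + y := by module
  rwa [this] at h2

lemma cone_add_closure (hopen : IsOpen C) (hconv : Convex ℝ C)
    (hcone : ∀ x ∈ C, ∀ c : ℝ, 0 < c → c • x ∈ C) {x y : Fin d → ℝ} (hx : x ∈ C) (hy : y ∈ closure C) :
    x + y ∈ C := by
  obtain ⟨ε, hε, hball⟩ := Metric.isOpen_iff.mp hopen x hx
  obtain ⟨y', hy', hdist⟩ := Metric.mem_closure_iff.mp hy ε hε
  have h1 : x + (y - y') ∈ C := by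
    apply hball
    rw [Metric.mem_ball, dist_eq_norm]
    simpa [dist_eq_norm] using hdist
  have := cone_add_mem hconv hcone h1 hy'
  rwa [show x + (y - y') + y' = x + y by abel] at this

lemma cone_closure_smul (hcone : ∀ x ∈ C, ∀ c : ℝ, 0 < c → c • x ∈ C) {a : ℝ} (ha : 0 ≤ a) {y : Fin d → ℝ} (hy : y ∈ closure C)
    (hCne : C.Nonempty) : a • y ∈ closure C := by
  rcases eq_or_lt_of_le ha with rfl | ha
  · obtain ⟨x0, hx0⟩ := hCne
    rw [zero_smul]
    have htend : Tendsto (fun n : ℕ => (1/((n:ℝ)+1)) • x0) atTop (𝓝 0) := by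
      have := (tendsto_one_div_add_atTop_nhds_zero_nat (𝕜 := ℝ)).smul_const x0
      simpa using this
    exact mem_closure_of_tendsto htend (Filter.Eventually.of_forall fun n =>
      hcone _ hx0 _ (by positivity : (0:ℝ) < 1/((n:ℝ)+1)))
  · have hmap : Set.MapsTo (fun v => a • v) C C := fun v hv => hcone v hv a ha
    have := hmap.closure (continuous_const_smul a)
    exact this hy

lemma cone_comb_mem (hopen : IsOpen C) (hconv : Convex ℝ C)
    (hcone : ∀ x ∈ C, ∀ c : ℝ, 0 < c → c • x ∈ C) {a b : ℝ} (ha : 0 < a) (hb : 0 ≤ b) {x y : Fin d → ℝ}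
    (hx : x ∈ C) (hy : y ∈ closure C) : a • x + b • y ∈ C :=
  cone_add_closure hopen hconv hcone (hcone x hx a ha)
    (cone_closure_smul hcone hb hy ⟨x, hx⟩)

lemma cone_zero_not_mem (hopen : IsOpen C)
    (hsep : closure C ∩ (-(closure C)) = {0}) (hd : 0 < d) :
    (0 : Fin d → ℝ) ∉ C := by
  intro h0
  set e : Fin d → ℝ := fun _ => 1 with he
  have he0 : e ≠ 0 := by
    intro h
    have := congrFun h ⟨0, hd⟩
    simpa [he] using this
  obtain ⟨ε, hε, hball⟩ := Metric.isOpen_iff.mp hopen 0 h0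
  set c : ℝ := ε / (2 * ‖e‖) with hc
  have hne : ‖e‖ ≠ 0 := norm_ne_zero_iff.mpr he0
  have hcpos : 0 < c := by
    have : 0 < ‖e‖ := norm_pos_iff.mpr he0
    positivity
  have hmem : ∀ s : ℝ, |s| = c → s • e ∈ C := by
    intro s hs
    apply hball
    rw [Metric.mem_ball, dist_zero_right, norm_smul, Real.norm_eq_abs, hs, hc]
    rw [div_mul_eq_mul_div, mul_comm]
    rw [div_lt_iff₀ (by positivity)]
    nlinarith [norm_pos_iff.mpr he0]
  have h1 : c • e ∈ C := hmem c (abs_of_pos hcpos)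
  have h2 : (-c) • e ∈ C := hmem (-c) (by rw [abs_neg, abs_of_pos hcpos])
  have h3 : c • e ∈ closure C ∩ (-(closure C)) := by
    constructor
    · exact subset_closure h1
    · rw [Set.mem_neg]
      have : -(c • e) = (-c) • e := by module
      rw [this]
      exact subset_closure h2
  rw [hsep] at h3
  exact smul_ne_zero hcpos.ne' he0 h3

lemma cone_opp_eq_zero (hsep : closure C ∩ (-(closure C)) = {0}) {u : Fin d → ℝ}
    (h1 : u ∈ closure C) (h2 : -u ∈ closure C) : u = 0 := by
  have : u ∈ closure C ∩ (-(closure C)) := ⟨h1, Set.mem_neg.mpr (by simpa using h2)⟩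
  rwa [hsep] at this

end Cone

lemma mulVec_tendsto {A : ℕ → Matrix (Fin d) (Fin d) ℝ}
    (hA : Tendsto A atTop (𝓝 1)) {v : ℕ → (Fin d → ℝ)} {u : Fin d → ℝ}
    (hv : Tendsto v atTop (𝓝 u)) :
    Tendsto (fun n => (A n).mulVec (v n)) atTop (𝓝 u) := by
  have h1 : Tendsto (fun n => (A n).mulVec (v n) - v n) atTop (𝓝 0) := by
    apply squeeze_zero_norm (a := fun n => ‖A n - 1‖ * ‖v n‖)
    · intro n
      calc ‖(A n).mulVec (v n) - v n‖ = ‖(A n - 1).mulVec (v n)‖ := by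
            rw [Matrix.sub_mulVec, Matrix.one_mulVec]
        _ ≤ ‖A n - 1‖ * ‖v n‖ := Matrix.linfty_opNorm_mulVec _ _
    · have hA0 : Tendsto (fun n => ‖A n - 1‖) atTop (𝓝 0) := by
        have := (hA.sub_const 1).norm
        simpa using this
      have := hA0.mul hv.norm
      simpa using this
  have := hv.add h1
  simp only [add_zero] at this
  convert this using 2 with n
  abel

lemma myexp_add (s t : ℝ) :
    exp ((s + t) • M) = exp (s • M) * exp (t • M) := by
  rw [add_smul]
  exact Matrix.exp_add_of_commute _ _ (Commute.smul_left (Commute.smul_right rfl t) s)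

lemma myexp_mul_exp_neg (t : ℝ) : exp (t • M) * exp ((-t) • M) = 1 := by
  rw [← myexp_add]
  simp [NormedSpace.exp_zero]

lemma myexp_inv_mul (t : ℝ) : (exp (t • M))⁻¹ * exp (t • M) = 1 := by
  have h : IsUnit (exp (t • M)).det :=
    (Matrix.isUnit_iff_isUnit_det _).mp (Matrix.isUnit_exp _)
  exact Matrix.nonsing_inv_mul _ h

/-- `A ↦ A.mulVec z` as a linear map. -/
def appLM (z : Fin d → ℝ) : Matrix (Fin d) (Fin d) ℝ →ₗ[ℝ] (Fin d → ℝ) where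
  toFun A := A.mulVec z
  map_add' A B := Matrix.add_mulVec A B z
  map_smul' c A := Matrix.smul_mulVec c A z

lemma hasDerivAt_flow (M : Matrix (Fin d) (Fin d) ℝ) (z : Fin d → ℝ) (t : ℝ) :
    HasDerivAt (fun s : ℝ => (exp (s • M)).mulVec z)
      ((exp (t • M)).mulVec (M.mulVec z)) t := by
  letI : SeminormedRing (Matrix (Fin d) (Fin d) ℝ) := Matrix.linftyOpSemiNormedRing
  letI : NormedRing (Matrix (Fin d) (Fin d) ℝ) := Matrix.linftyOpNormedRing
  letI : NormedAlgebra ℝ (Matrix (Fin d) (Fin d) ℝ) := Matrix.linftyOpNormedAlgebra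
  have h := hasDerivAt_exp_smul_const (𝕂 := ℝ) M t
  have h2 := ((appLM z).toContinuousLinearMap.hasFDerivAt).comp_hasDerivAt t h
  have e1 : ∀ A : Matrix (Fin d) (Fin d) ℝ, (appLM z).toContinuousLinearMap A = A.mulVec z :=
    fun A => rfl
  rw [Matrix.mulVec_mulVec]; exact h2

lemma deriv_mem_of_mem {V : Submodule ℝ (Fin d → ℝ)} {c : ℝ → (Fin d → ℝ)}
    {c' : Fin d → ℝ} {t : ℝ} (hd : HasDerivAt c c' t) (hmem : ∀ s, c s ∈ V) : c' ∈ V := by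
  have hV : IsClosed (V : Set (Fin d → ℝ)) := Submodule.closed_of_finiteDimensional V
  have ht := hasDerivAt_iff_tendsto_slope.mp hd
  refine hV.mem_of_tendsto ht (Filter.Eventually.of_forall ?_)
  intro s
  exact V.smul_mem _ (V.sub_mem (hmem s) (hmem t))

/-- `A ↦ (v ↦ A.mulVec v)` as a continuous-linear-map-valued linear map. -/
noncomputable def psiLM (d : ℕ) :
    Matrix (Fin d) (Fin d) ℝ →ₗ[ℝ] ((Fin d → ℝ) →L[ℝ] (Fin d → ℝ)) where
  toFun A := (Matrix.mulVecLin A).toContinuousLinearMap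
  map_add' A B := by ext v; simp [Matrix.add_mulVec]
  map_smul' c A := by ext v; simp [Matrix.smul_mulVec]

lemma flow_unique {g : ℝ → (Fin d → ℝ)}
    (hg : ∀ t, HasDerivAt g (M.mulVec (g t)) t) (t : ℝ) :
    (exp (t • M)).mulVec (g 0) = g t := by
  letI : SeminormedRing (Matrix (Fin d) (Fin d) ℝ) := Matrix.linftyOpSemiNormedRing
  letI : NormedRing (Matrix (Fin d) (Fin d) ℝ) := Matrix.linftyOpNormedRing
  letI : NormedAlgebra ℝ (Matrix (Fin d) (Fin d) ℝ) := Matrix.linftyOpNormedAlgebra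
  set F : ℝ → (Fin d → ℝ) := fun s => (exp (s • (-M))).mulVec (g s) with hF
  have hFd : ∀ s, HasDerivAt F 0 s := by
    intro s
    have hc : HasDerivAt (fun u : ℝ => (psiLM d) (exp (u • (-M))))
        ((psiLM d) (exp (s • (-M)) * (-M))) s :=
      ((psiLM d).toContinuousLinearMap.hasFDerivAt).comp_hasDerivAt s
        (hasDerivAt_exp_smul_const (𝕂 := ℝ) (-M) s)
    have h2 := hc.clm_apply (hg s)
    have e1 : ∀ (A : Matrix (Fin d) (Fin d) ℝ) v, (psiLM d) A v = A.mulVec v := fun _ _ => rfl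
    have e2 : (psiLM d) (exp (s • (-M)) * (-M)) (g s)
        + (psiLM d) (exp (s • (-M))) (M.mulVec (g s)) = 0 := by
      simp only [e1, ← Matrix.mulVec_mulVec]
      simp [Matrix.neg_mulVec, Matrix.mulVec_neg]
    have h3 : HasDerivAt (fun u : ℝ => (psiLM d) (exp (u • (-M))) (g u)) 0 s := e2 ▸ h2
    exact h3
  have hFdiff : Differentiable ℝ F := fun s => (hFd s).differentiableAt
  have hconst : ∀ s, F s = F 0 := by
    intro s
    refine is_const_of_fderiv_eq_zero hFdiff (fun x => ?_) s 0
    have := (hFd x).hasFDerivAt.fderiv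
    rw [this]
    ext v
    simp
  have hc := hconst t
  have h0 : F 0 = g 0 := by simp [hF, NormedSpace.exp_zero]
  have hmul : exp (t • M) * exp (t • (-M)) = 1 := by
    rw [← Matrix.exp_add_of_commute (t • M) (t • (-M)) (Commute.smul_left (Commute.smul_right (Commute.neg_right rfl) t) t)]
    simp [NormedSpace.exp_zero]
  calc (exp (t • M)).mulVec (g 0) = (exp (t • M)).mulVec (F t) := by rw [hc, h0]
    _ = (exp (t • M) * exp (t • (-M))).mulVec (g t) := by
        rw [hF]; rw [Matrix.mulVec_mulVec]
    _ = g t := by rw [hmul, Matrix.one_mulVec]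

/-- Jordan-type formula (eigenvector case is `w = 0`). -/
lemma flow_jordan {z w : Fin d → ℝ} {l : ℝ} (hz : M.mulVec z = l • z + w)
    (hw : M.mulVec w = l • w) (t : ℝ) :
    (exp (t • M)).mulVec z
      = Real.exp (l * t) • z + (t * Real.exp (l * t)) • w := by
  have hg : ∀ t : ℝ, HasDerivAt
      (fun t : ℝ => Real.exp (l * t) • z + (t * Real.exp (l * t)) • w)
      (M.mulVec (Real.exp (l * t) • z + (t * Real.exp (l * t)) • w)) t := by
    intro t
    have hlt : HasDerivAt (fun t : ℝ => l * t) l t := by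
      simpa using (hasDerivAt_id t).const_mul l
    have hexp : HasDerivAt (fun t : ℝ => Real.exp (l * t)) (Real.exp (l * t) * l) t :=
      (Real.hasDerivAt_exp (l * t)).comp t hlt
    have hte : HasDerivAt (fun t : ℝ => t * Real.exp (l * t))
        (1 * Real.exp (l * t) + t * (Real.exp (l * t) * l)) t :=
      (hasDerivAt_id t).mul hexp
    have h := (hexp.smul_const z).add (hte.smul_const w)
    refine h.congr_deriv ?_; symm
    rw [Matrix.mulVec_add, Matrix.mulVec_smul, Matrix.mulVec_smul, hz, hw]
    match_scalars <;> ring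
  have h0 : (Real.exp (l * 0) • z + ((0:ℝ) * Real.exp (l * 0)) • w) = z := by simp
  have := flow_unique hg t
  rwa [h0] at this

lemma flow_eigen {z : Fin d → ℝ} {l : ℝ} (hz : M.mulVec z = l • z) (t : ℝ) :
    (exp (t • M)).mulVec z = Real.exp (l * t) • z := by
  have := flow_jordan (M := M) (z := z) (w := 0) (l := l) (by simp [hz]) (by simp) t
  simpa using this

lemma flow_rot {z w : Fin d → ℝ} {a ω : ℝ} (hω : ω ≠ 0) (hz : M.mulVec z = a • z + w)
    (hw : M.mulVec w = (-(ω^2)) • z + a • w) (t : ℝ) :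
    (exp (t • M)).mulVec z
      = (Real.exp (a * t) * Real.cos (ω * t)) • z
        + (Real.exp (a * t) * Real.sin (ω * t) / ω) • w := by
  have hg : ∀ t : ℝ, HasDerivAt
      (fun t : ℝ => (Real.exp (a * t) * Real.cos (ω * t)) • z
        + (Real.exp (a * t) * Real.sin (ω * t) / ω) • w)
      (M.mulVec ((Real.exp (a * t) * Real.cos (ω * t)) • z
        + (Real.exp (a * t) * Real.sin (ω * t) / ω) • w)) t := by
    intro t
    have hat : HasDerivAt (fun t : ℝ => a * t) a t := by
      simpa using (hasDerivAt_id t).const_mul a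
    have hwt : HasDerivAt (fun t : ℝ => ω * t) ω t := by
      simpa using (hasDerivAt_id t).const_mul ω
    have hexp : HasDerivAt (fun t : ℝ => Real.exp (a * t)) (Real.exp (a * t) * a) t :=
      (Real.hasDerivAt_exp (a * t)).comp t hat
    have hcos : HasDerivAt (fun t : ℝ => Real.cos (ω * t)) (-Real.sin (ω * t) * ω) t :=
      (Real.hasDerivAt_cos (ω * t)).comp t hwt
    have hsin : HasDerivAt (fun t : ℝ => Real.sin (ω * t)) (Real.cos (ω * t) * ω) t :=
      (Real.hasDerivAt_sin (ω * t)).comp t hwt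
    have h1 : HasDerivAt (fun t : ℝ => Real.exp (a * t) * Real.cos (ω * t))
        (Real.exp (a * t) * a * Real.cos (ω * t)
          + Real.exp (a * t) * (-Real.sin (ω * t) * ω)) t := hexp.mul hcos
    have h2 : HasDerivAt (fun t : ℝ => Real.exp (a * t) * Real.sin (ω * t) / ω)
        ((Real.exp (a * t) * a * Real.sin (ω * t)
          + Real.exp (a * t) * (Real.cos (ω * t) * ω)) / ω) t := (hexp.mul hsin).div_const ω
    have h := (h1.smul_const z).add (h2.smul_const w)
    refine h.congr_deriv ?_; symm
    rw [Matrix.mulVec_add, Matrix.mulVec_smul, Matrix.mulVec_smul, hz, hw]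
    match_scalars <;> field_simp <;> ring
  have h0 : ((Real.exp (a * 0) * Real.cos (ω * 0)) • z
      + (Real.exp (a * 0) * Real.sin (ω * 0) / ω) • w) = z := by simp
  have := flow_unique hg t
  rwa [h0] at this

lemma trichotomy (hlin : ∀ x : Fin d → ℝ, x ≠ 0 → ProjOrbitProperSubsetOfLine d M x)
    {z : Fin d → ℝ} (hz : z ≠ 0) :
    (∃ l : ℝ, M.mulVec z = l • z) ∨
    (∃ l m : ℝ, ∃ p q : Fin d → ℝ, l < m ∧ z = p + q ∧ M.mulVec p = l • p ∧
      M.mulVec q = m • q ∧ p ≠ 0 ∧ q ≠ 0) ∨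
    (∃ l : ℝ, ∃ w : Fin d → ℝ, w ≠ 0 ∧ M.mulVec z = l • z + w ∧ M.mulVec w = l • w) := by
  by_cases hdep : ∃ a : ℝ, M.mulVec z = a • z
  · left; exact hdep
  push_neg at hdep
  obtain ⟨V, hV2, horb, y, hyV, hy0, hyavoid⟩ := hlin z hz
  have hzV : z ∈ V := by
    have := horb 0
    simpa [NormedSpace.exp_zero] using this
  have hMzV : M.mulVec z ∈ V := by
    have h := deriv_mem_of_mem (hasDerivAt_flow M z 0) horb
    simpa [NormedSpace.exp_zero] using h
  have horb1 : ∀ s : ℝ, (exp (s • M)).mulVec (M.mulVec z) ∈ V := by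
    intro s
    have h := deriv_mem_of_mem (hasDerivAt_flow M z s) horb
    exact h
  have hM2V : M.mulVec (M.mulVec z) ∈ V := by
    have h := deriv_mem_of_mem (hasDerivAt_flow M (M.mulVec z) 0) horb1
    simpa [NormedSpace.exp_zero] using h
  -- the span of z and Mz is V
  have hli : LinearIndependent ℝ ![M.mulVec z, z] := by
    rw [linearIndependent_fin2]
    refine ⟨hz, fun a h => hdep a h.symm⟩
  set W : Submodule ℝ (Fin d → ℝ) := Submodule.span ℝ {M.mulVec z, z} with hW
  have hWV : W ≤ V := by
    rw [hW, Submodule.span_le]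
    intro u hu
    rcases hu with rfl | hu
    · exact hMzV
    · rcases hu with rfl; exact hzV
  have hWrank : Module.finrank ℝ W = 2 := by
    have hrange : Set.range ![M.mulVec z, z] = {M.mulVec z, z} := by
      simp [Matrix.range_cons, Matrix.range_empty, Set.pair_comm]
    rw [hW, ← hrange, finrank_span_eq_card hli]
    simp
  have hWeq : W = V := Submodule.eq_of_le_of_finrank_le hWV (by rw [hV2, hWrank])
  have hM2W : M.mulVec (M.mulVec z) ∈ W := hWeq ▸ hM2V
  obtain ⟨a, b, hab⟩ := Submodule.mem_span_pair.mp hM2W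
  rcases lt_trichotomy (a^2 + 4*b) 0 with hdisc | hdisc | hdisc
  · -- complex eigenvalues: contradiction
    exfalso
    set w : Fin d → ℝ := M.mulVec z - (a/2) • z with hwdef
    have hb4 : b + a^2/4 < 0 := by nlinarith
    set ω : ℝ := Real.sqrt (-(b + a^2/4)) with hω
    have hωpos : 0 < ω := Real.sqrt_pos.mpr (by linarith)
    have hωsq : ω^2 = -(b + a^2/4) := Real.sq_sqrt (by linarith)
    have hMz' : M.mulVec z = (a/2) • z + w := by
      rw [hwdef]; module
    have hMw : M.mulVec w = (-(ω^2)) • z + (a/2) • w := by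
      rw [hωsq, hwdef, Matrix.mulVec_sub, Matrix.mulVec_smul, ← hab]
      match_scalars <;> ring
    -- y as a combination of z and w
    have hyW : y ∈ W := hWeq ▸ hyV
    obtain ⟨α, β, hy⟩ := Submodule.mem_span_pair.mp hyW
    have hy' : y = (α * (a/2) + β) • z + α • w := by
      rw [← hy, hwdef]; match_scalars <;> ring
    set A : ℝ := α * (a/2) + β with hA
    set R : ℝ := Real.sqrt (A^2 + ω^2*α^2) with hRdef
    have hApos : 0 < A^2 + ω^2*α^2 := by
      rcases eq_or_ne α 0 with h0 | h0
      · have hA0 : A ≠ 0 := by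
          intro hA0
          apply hy0
          rw [hy', hA0, h0]; simp
        positivity
      · positivity
    have hR : 0 < R := Real.sqrt_pos.mpr hApos
    have hRsq : R^2 = A^2 + ω^2*α^2 := Real.sq_sqrt hApos.le
    set u : ℂ := ⟨A/R, ω*α/R⟩ with hu
    have habs : ‖u‖ = 1 := by
      rw [Complex.norm_def, Complex.normSq_mk]
      rw [show A/R*(A/R) + ω*α/R*(ω*α/R) = (A^2 + ω^2*α^2)/R^2 by ring]
      rw [← hRsq]
      rw [div_self (by positivity)]
      exact Real.sqrt_one
    have hu0 : u ≠ 0 := by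
      intro h
      rw [h] at habs
      simp at habs
    set θ := u.arg with hθ
    have hcos : Real.cos θ = A/R := by
      have := Complex.cos_arg hu0
      rw [habs] at this; simpa using this
    have hsin : Real.sin θ = ω*α/R := by
      have := Complex.sin_arg u
      rw [habs] at this; simpa using this
    apply hyavoid (θ/ω) (Real.exp ((a/2) * (θ/ω)) / R)
    rw [flow_rot hωpos.ne' hMz' hMw (θ/ω)]
    have hωθ : ω * (θ/ω) = θ := by field_simp
    rw [hωθ, hcos, hsin, hy']
    match_scalars
    · field_simp
    · field_simp
  · -- double real root: Jordan case
    right; right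
    set l : ℝ := a/2 with hl
    set w : Fin d → ℝ := M.mulVec z - l • z with hwdef
    refine ⟨l, w, ?_, by rw [hwdef]; module, ?_⟩
    · intro h0
      have : M.mulVec z = l • z := by
        rw [hwdef] at h0
        have := sub_eq_zero.mp h0
        exact this
      exact hdep l this
    · rw [hwdef, Matrix.mulVec_sub, Matrix.mulVec_smul, ← hab]
      have hb : b = -(a^2/4) := by linarith
      rw [hb]
      match_scalars <;> ring
  · -- two distinct real roots; split case
    right; left
    obtain ⟨l, m, hlm, hadd, hmul⟩ : ∃ l m : ℝ, l < m ∧ a - l = m ∧ b = -(l*m) := by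
      refine ⟨(a - Real.sqrt (a^2+4*b))/2, (a + Real.sqrt (a^2+4*b))/2, ?_, by ring, ?_⟩
      · have := Real.sqrt_pos.mpr hdisc
        linarith
      · have hs : Real.sqrt (a^2+4*b) ^ 2 = a^2+4*b := Real.sq_sqrt hdisc.le
        nlinarith [hs]
    have hne : (m - l) ≠ 0 := by intro h0; rw [sub_eq_zero] at h0; exact hlm.ne' h0
    set w' : Fin d → ℝ := M.mulVec z - l • z with hw'
    have hw'0 : w' ≠ 0 := by
      intro h0
      exact hdep l (sub_eq_zero.mp h0)
    have hMw' : M.mulVec w' = m • w' := by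
      rw [hw', Matrix.mulVec_sub, Matrix.mulVec_smul, ← hab]
      match_scalars
      · linear_combination hadd
      · linear_combination hmul
    set q : Fin d → ℝ := (m - l)⁻¹ • w' with hq
    have hmlq : (m - l) • q = w' := by
      rw [hq, smul_smul, mul_inv_cancel₀ hne, one_smul]
    set p : Fin d → ℝ := z - q with hp
    have hq0 : q ≠ 0 := by
      intro h0
      apply hw'0
      rw [← hmlq, h0, smul_zero]
    have hMq : M.mulVec q = m • q := by
      rw [hq, Matrix.mulVec_smul, hMw', smul_comm]
    have hMp : M.mulVec p = l • p := by
      rw [hp, Matrix.mulVec_sub, hMq]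
      have : M.mulVec z = l • z + (m - l) • q := by
        rw [hmlq, hw']; module
      rw [this]
      module
    have hp0 : p ≠ 0 := by
      intro h0
      have hzq : z = q := by
        have := sub_eq_zero.mp (hp ▸ h0)
        exact this
      apply hdep m
      rw [← hzq] at hMq
      exact hMq
    exact ⟨l, m, p, q, hlm, by rw [hp]; module, hMp, hMq, hp0, hq0⟩

end FlowAux

/-- If `Γ` preserves a properly convex open cone `C` and approaches a linear flow at
infinity, then the flow preserves `C`. -/
theorem flow_preserves_of_approaches (d : ℕ)
    (C : Set (Fin d → ℝ)) (hC : IsProperlyConvexOpenCone d C)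
    (Γ : Subgroup (Matrix.GeneralLinearGroup (Fin d) ℝ))
    (hΓ : ∀ γ ∈ Γ, Matrix.mulVec ((γ : Matrix.GeneralLinearGroup (Fin d) ℝ) :
      Matrix (Fin d) (Fin d) ℝ) '' C = C)
    (M : Matrix (Fin d) (Fin d) ℝ)
    (hlin : ∀ x : Fin d → ℝ, x ≠ 0 → ProjOrbitProperSubsetOfLine d M x)
    (happ : ApproachesFlowAtInfinity d Γ M) :
    ∀ t : ℝ, Matrix.mulVec (NormedSpace.exp (t • M)) '' C = C := by
  classical
  obtain ⟨hne, hopen, hconv, hcone, hsep⟩ := hC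
  rcases Nat.eq_zero_or_pos d with hd0 | hd
  · subst hd0
    intro t
    have hsub : ∀ u v : Fin 0 → ℝ, u = v := fun u v => funext fun i => i.elim0
    ext u
    constructor
    · rintro ⟨x, hx, rfl⟩
      rwa [hsub ((exp (t • M)).mulVec x) x]
    · intro hu
      exact ⟨u, hu, hsub _ _⟩
  have h0C : (0 : Fin d → ℝ) ∉ C := cone_zero_not_mem hopen hsep hd
  -- sequences approximating the flow at `+∞`
  have hPex : ∀ n : ℕ, ∃ γ : Matrix.GeneralLinearGroup (Fin d) ℝ, γ ∈ Γ ∧ ∃ tt : ℝ,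
      tt > (n : ℝ) ∧ ∃ c : ℝ, c ≠ 0 ∧
      ‖c • ((γ : Matrix (Fin d) (Fin d) ℝ) * (exp (tt • M))⁻¹) - 1‖ < 1/((n:ℝ)+1) := by
    intro n
    obtain ⟨⟨γ, hγ, tt, htt, c, hc, hn⟩, -⟩ := happ (1/((n:ℝ)+1)) (by positivity) (n : ℝ)
    exact ⟨γ, hγ, tt, htt, c, hc, hn⟩
  choose γP hγPΓ tP htP cP hcP hnP using hPex
  -- sequences approximating the flow at `-∞`
  have hNex : ∀ n : ℕ, ∃ γ : Matrix.GeneralLinearGroup (Fin d) ℝ, γ ∈ Γ ∧ ∃ tt : ℝ,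
      tt < -(n : ℝ) ∧ ∃ c : ℝ, c ≠ 0 ∧
      ‖c • ((γ : Matrix (Fin d) (Fin d) ℝ) * (exp (tt • M))⁻¹) - 1‖ < 1/((n:ℝ)+1) := by
    intro n
    obtain ⟨-, ⟨γ, hγ, tt, htt, c, hc, hn⟩⟩ := happ (1/((n:ℝ)+1)) (by positivity) (n : ℝ)
    exact ⟨γ, hγ, tt, htt, c, hc, hn⟩
  choose γN hγNΓ tN htN cN hcN hnN using hNex
  set AP : ℕ → Matrix (Fin d) (Fin d) ℝ :=
    fun n => cP n • ((γP n : Matrix (Fin d) (Fin d) ℝ) * (exp (tP n • M))⁻¹) with hAPdef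
  set AN : ℕ → Matrix (Fin d) (Fin d) ℝ :=
    fun n => cN n • ((γN n : Matrix (Fin d) (Fin d) ℝ) * (exp (tN n • M))⁻¹) with hANdef
  have hnorm_tend : ∀ A : ℕ → Matrix (Fin d) (Fin d) ℝ,
      (∀ n, ‖A n - 1‖ < 1/((n:ℝ)+1)) → Tendsto A atTop (𝓝 1) := by
    intro A hA
    apply tendsto_iff_dist_tendsto_zero.mpr
    apply squeeze_zero (fun n => dist_nonneg) (fun n => ?_)
      tendsto_one_div_add_atTop_nhds_zero_nat
    rw [dist_eq_norm]
    exact (hA n).le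
  have hAPt : Tendsto AP atTop (𝓝 1) := hnorm_tend AP fun n => hnP n
  have hANt : Tendsto AN atTop (𝓝 1) := hnorm_tend AN fun n => hnN n
  have hmasterP : ∀ n, ∀ z ∈ C, ∃ u ∈ C,
      (AP n).mulVec ((exp (tP n • M)).mulVec z) = cP n • u := by
    intro n z hz
    refine ⟨(γP n : Matrix (Fin d) (Fin d) ℝ).mulVec z, ?_, ?_⟩
    · rw [← hΓ (γP n) (hγPΓ n)]
      exact ⟨z, hz, rfl⟩
    · rw [Matrix.mulVec_mulVec, hAPdef, smul_mul_assoc, mul_assoc, myexp_inv_mul, mul_one,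
        Matrix.smul_mulVec]
  have hmasterN : ∀ n, ∀ z ∈ C, ∃ u ∈ C,
      (AN n).mulVec ((exp (tN n • M)).mulVec z) = cN n • u := by
    intro n z hz
    refine ⟨(γN n : Matrix (Fin d) (Fin d) ℝ).mulVec z, ?_, ?_⟩
    · rw [← hΓ (γN n) (hγNΓ n)]
      exact ⟨z, hz, rfl⟩
    · rw [Matrix.mulVec_mulVec, hANdef, smul_mul_assoc, mul_assoc, myexp_inv_mul, mul_one,
        Matrix.smul_mulVec]
  -- the signed-limit lemma
  have hlim : ∀ (A : ℕ → Matrix (Fin d) (Fin d) ℝ) (c tt : ℕ → ℝ),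
      Tendsto A atTop (𝓝 1) →
      (∀ n, ∀ z ∈ C, ∃ u ∈ C, (A n).mulVec ((exp (tt n • M)).mulVec z) = c n • u) →
      ∀ σ : ℝ, (∃ᶠ n in atTop, 0 < σ * c n) → ∀ z ∈ C, ∀ r : ℕ → ℝ, (∀ n, 0 < r n) →
      ∀ u, Tendsto (fun n => r n • (exp (tt n • M)).mulVec z) atTop (𝓝 u) →
      σ • u ∈ closure C := by
    intro A c tt hAt hm σ hσ z hz r hr u hu
    have hconv2 : Tendsto (fun n => σ • (A n).mulVec (r n • (exp (tt n • M)).mulVec z))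
        atTop (𝓝 (σ • u)) := (mulVec_tendsto hAt hu).const_smul σ
    refine mem_closure_of_frequently_of_tendsto (hσ.mono fun n hn => ?_) hconv2
    obtain ⟨v, hvC, hvE⟩ := hm n z hz
    rw [Matrix.mulVec_smul, hvE, smul_smul, smul_smul]
    exact hcone v hvC _ (by nlinarith [hr n])
  -- sign dichotomies
  have hsg : ∀ c : ℕ → ℝ, (∀ n, c n ≠ 0) →
      (∃ᶠ n in atTop, 0 < 1 * c n) ∨ (∃ᶠ n in atTop, 0 < (-1) * c n) := by
    intro c hc
    by_cases h : ∃ᶠ n in atTop, 0 < c n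
    · exact Or.inl (h.mono fun n hn => by linarith)
    · rw [Filter.not_frequently] at h
      refine Or.inr (h.mono fun n hn => ?_).frequently
      have := lt_of_le_of_ne (not_lt.mp hn) (hc n)
      linarith
  have hsgP := hsg cP hcP
  have hsgN := hsg cN hcN
  have htPtop : Tendsto tP atTop atTop :=
    tendsto_atTop_mono (fun n => (htP n).le) tendsto_natCast_atTop_atTop
  have htNbot : Tendsto tN atTop atBot :=
    tendsto_atBot_mono (fun n => (htN n).le)
      (tendsto_neg_atBot_iff.mpr tendsto_natCast_atTop_atTop)
  have htPpos : ∀ n, (0:ℝ) < tP n := fun n => lt_of_le_of_lt (Nat.cast_nonneg n) (htP n)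
  have htNneg : ∀ n, tN n < 0 := fun n =>
    lt_of_lt_of_le (htN n) (by simp [Nat.cast_nonneg n])
  -- the finite-level Jordan argument
  have hjordan : ∀ (A : ℕ → Matrix (Fin d) (Fin d) ℝ) (c tt : ℕ → ℝ),
      Tendsto A atTop (𝓝 1) →
      (∀ n, ∀ z ∈ C, ∃ u ∈ C, (A n).mulVec ((exp (tt n • M)).mulVec z) = c n • u) →
      ∀ z ∈ C, ∀ (l : ℝ) (w : Fin d → ℝ), M.mulVec z = l • z + w → M.mulVec w = l • w →
      ∀ ε : ℝ,
      (∃ᶠ n in atTop, c n < 0 ∧ ∀ k : ℕ, z + (ε * ((k:ℝ)+1) - tt n) • w ∈ C) →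
      (-ε) • w ∈ closure C := by
    intro A c tt hAt hm z hz l w hMz hMw ε hfreq
    have hstep : ∀ n, (c n < 0 ∧ ∀ k : ℕ, z + (ε * ((k:ℝ)+1) - tt n) • w ∈ C) →
        (-ε) • (A n).mulVec w ∈ closure C := by
      rintro n ⟨hcn, hk⟩
      have hinC : ∀ k : ℕ, -((A n).mulVec (z + (ε * ((k:ℝ)+1)) • w)) ∈ C := by
        intro k
        have hzs := hk k
        have hMzs : M.mulVec (z + (ε * ((k:ℝ)+1) - tt n) • w)
            = l • (z + (ε * ((k:ℝ)+1) - tt n) • w) + w := by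
          rw [Matrix.mulVec_add, Matrix.mulVec_smul, hMz, hMw]; module
        have hflow := flow_jordan (M := M) hMzs hMw (tt n)
        obtain ⟨u, huC, huE⟩ := hm n _ hzs
        rw [hflow] at huE
        have hcomb : Real.exp (l * tt n) • (z + (ε * ((k:ℝ)+1) - tt n) • w)
            + (tt n * Real.exp (l * tt n)) • w
            = Real.exp (l * tt n) • (z + (ε * ((k:ℝ)+1)) • w) := by module
        rw [hcomb, Matrix.mulVec_smul] at huE
        have hepos := Real.exp_pos (l * tt n)
        have hX : (A n).mulVec (z + (ε * ((k:ℝ)+1)) • w)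
            = ((Real.exp (l * tt n))⁻¹ * c n) • u := by
          have h2 := congrArg (fun v => (Real.exp (l * tt n))⁻¹ • v) huE
          simp only [smul_smul, inv_mul_cancel₀ hepos.ne', one_smul] at h2
          exact h2
        rw [hX, ← neg_smul]
        refine hcone u huC _ ?_
        have h3 : (Real.exp (l * tt n))⁻¹ * c n < 0 :=
          mul_neg_of_pos_of_neg (inv_pos.mpr hepos) hcn
        linarith
      have heqk : ∀ k : ℕ, (1/((k:ℝ)+1)) • -((A n).mulVec (z + (ε * ((k:ℝ)+1)) • w))
          = -((1/((k:ℝ)+1)) • (A n).mulVec z) + (-ε) • (A n).mulVec w := by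
        intro k
        have hk0 : ((k:ℝ)+1) ≠ 0 := by positivity
        rw [Matrix.mulVec_add, Matrix.mulVec_smul]
        match_scalars <;> field_simp
      have htendk : Tendsto
          (fun k : ℕ => (1/((k:ℝ)+1)) • -((A n).mulVec (z + (ε * ((k:ℝ)+1)) • w)))
          atTop (𝓝 ((-ε) • (A n).mulVec w)) := by
        simp only [heqk]
        have h0 := (((tendsto_one_div_add_atTop_nhds_zero_nat (𝕜 := ℝ)).smul_const
          ((A n).mulVec z)).neg).add_const ((-ε) • (A n).mulVec w)
        simpa using h0
      exact mem_closure_of_tendsto htendk (Filter.Eventually.of_forall fun k =>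
        hcone _ (hinC k) _ (by positivity))
    have htendn : Tendsto (fun n => (-ε) • (A n).mulVec w) atTop (𝓝 ((-ε) • w)) :=
      (mulVec_tendsto hAt tendsto_const_nhds).const_smul _
    exact isClosed_closure.mem_of_frequently_of_tendsto (hfreq.mono hstep) htendn
  -- orbits stay in the cone
  have key : ∀ τ : ℝ, ∀ z ∈ C, (exp (τ • M)).mulVec z ∈ C := by
    intro τ z hz
    have hz0 : z ≠ 0 := fun h => h0C (h ▸ hz)
    rcases trichotomy hlin hz0 with ⟨l, hMz⟩ |
      ⟨l, m, p, q, hlm, hzpq, hMp, hMq, hp0, hq0⟩ | ⟨l, w, hw0, hMz, hMw⟩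
    · rw [flow_eigen hMz]
      exact hcone z hz _ (Real.exp_pos _)
    · -- split case
      subst hzpq
      -- limit of the rescaled orbit at +∞ is the top eigencomponent
      have hqlP : ∀ p' q' : Fin d → ℝ, p' + q' ∈ C → M.mulVec p' = l • p' →
          M.mulVec q' = m • q' → ∀ σ : ℝ, (∃ᶠ n in atTop, 0 < σ * cP n) →
          σ • q' ∈ closure C := by
        intro p' q' hC' h1 h2 σ hσ
        refine hlim AP cP tP hAPt hmasterP σ hσ _ hC' _ (fun n => Real.exp_pos (-(m * tP n))) q' ?_
        have heq : ∀ n, Real.exp (-(m * tP n)) • (exp (tP n • M)).mulVec (p' + q')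
            = Real.exp ((l - m) * tP n) • p' + q' := by
          intro n
          rw [Matrix.mulVec_add, flow_eigen h1, flow_eigen h2, smul_add, smul_smul, smul_smul,
            ← Real.exp_add, ← Real.exp_add]
          have e1 : -(m * tP n) + l * tP n = (l - m) * tP n := by ring
          have e2 : -(m * tP n) + m * tP n = 0 := by ring
          rw [e1, e2, Real.exp_zero, one_smul]
        simp only [heq]
        have h3 : Tendsto (fun n => (l - m) * tP n) atTop atBot :=
          (tendsto_const_mul_atBot_of_neg (by linarith)).mpr htPtop
        have h4 := Real.tendsto_exp_atBot.comp h3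
        have h5 := (h4.smul_const p').add_const q'
        simpa using h5
      -- limit of the rescaled orbit at -∞ is the bottom eigencomponent
      have hplN : ∀ p' q' : Fin d → ℝ, p' + q' ∈ C → M.mulVec p' = l • p' →
          M.mulVec q' = m • q' → ∀ σ : ℝ, (∃ᶠ n in atTop, 0 < σ * cN n) →
          σ • p' ∈ closure C := by
        intro p' q' hC' h1 h2 σ hσ
        refine hlim AN cN tN hANt hmasterN σ hσ _ hC' _ (fun n => Real.exp_pos (-(l * tN n))) p' ?_
        have heq : ∀ n, Real.exp (-(l * tN n)) • (exp (tN n • M)).mulVec (p' + q')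
            = p' + Real.exp ((m - l) * tN n) • q' := by
          intro n
          rw [Matrix.mulVec_add, flow_eigen h1, flow_eigen h2, smul_add, smul_smul, smul_smul,
            ← Real.exp_add, ← Real.exp_add]
          have e1 : -(l * tN n) + l * tN n = 0 := by ring
          have e2 : -(l * tN n) + m * tN n = (m - l) * tN n := by ring
          rw [e1, e2, Real.exp_zero, one_smul]
        simp only [heq]
        have h3 : Tendsto (fun n => (m - l) * tN n) atTop atBot :=
          (tendsto_const_mul_atBot_of_pos (by linarith)).mpr htNbot
        have h4 := Real.tendsto_exp_atBot.comp h3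
        have h5 := (h4.smul_const q').const_add p'
        simpa using h5
      have hq' : q ∈ closure C := by
        rcases hsgP with hpos | hneg
        · simpa using hqlP p q hz hMp hMq 1 hpos
        · have h1 : -q ∈ closure C := by simpa using hqlP p q hz hMp hMq (-1) hneg
          have hpq' : p + -q ∈ C := by
            have h2 := cone_comb_mem hopen hconv hcone one_pos
              (by norm_num : (0:ℝ) ≤ 2) hz h1
            have h3 : (1:ℝ) • (p + q) + (2:ℝ) • (-q) = p + -q := by module
            rwa [h3] at h2
          have h4 : q ∈ closure C := by
            have h5 := hqlP p (-q) hpq' hMp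
              (by rw [Matrix.mulVec_neg, hMq]; module) (-1) hneg
            simpa using h5
          exact absurd (cone_opp_eq_zero hsep h4 h1) hq0
      have hp' : p ∈ closure C := by
        rcases hsgN with hpos | hneg
        · simpa using hplN p q hz hMp hMq 1 hpos
        · have h1 : -p ∈ closure C := by simpa using hplN p q hz hMp hMq (-1) hneg
          have hpq' : -p + q ∈ C := by
            have h2 := cone_comb_mem hopen hconv hcone one_pos
              (by norm_num : (0:ℝ) ≤ 2) hz h1
            have h3 : (1:ℝ) • (p + q) + (2:ℝ) • (-p) = -p + q := by module
            rwa [h3] at h2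
          have h4 : p ∈ closure C := by
            have h5 := hplN (-p) q hpq'
              (by rw [Matrix.mulVec_neg, hMp]; module) hMq (-1) hneg
            simpa using h5
          exact absurd (cone_opp_eq_zero hsep h4 h1) hp0
      have hflowz : (exp (τ • M)).mulVec (p + q)
          = Real.exp (l * τ) • p + Real.exp (m * τ) • q := by
        rw [Matrix.mulVec_add, flow_eigen hMp, flow_eigen hMq]
      rw [hflowz]
      rcases le_or_gt 0 τ with hτ | hτ
      · have hco : Real.exp (l*τ) • p + Real.exp (m*τ) • q
            = Real.exp (l*τ) • (p + q) + (Real.exp (m*τ) - Real.exp (l*τ)) • q := by module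
        rw [hco]
        refine cone_comb_mem hopen hconv hcone (Real.exp_pos _) ?_ hz hq'
        have h6 := Real.exp_le_exp.mpr (mul_le_mul_of_nonneg_right hlm.le hτ)
        linarith
      · have hco : Real.exp (l*τ) • p + Real.exp (m*τ) • q
            = Real.exp (m*τ) • (p + q) + (Real.exp (l*τ) - Real.exp (m*τ)) • p := by module
        rw [hco]
        refine cone_comb_mem hopen hconv hcone (Real.exp_pos _) ?_ hz hp'
        have h6 := Real.exp_le_exp.mpr (mul_le_mul_of_nonpos_right hlm.le hτ.le)
        linarith
    · -- Jordan case: impossible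
      exfalso
      have hwP : ∀ σ : ℝ, (∃ᶠ n in atTop, 0 < σ * cP n) → σ • w ∈ closure C := by
        intro σ hσ
        refine hlim AP cP tP hAPt hmasterP σ hσ z hz
          (fun n => Real.exp (-(l * tP n)) * (tP n)⁻¹)
          (fun n => mul_pos (Real.exp_pos _) (inv_pos.mpr (htPpos n))) w ?_
        have heq : ∀ n, (Real.exp (-(l * tP n)) * (tP n)⁻¹) • (exp (tP n • M)).mulVec z
            = (tP n)⁻¹ • z + w := by
          intro n
          rw [flow_jordan (M := M) hMz hMw, smul_add, smul_smul, smul_smul]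
          have he : Real.exp (-(l * tP n)) * Real.exp (l * tP n) = 1 := by
            rw [← Real.exp_add]; simp
          have c1 : Real.exp (-(l * tP n)) * (tP n)⁻¹ * Real.exp (l * tP n) = (tP n)⁻¹ := by
            rw [mul_right_comm, he, one_mul]
          have c2 : Real.exp (-(l * tP n)) * (tP n)⁻¹ * (tP n * Real.exp (l * tP n)) = 1 := by
            have h7 : Real.exp (-(l * tP n)) * (tP n)⁻¹ * (tP n * Real.exp (l * tP n))
                = (Real.exp (-(l * tP n)) * Real.exp (l * tP n)) * ((tP n)⁻¹ * tP n) := by ring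
            rw [h7, he, inv_mul_cancel₀ (htPpos n).ne', mul_one]
          rw [c1, c2, one_smul]
        simp only [heq]
        have h0 := ((tendsto_inv_atTop_zero.comp htPtop).smul_const z).add_const w
        simpa using h0
      have hwN : ∀ σ : ℝ, (∃ᶠ n in atTop, 0 < σ * cN n) → σ • (-w) ∈ closure C := by
        intro σ hσ
        refine hlim AN cN tN hANt hmasterN σ hσ z hz
          (fun n => Real.exp (-(l * tN n)) * (-(tN n))⁻¹)
          (fun n => mul_pos (Real.exp_pos _) (inv_pos.mpr (by linarith [htNneg n]))) (-w) ?_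
        have heq : ∀ n, (Real.exp (-(l * tN n)) * (-(tN n))⁻¹) • (exp (tN n • M)).mulVec z
            = (-(tN n))⁻¹ • z + -w := by
          intro n
          rw [flow_jordan (M := M) hMz hMw, smul_add, smul_smul, smul_smul]
          have he : Real.exp (-(l * tN n)) * Real.exp (l * tN n) = 1 := by
            rw [← Real.exp_add]; simp
          have c1 : Real.exp (-(l * tN n)) * (-(tN n))⁻¹ * Real.exp (l * tN n) = (-(tN n))⁻¹ := by
            rw [mul_right_comm, he, one_mul]
          have hn0 : -(tN n) ≠ 0 := by linarith [htNneg n]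
          have c2 : Real.exp (-(l * tN n)) * (-(tN n))⁻¹ * (tN n * Real.exp (l * tN n)) = -1 := by
            have h7 : Real.exp (-(l * tN n)) * (-(tN n))⁻¹ * (tN n * Real.exp (l * tN n))
                = -((Real.exp (-(l * tN n)) * Real.exp (l * tN n)) * ((-(tN n))⁻¹ * -(tN n))) := by
              ring
            rw [h7, he, inv_mul_cancel₀ hn0, mul_one]
          rw [c1, c2]
          module
        simp only [heq]
        have htop : Tendsto (fun n => -(tN n)) atTop atTop := tendsto_neg_atTop_iff.mpr htNbot
        have h0 := ((tendsto_inv_atTop_zero.comp htop).smul_const z).add_const (-w)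
        simpa using h0
      rcases hsgP with hPp | hPn <;> rcases hsgN with hNp | hNn
      · have h1 : w ∈ closure C := by simpa using hwP 1 hPp
        have h2 : -w ∈ closure C := by simpa using hwN 1 hNp
        exact hw0 (cone_opp_eq_zero hsep h1 h2)
      · have h1 : w ∈ closure C := by simpa using hwP 1 hPp
        have h2 : -w ∈ closure C := by
          have hfr : ∃ᶠ n in atTop, cN n < 0 ∧
              ∀ k : ℕ, z + ((1:ℝ) * ((k:ℝ)+1) - tN n) • w ∈ C := by
            refine hNn.mono fun n hn => ⟨by linarith, fun k => ?_⟩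
            have hk0 : (0:ℝ) ≤ (k:ℝ) := Nat.cast_nonneg k
            have hcoef : (0:ℝ) < (1:ℝ) * ((k:ℝ)+1) - tN n := by
              have := htNneg n; linarith
            have h3 := cone_comb_mem hopen hconv hcone one_pos hcoef.le hz h1
            rwa [one_smul] at h3
          have h4 := hjordan AN cN tN hANt hmasterN z hz l w hMz hMw 1 hfr
          simpa using h4
        exact hw0 (cone_opp_eq_zero hsep h1 h2)
      · have h1 : -w ∈ closure C := by simpa using hwP (-1) hPn
        have h2 : w ∈ closure C := by
          have hfr : ∃ᶠ n in atTop, cP n < 0 ∧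
              ∀ k : ℕ, z + ((-1:ℝ) * ((k:ℝ)+1) - tP n) • w ∈ C := by
            refine hPn.mono fun n hn => ⟨by linarith, fun k => ?_⟩
            have hk0 : (0:ℝ) ≤ (k:ℝ) := Nat.cast_nonneg k
            have hcoef : (0:ℝ) < (k:ℝ)+1 + tP n := by
              have := htPpos n; linarith
            have h3 := cone_comb_mem hopen hconv hcone one_pos hcoef.le hz h1
            have h5 : (1:ℝ) • z + ((k:ℝ)+1 + tP n) • (-w)
                = z + ((-1:ℝ) * ((k:ℝ)+1) - tP n) • w := by module
            rwa [h5] at h3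
          have h4 := hjordan AP cP tP hAPt hmasterP z hz l w hMz hMw (-1) hfr
          simpa using h4
        exact hw0 (cone_opp_eq_zero hsep h2 h1)
      · have h1 : -w ∈ closure C := by simpa using hwP (-1) hPn
        have h2 : w ∈ closure C := by simpa using hwN (-1) hNn
        exact hw0 (cone_opp_eq_zero hsep h2 h1)
  intro t
  ext u
  constructor
  · rintro ⟨x, hx, rfl⟩
    exact key t x hx
  · intro hu
    refine ⟨(exp ((-t) • M)).mulVec u, key (-t) u hu, ?_⟩
    rw [Matrix.mulVec_mulVec, myexp_mul_exp_neg, Matrix.one_mulVec]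
end

section
/- Let N be a nonzero real d×d matrix with N² = 0 (so that t ↦ I + tN is a nontrivial parabolic linear flow). Then there is no properly convex open cone C ⊆ ℝ^d such that (I + tN)·C = C for all t ∈ ℝ. In other words, a parabolic linear flow preserves no properly convex domain. -/
/-- A nontrivial parabolic linear flow `t ↦ I + tN` (with `N ≠ 0`, `N² = 0`)
preserves no properly convex open cone. -/
theorem parabolic_flow_preserves_no_properly_convex_cone
    (d : ℕ) (N : Matrix (Fin d) (Fin d) ℝ) (hN : N ≠ 0) (hN2 : N ^ 2 = 0) :
    ¬ ∃ C : Set (Fin d → ℝ), IsProperlyConvexOpenCone d C ∧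
        ∀ t : ℝ, Matrix.mulVec ((1 : Matrix (Fin d) (Fin d) ℝ) + t • N) '' C = C := by
  rintro ⟨C, ⟨⟨x₀, hx₀⟩, hopen, hconv, hcone, hproper⟩, hinv⟩
  -- Step 1: N annihilates every point of C.
  have key : ∀ x ∈ C, N.mulVec x = 0 := by
    intro x hx
    have hmem : ∀ t : ℝ, x + t • N.mulVec x ∈ C := by
      intro t
      have h : Matrix.mulVec ((1 : Matrix (Fin d) (Fin d) ℝ) + t • N) x ∈ C := by
        rw [← hinv t]; exact Set.mem_image_of_mem _ hx
      rwa [Matrix.add_mulVec, Matrix.one_mulVec, Matrix.smul_mulVec] at h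
    have hpos : ∀ t : ℝ, 0 < t → (1 / t) • x + N.mulVec x ∈ C := by
      intro t ht
      have h := hcone _ (hmem t) (1 / t) (by positivity)
      rwa [smul_add, smul_smul, one_div_mul_cancel ht.ne', one_smul] at h
    have hneg : ∀ t : ℝ, 0 < t → (1 / t) • x + -N.mulVec x ∈ C := by
      intro t ht
      have h := hcone _ (hmem (-t)) (1 / t) (by positivity)
      have he : (1 / t) * -t = -1 := by field_simp
      rwa [smul_add, smul_smul, he, neg_smul, one_smul] at h
    have htend : Filter.Tendsto (fun n : ℕ => (1 / ((n : ℝ) + 1))) Filter.atTop (nhds 0) :=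
      tendsto_one_div_add_atTop_nhds_zero_nat
    have h1 : N.mulVec x ∈ closure C := by
      have hT : Filter.Tendsto (fun n : ℕ => (1 / ((n : ℝ) + 1)) • x + N.mulVec x)
          Filter.atTop (nhds (N.mulVec x)) := by
        have := (htend.smul_const x).add_const (N.mulVec x)
        simpa using this
      exact mem_closure_of_tendsto hT
        (Filter.Eventually.of_forall fun n => hpos _ (by positivity))
    have h2 : N.mulVec x ∈ -(closure C) := by
      rw [Set.mem_neg]
      have hT : Filter.Tendsto (fun n : ℕ => (1 / ((n : ℝ) + 1)) • x + -N.mulVec x)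
          Filter.atTop (nhds (-N.mulVec x)) := by
        have := (htend.smul_const x).add_const (-N.mulVec x)
        simpa using this
      exact mem_closure_of_tendsto hT
        (Filter.Eventually.of_forall fun n => hneg _ (by positivity))
    have h0 : N.mulVec x ∈ ({0} : Set (Fin d → ℝ)) := by
      rw [← hproper]; exact ⟨h1, h2⟩
    simpa using h0
  -- Step 2: C open ⇒ N = 0.
  apply hN
  ext i j
  have hvT : ∀ v : Fin d → ℝ, Filter.Tendsto (fun δ : ℝ => x₀ + δ • v) (nhds 0) (nhds x₀) := by
    intro v
    have : Filter.Tendsto (fun δ : ℝ => x₀ + δ • v) (nhds 0) (nhds (x₀ + (0 : ℝ) • v)) := by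
      exact Filter.Tendsto.const_add _ ((Filter.tendsto_id).smul_const v)
    simpa using this
  set v : Fin d → ℝ := Pi.single j 1 with hv
  have hev : ∀ᶠ δ : ℝ in nhds 0, x₀ + δ • v ∈ C :=
    (hvT v).eventually (hopen.mem_nhds hx₀)
  rw [Metric.eventually_nhds_iff] at hev
  obtain ⟨ε, hε, hball⟩ := hev
  have hδ : dist (ε / 2) (0 : ℝ) < ε := by
    rw [Real.dist_eq, sub_zero, abs_of_pos (by positivity)]; linarith
  have hmem := hball hδ
  have h1 := key _ hmem
  have h2 := key _ hx₀
  have h3 : N.mulVec ((ε / 2) • v) = 0 := by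
    have : N.mulVec (x₀ + (ε / 2) • v) = N.mulVec x₀ + N.mulVec ((ε / 2) • v) := by
      rw [Matrix.mulVec_add]
    rw [h1, h2] at this
    simpa using this.symm
  have h4 : N.mulVec v = 0 := by
    rw [Matrix.mulVec_smul] at h3
    have hε2 : (ε / 2) ≠ 0 := by positivity
    exact (smul_eq_zero.mp h3).resolve_left hε2
  have := congrFun h4 i
  simpa [Matrix.mulVec_single, hv] using this
end

section
/- Let ℝ^d = A ⊕ B be a direct sum decomposition into nonzero linear subspaces, with projections π_A onto A and π_B onto B, and let Φ_t = π_A + e^t·π_B ∈ GL(d,ℝ) be the associated hyperbolic linear flow. If C ⊆ ℝ^d is a properly convex open cone with Φ_t·C = C for all t ∈ ℝ, then for every p ∈ C one has π_A(p) ∈ cl(C) and π_B(p) ∈ cl(C). In particular every p ∈ C is the sum of an element of A ∩ cl(C) and an element of B ∩ cl(C), so C is reducible. -/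
/-- If a properly convex open cone is preserved by the hyperbolic linear flow
`Φ_t = π_A + eᵗ·π_B` associated to a direct sum decomposition `ℝ^d = A ⊕ B`,
then for every `p ∈ C` the projections `π_A p` and `π_B p` lie in `cl C`;
in particular every `p ∈ C` is the sum of an element of `A ∩ cl C` and an
element of `B ∩ cl C`, so `C` is reducible. -/
theorem hyperbolic_flow_invariant_cone_is_reducible
    (d : ℕ) (A B : Submodule ℝ (Fin d → ℝ)) (hA : A ≠ ⊥) (hB : B ≠ ⊥)
    (hcompl : IsCompl A B)
    (pA pB : (Fin d → ℝ) →ₗ[ℝ] (Fin d → ℝ))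
    (hpA : ∀ x, pA x ∈ A) (hpB : ∀ x, pB x ∈ B)
    (hsum : ∀ x, pA x + pB x = x)
    (C : Set (Fin d → ℝ)) (hC : IsProperlyConvexOpenCone d C)
    (hflow : ∀ t : ℝ, (fun x => pA x + Real.exp t • pB x) '' C = C) :
    ∀ p ∈ C, (pA p ∈ closure C ∧ pB p ∈ closure C) ∧
      ∃ a ∈ (A : Set (Fin d → ℝ)) ∩ closure C,
        ∃ b ∈ (B : Set (Fin d → ℝ)) ∩ closure C, p = a + b := by
  obtain ⟨hne, hopen, hconv, hcone, hproper⟩ := hC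
  intro p hp
  have h1 : ∀ t : ℝ, pA p + Real.exp t • pB p ∈ C := by
    intro t
    rw [← hflow t]
    exact ⟨p, hp, rfl⟩
  have hApcl : pA p ∈ closure C := by
    have htend : Filter.Tendsto (fun t : ℝ => pA p + Real.exp t • pB p)
        Filter.atBot (nhds (pA p)) := by
      have h0 : Filter.Tendsto (fun t : ℝ => Real.exp t • pB p) Filter.atBot
          (nhds ((0:ℝ) • pB p)) := Real.tendsto_exp_atBot.smul_const _
      simpa using tendsto_const_nhds.add h0
    exact mem_closure_of_tendsto htend (Filter.Eventually.of_forall h1)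
  have hBpcl : pB p ∈ closure C := by
    have h2 : ∀ t : ℝ, Real.exp (-t) • pA p + pB p ∈ C := by
      intro t
      have hk := hcone _ (h1 t) (Real.exp (-t)) (Real.exp_pos _)
      have he : Real.exp (-t) • (pA p + Real.exp t • pB p)
          = Real.exp (-t) • pA p + pB p := by
        rw [smul_add, smul_smul, ← Real.exp_add]
        simp
      rwa [he] at hk
    have htend : Filter.Tendsto (fun t : ℝ => Real.exp (-t) • pA p + pB p)
        Filter.atTop (nhds (pB p)) := by
      have h0 : Filter.Tendsto (fun t : ℝ => Real.exp (-t) • pA p) Filter.atTop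
          (nhds ((0:ℝ) • pA p)) :=
        (Real.tendsto_exp_atBot.comp Filter.tendsto_neg_atTop_atBot).smul_const _
      simpa using h0.add tendsto_const_nhds
    exact mem_closure_of_tendsto htend (Filter.Eventually.of_forall h2)
  exact ⟨⟨hApcl, hBpcl⟩, pA p, ⟨hpA p, hApcl⟩, pB p, ⟨hpB p, hBpcl⟩, (hsum p).symm⟩
end

section
/- Let C ⊆ ℝ^{n+1} be a properly convex open cone and let T ≤ GL(n+1,ℝ) be an abelian subgroup that is connected (as a subset of GL(n+1,ℝ)) and preserves C, such that the induced action of T on the rays of C is simply transitive: for all x, y ∈ C there exist g ∈ T and c > 0 with g·x = c·y, and every g ∈ T that satisfies g·x = c·x for some x ∈ C and some c > 0 is a scalar multiple of the identity. Then C is a simplicial cone: there is a basis v₀, …, vₙ of ℝ^{n+1} such that C = { t₀v₀ + ⋯ + tₙvₙ : t₀ > 0, …, tₙ > 0 }. Equivalently, the projective domain ℙ(C) is the interior of an n-simplex. -/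
namespace SimplicialAux

open Matrix Set

/-- An open nonempty set spans the whole space. -/
lemma span_eq_top_of_isOpen {E : Type*} [NormedAddCommGroup E] [NormedSpace ℝ E] {C : Set E}
    (hopen : IsOpen C) (hne : C.Nonempty) : Submodule.span ℝ C = ⊤ := by
  obtain ⟨x₀, hx₀⟩ := hne
  rw [eq_top_iff]
  rintro v -
  obtain ⟨ε, hε, hball⟩ := Metric.isOpen_iff.mp hopen x₀ hx₀
  set c : ℝ := ε / (2 * (‖v‖ + 1)) with hc
  have hc0 : 0 < c := by positivity
  have hmem : x₀ + c • v ∈ C := by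
    apply hball
    rw [Metric.mem_ball, dist_eq_norm, add_sub_cancel_left, norm_smul]
    have h1 : c * (‖v‖ + 1) = ε / 2 := by
      rw [hc]; field_simp
    have h2 : ‖c‖ * ‖v‖ ≤ c * (‖v‖ + 1) := by
      rw [Real.norm_eq_abs, abs_of_pos hc0]
      nlinarith [norm_nonneg v]
    linarith
  have h1 : c • v ∈ Submodule.span ℝ C := by
    have ha : x₀ + c • v ∈ Submodule.span ℝ C := Submodule.subset_span hmem
    have hb : x₀ ∈ Submodule.span ℝ C := Submodule.subset_span hx₀
    have := Submodule.sub_mem _ ha hb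
    simpa using this
  have h2 := Submodule.smul_mem _ c⁻¹ h1
  rwa [smul_smul, inv_mul_cancel₀ hc0.ne', one_smul] at h2

lemma zero_not_mem {n : ℕ} {C : Set (Fin (n + 1) → ℝ)}
    (hC : IsProperlyConvexOpenCone (n + 1) C) : (0 : Fin (n + 1) → ℝ) ∉ C := by
  obtain ⟨hne, hopen, hconv, hcone, hproper⟩ := hC
  intro h0
  set v : Fin (n + 1) → ℝ := Pi.single 0 1 with hv
  have hvne : v ≠ 0 := by
    intro h
    have := congrFun h 0
    simp [hv] at this
  obtain ⟨ε, hε, hball⟩ := Metric.isOpen_iff.mp hopen 0 h0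
  set c : ℝ := ε / (2 * (‖v‖ + 1)) with hc
  have hc0 : 0 < c := by positivity
  have hnorm : ‖c • v‖ < ε := by
    rw [norm_smul]
    have h1 : c * (‖v‖ + 1) = ε / 2 := by rw [hc]; field_simp
    have h2 : ‖c‖ * ‖v‖ ≤ c * (‖v‖ + 1) := by
      rw [Real.norm_eq_abs, abs_of_pos hc0]
      nlinarith [norm_nonneg v]
    linarith
  have hmem : c • v ∈ C := by
    apply hball; rw [Metric.mem_ball, dist_eq_norm, sub_zero]; exact hnorm
  have hmem' : -(c • v) ∈ C := by
    apply hball; rw [Metric.mem_ball, dist_eq_norm, sub_zero, norm_neg]; exact hnorm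
  have h1 : c • v ∈ closure C ∩ (-(closure C)) := by
    refine ⟨subset_closure hmem, ?_⟩
    rw [Set.mem_neg]
    exact subset_closure hmem'
  rw [hproper, Set.mem_singleton_iff] at h1
  exact hvne (by simpa [smul_eq_zero, hc0.ne'] using h1)

/-- If the evaluation at `x₀` of a commuting matrix algebra hits every element of an
open nonempty set `C`, then evaluation at `x₀` is injective on the algebra. -/
lemma ev_ker {n : ℕ} {C : Set (Fin (n + 1) → ℝ)} (hopen : IsOpen C) (hne : C.Nonempty)
    (A : Subalgebra ℝ (Matrix (Fin (n + 1)) (Fin (n + 1)) ℝ))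
    (hcomm : ∀ a b : ↥A, a * b = b * a) (x₀ : Fin (n + 1) → ℝ)
    (hsurjC : ∀ y ∈ C, ∃ a : ↥A, (a : Matrix (Fin (n + 1)) (Fin (n + 1)) ℝ).mulVec x₀ = y) :
    ∀ a : ↥A, (a : Matrix (Fin (n + 1)) (Fin (n + 1)) ℝ).mulVec x₀ = 0 →
      (a : Matrix (Fin (n + 1)) (Fin (n + 1)) ℝ) = 0 := by
  intro a ha
  have hC0 : ∀ y ∈ C, (a : Matrix (Fin (n + 1)) (Fin (n + 1)) ℝ).mulVec y = 0 := by
    intro y hy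
    obtain ⟨b, hb⟩ := hsurjC y hy
    have h1 : (a : Matrix (Fin (n + 1)) (Fin (n + 1)) ℝ).mulVec y
        = ((a * b : ↥A) : Matrix (Fin (n + 1)) (Fin (n + 1)) ℝ).mulVec x₀ := by
      rw [← hb, Subalgebra.coe_mul, ← Matrix.mulVec_mulVec]
    rw [h1, hcomm a b, Subalgebra.coe_mul, ← Matrix.mulVec_mulVec, ha, Matrix.mulVec_zero]
  have hker : C ⊆ (LinearMap.ker (Matrix.mulVecLin (a : Matrix (Fin (n + 1)) (Fin (n + 1)) ℝ)) :
      Set (Fin (n + 1) → ℝ)) := by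
    intro y hy
    simpa [Matrix.mulVecLin] using hC0 y hy
  have hspan := span_eq_top_of_isOpen hopen hne
  have htop : ∀ y, (a : Matrix (Fin (n + 1)) (Fin (n + 1)) ℝ).mulVec y = 0 := by
    intro y
    have : (⊤ : Submodule ℝ (Fin (n + 1) → ℝ)) ≤
        LinearMap.ker (Matrix.mulVecLin (a : Matrix (Fin (n + 1)) (Fin (n + 1)) ℝ)) := by
      rw [← hspan]
      exact Submodule.span_le.mpr hker
    have := this (Submodule.mem_top : y ∈ ⊤)
    simpa [Matrix.mulVecLin] using this
  ext i j
  have := congrFun (htop (Pi.single j 1)) i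
  rw [Matrix.mulVec_single] at this
  simpa using this

section Rot

variable {K : Type*} [Field K] [Algebra ℝ K]

/-- "rotation" elements in a field containing a square root of `-1`. -/
noncomputable def rot (v : K) (θ : ℝ) : K :=
  algebraMap ℝ K (Real.cos θ) + algebraMap ℝ K (Real.sin θ) * v

lemma rot_add {v : K} (hv : v * v = -1) (a b : ℝ) :
    rot v (a + b) = rot v a * rot v b := by
  unfold rot
  rw [Real.cos_add, Real.sin_add, _root_.map_sub, _root_.map_add, _root_.map_mul, _root_.map_mul, _root_.map_mul, _root_.map_mul]
  linear_combination (-(algebraMap ℝ K (Real.sin a) * algebraMap ℝ K (Real.sin b))) * hv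

lemma rot_zero (v : K) : rot v 0 = 1 := by
  simp [rot]

lemma rot_nsmul {v : K} (hv : v * v = -1) (θ : ℝ) : ∀ k : ℕ, rot v (k * θ) = (rot v θ) ^ k := by
  intro k
  induction k with
  | zero => simpa using rot_zero v
  | succ k ih =>
    have : ((k : ℝ) + 1) * θ = (k : ℝ) * θ + θ := by ring
    rw [Nat.cast_succ, this, rot_add hv, ih, pow_succ]

lemma rot_pi (v : K) : rot v Real.pi = -1 := by
  simp [rot]

end Rot

set_option maxHeartbeats 1000000 in
/-- The core result, stated abstractly. -/
theorem absCore {B : Type} [CommRing B] [Algebra ℝ B]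
    (n : ℕ) (C : Set (Fin (n + 1) → ℝ)) (hC : IsProperlyConvexOpenCone (n + 1) C)
    (ev0 : B → (Fin (n + 1) → ℝ))
    (hadd0 : ∀ a b : B, ev0 (a + b) = ev0 a + ev0 b)
    (hsmul0 : ∀ (r : ℝ) (a : B), ev0 (algebraMap ℝ B r * a) = r • ev0 a)
    (hinj0 : ∀ b : B, ev0 b = 0 → b = 0)
    (hsurjC0 : ∀ y ∈ C, ∃ b : B, ev0 b = y)
    (hone0 : ev0 1 ∈ C)
    (hmul0 : ∀ p q : B, ev0 p ∈ C → ev0 q ∈ C → ev0 (p * q) ∈ C)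
    (hqinv0 : ∀ p : B, ev0 p ∈ C → ∃ q : B, ev0 q ∈ C ∧ p * q = 1) :
    ∃ v : Module.Basis (Fin (n + 1)) ℝ (Fin (n + 1) → ℝ),
      C = {x | ∃ t : Fin (n + 1) → ℝ, (∀ i, 0 < t i) ∧ x = ∑ i, t i • v i} := by
  classical
  let ev : B →ₗ[ℝ] (Fin (n + 1) → ℝ) :=
    { toFun := ev0
      map_add' := hadd0
      map_smul' := fun r a => by
        show ev0 (r • a) = r • ev0 a
        rw [Algebra.smul_def]
        exact hsmul0 r a }
  have hinj : ∀ b : B, ev b = 0 → b = 0 := hinj0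
  have hsurjC : ∀ y ∈ C, ∃ b : B, ev b = y := hsurjC0
  have hone : ev 1 ∈ C := hone0
  have hmul : ∀ p q : B, ev p ∈ C → ev q ∈ C → ev (p * q) ∈ C := hmul0
  have hqinv : ∀ p : B, ev p ∈ C → ∃ q : B, ev q ∈ C ∧ p * q = 1 := hqinv0
  clear hinj0 hsurjC0 hone0 hmul0 hqinv0
  obtain ⟨hne, hopen, hconv, hcone, hproper⟩ := id hC
  have hx0ne : ev 1 ≠ 0 := fun h => SimplicialAux.zero_not_mem hC (h ▸ hone)
  have hevinj : Function.Injective ev := by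
    intro a b hab
    have : a - b = 0 := hinj _ (by rw [_root_.map_sub, hab, sub_self])
    exact sub_eq_zero.mp this
  have hevsurj : Function.Surjective ev := by
    intro y
    have hspan := SimplicialAux.span_eq_top_of_isOpen hopen hne
    have h1 : Submodule.span ℝ C ≤ LinearMap.range ev := by
      rw [Submodule.span_le]
      intro z hz
      obtain ⟨a, ha⟩ := hsurjC z hz
      exact ⟨a, ha⟩
    exact h1 (by rw [hspan]; trivial)
  let e : B ≃ₗ[ℝ] (Fin (n + 1) → ℝ) := LinearEquiv.ofBijective ev ⟨hevinj, hevsurj⟩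
  have he : ∀ a : B, e a = ev a := fun _ => rfl
  haveI : Module.Finite ℝ B := Module.Finite.equiv e.symm
  -- the positive set P
  set P : Set B := ev ⁻¹' C with hPdef
  have hP1 : (1 : B) ∈ P := hone
  have hPmul : ∀ p ∈ P, ∀ q ∈ P, p * q ∈ P := fun p hp q hq => hmul p q hp hq
  have hPpow : ∀ p ∈ P, ∀ k : ℕ, p ^ k ∈ P := by
    intro p hp k
    induction k with
    | zero => simpa using hP1
    | succ k ih => rw [pow_succ]; exact hPmul _ ih _ hp
  have hPconv : Convex ℝ P := hconv.linear_preimage ev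
  have hPinv : ∀ p ∈ P, ∃ q ∈ P, p * q = 1 := fun p hp => by
    obtain ⟨q, hq1, hq2⟩ := hqinv p hp
    exact ⟨q, hq1, hq2⟩
  have hPunit : ∀ p ∈ P, IsUnit p := fun p hp => by
    obtain ⟨q, _, hpq⟩ := hPinv p hp
    exact IsUnit.of_mul_eq_one q hpq
  haveI : Nontrivial B := by
    refine nontrivial_of_ne 1 0 fun h => hx0ne ?_
    rw [h, _root_.map_zero]
  -- B is reduced
  haveI : IsReduced B := by
    rw [isReduced_iff_pow_one_lt 2 one_lt_two]
    intro N hN2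
    by_contra hN0
    have hNN : N * N = 0 := by rwa [pow_two] at hN2
    have hw : ev N ≠ 0 := fun h => hN0 (hinj N h)
    have hcontV : Continuous fun s : ℝ => ev 1 + s • ev N :=
      continuous_const.add (continuous_id.smul continuous_const)
    have hnbV : ∀ᶠ s in nhds (0 : ℝ), ev 1 + s • ev N ∈ C := by
      refine hcontV.continuousAt.preimage_mem_nhds ?_
      refine hopen.mem_nhds ?_
      simpa using hone
    have hnb : ∀ᶠ s in nhds (0 : ℝ), (1 : B) + s • N ∈ P := by
      refine hnbV.mono fun s hs => ?_
      show ev (1 + s • N) ∈ C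
      rw [_root_.map_add, _root_.map_smul]
      exact hs
    obtain ⟨δ, hδ, hδP⟩ := Metric.eventually_nhds_iff.mp hnb
    set ε : ℝ := δ / 2 with hεdef
    have hε : 0 < ε := by positivity
    have hpow : ∀ (s : ℝ) (k : ℕ), ((1 : B) + s • N) ^ k = 1 + ((k : ℝ) * s) • N := by
      intro s k
      induction k with
      | zero => simp
      | succ k ih =>
        rw [pow_succ, ih, mul_add, add_mul, add_mul, mul_one, one_mul, mul_one,
          smul_mul_smul_comm, hNN, smul_zero, add_zero, add_assoc, ← add_smul]
        congr 2
        push_cast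
        ring
    have hsmem : ∀ s : ℝ, |s| < δ → ∀ k : ℕ, (1 : B) + ((k : ℝ) * s) • N ∈ P := by
      intro s hs k
      have h1 : ((1 : B) + s • N) ^ k ∈ P := by
        refine hPpow _ ?_ k
        apply hδP
        rwa [Real.dist_eq, sub_zero]
      rwa [hpow] at h1
    have hclos : ∀ u : ℝ, u = 1 ∨ u = -1 → u • ev N ∈ closure C := by
      intro u hu
      have huδ : |u * ε| < δ := by
        have habs : |u| = 1 := by rcases hu with h | h <;> simp [h]
        rw [abs_mul, habs, one_mul, abs_of_pos hε, hεdef]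
        linarith
      have hmemk : ∀ k : ℕ, 0 < k → (1 / ((k : ℝ) * ε)) • ev 1 + u • ev N ∈ C := by
        intro k hk
        have h1 := hsmem (u * ε) huδ k
        have h2 : ev (1 + ((k : ℝ) * (u * ε)) • N) ∈ C := by
          have harg : ((k : ℝ) * (u * ε)) = ((k : ℝ) * (u * ε)) := rfl
          exact h1
        rw [_root_.map_add, _root_.map_smul] at h2
        have hkε : (0 : ℝ) < (k : ℝ) * ε := by
          have : (0 : ℝ) < (k : ℝ) := by exact_mod_cast hk
          positivity
        have h3 := hcone _ h2 (1 / ((k : ℝ) * ε)) (by positivity)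
        rw [smul_add, smul_smul] at h3
        have harith : 1 / ((k : ℝ) * ε) * ((k : ℝ) * (u * ε)) = u := by
          field_simp
        rwa [harith] at h3
      have hlim : Filter.Tendsto (fun k : ℕ => (1 / ((k : ℝ) * ε)) • ev 1 + u • ev N)
          Filter.atTop (nhds (u • ev N)) := by
        have h1 : Filter.Tendsto (fun k : ℕ => 1 / ((k : ℝ) * ε)) Filter.atTop (nhds 0) := by
          have h2 : Filter.Tendsto (fun k : ℕ => ((k : ℝ) * ε)) Filter.atTop Filter.atTop :=
            Filter.Tendsto.atTop_mul_const hε tendsto_natCast_atTop_atTop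
          have h3 := h2.inv_tendsto_atTop
          have h4 : (fun k : ℕ => ((k : ℝ) * ε))⁻¹ = fun k : ℕ => 1 / ((k : ℝ) * ε) := by
            funext k
            simp [one_div]
          rwa [h4] at h3
        have h2 := (h1.smul_const (ev 1)).add_const (u • ev N)
        simpa using h2
      refine mem_closure_of_tendsto hlim ?_
      filter_upwards [Filter.eventually_gt_atTop 0] with k hk
      exact hmemk k hk
    have h1 : ev N ∈ closure C := by simpa using hclos 1 (Or.inl rfl)
    have h2 : -ev N ∈ closure C := by simpa using hclos (-1) (Or.inr rfl)
    have h3 : ev N ∈ closure C ∩ (-(closure C)) := ⟨h1, by rwa [Set.mem_neg]⟩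
    rw [hproper, Set.mem_singleton_iff] at h3
    exact hw h3
  haveI : IsArtinian ℝ B := isArtinian_of_fg_of_artinian'
  haveI : IsArtinianRing B := isArtinian_of_tower ℝ inferInstance
  haveI : Finite {I : Ideal B | I.IsMaximal} := (IsArtinianRing.setOfPred_isMaximal_finite B).to_subtype
  letI : Fintype {I : Ideal B | I.IsMaximal} := Fintype.ofFinite _
  -- all residue fields are one-dimensional
  have hdim1 : ∀ I : {I : Ideal B | I.IsMaximal},
      Function.Bijective (algebraMap ℝ (B ⧸ (I : Ideal B))) := by
    intro I
    haveI hImax : (I : Ideal B).IsMaximal := I.2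
    letI : Field (B ⧸ (I : Ideal B)) := Ideal.Quotient.field _
    have hqinj : Function.Injective (algebraMap ℝ (B ⧸ (I : Ideal B))) :=
      (algebraMap ℝ _).injective
    haveI : FiniteDimensional ℝ (B ⧸ (I : Ideal B)) := inferInstance
    have hrank1 : Module.finrank ℝ (B ⧸ (I : Ideal B)) = 1 := by
      have hpos : 0 < Module.finrank ℝ (B ⧸ (I : Ideal B)) := Module.finrank_pos
      haveI : Algebra.IsAlgebraic ℝ (B ⧸ (I : Ideal B)) := Algebra.IsAlgebraic.of_finite ℝ _
      haveI : NoZeroSMulDivisors ℝ (B ⧸ (I : Ideal B)) :=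
        inferInstance
      let φ : (B ⧸ (I : Ideal B)) →ₐ[ℝ] ℂ := IsAlgClosed.lift
      have hφinj : Function.Injective φ := φ.toRingHom.injective
      have hle2 : Module.finrank ℝ (B ⧸ (I : Ideal B)) ≤ 2 := by
        have := LinearMap.finrank_le_finrank_of_injective (f := φ.toLinearMap) hφinj
        rwa [Complex.finrank_real_complex] at this
      by_contra hne1
      have h2 : Module.finrank ℝ (B ⧸ (I : Ideal B)) = 2 := by omega
      have hφsurj : Function.Surjective φ :=
        (LinearMap.injective_iff_surjective_of_finrank_eq_finrank
          (f := φ.toLinearMap) (by rw [h2, Complex.finrank_real_complex])).mp hφinj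
      let ψK := AlgEquiv.ofBijective φ ⟨hφinj, hφsurj⟩
      set v : (B ⧸ (I : Ideal B)) := ψK.symm Complex.I with hvdef
      have hv : v * v = -1 := by
        apply ψK.injective
        rw [_root_.map_mul, AlgEquiv.apply_symm_apply, Complex.I_mul_I, _root_.map_neg, _root_.map_one]
      obtain ⟨cc, hcc⟩ := Ideal.Quotient.mkₐ_surjective ℝ (I : Ideal B) v
      have hcontV : Continuous fun θ : ℝ => Real.cos θ • ev 1 + Real.sin θ • ev cc :=
        (Real.continuous_cos.smul continuous_const).add
          (Real.continuous_sin.smul continuous_const)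
      have hnbV : ∀ᶠ θ in nhds (0 : ℝ), Real.cos θ • ev 1 + Real.sin θ • ev cc ∈ C := by
        refine hcontV.continuousAt.preimage_mem_nhds ?_
        refine hopen.mem_nhds ?_
        simpa using hone
      have hnb : ∀ᶠ θ in nhds (0 : ℝ), Real.cos θ • (1 : B) + Real.sin θ • cc ∈ P := by
        refine hnbV.mono fun θ hθ => ?_
        show ev (Real.cos θ • (1 : B) + Real.sin θ • cc) ∈ C
        rw [_root_.map_add, _root_.map_smul, _root_.map_smul]
        exact hθ
      obtain ⟨δ, hδ, hδP⟩ := Metric.eventually_nhds_iff.mp hnb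
      set m : ℕ := ⌈Real.pi / δ⌉₊ + 1 with hm
      have hmR : ((⌈Real.pi / δ⌉₊ : ℝ) + 1) = (m : ℝ) := by rw [hm]; push_cast; ring
      have hmpos : (0 : ℝ) < (m : ℝ) := by rw [← hmR]; positivity
      set θ : ℝ := Real.pi / (m : ℝ) with hθdef
      have hθpos : 0 < θ := by rw [hθdef]; positivity
      have hθδ : θ < δ := by
        rw [hθdef, div_lt_iff₀ hmpos]
        have h1 : Real.pi / δ ≤ (⌈Real.pi / δ⌉₊ : ℝ) := Nat.le_ceil _
        have h2 : Real.pi / δ < (m : ℝ) := by rw [← hmR]; linarith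
        calc Real.pi = δ * (Real.pi / δ) := by field_simp
        _ < δ * (m : ℝ) := by exact mul_lt_mul_of_pos_left h2 hδ
      set p : B := Real.cos θ • (1 : B) + Real.sin θ • cc with hpdef
      have hpP : p ∈ P := hδP (by rw [Real.dist_eq, sub_zero, abs_of_pos hθpos]; exact hθδ)
      have hqP : p ^ m ∈ P := hPpow p hpP m
      have hπp : (Ideal.Quotient.mkₐ ℝ (I : Ideal B)) p = SimplicialAux.rot v θ := by
        rw [hpdef, _root_.map_add, _root_.map_smul, _root_.map_smul, _root_.map_one, hcc, SimplicialAux.rot,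
          Algebra.smul_def, Algebra.smul_def, mul_one]
      have hπq : (Ideal.Quotient.mkₐ ℝ (I : Ideal B)) (p ^ m) = -1 := by
        rw [_root_.map_pow, hπp, ← SimplicialAux.rot_nsmul hv θ m]
        have hmθ : (m : ℝ) * θ = Real.pi := by
          rw [hθdef]
          field_simp
        rw [hmθ, SimplicialAux.rot_pi]
      have hzP : (1 / 2 : ℝ) • (p ^ m) + (1 / 2 : ℝ) • (1 : B) ∈ P :=
        hPconv hqP hP1 (by norm_num) (by norm_num) (by norm_num)
      have hzunit := (hPunit _ hzP).map (Ideal.Quotient.mkₐ ℝ (I : Ideal B))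
      have hz0 : (Ideal.Quotient.mkₐ ℝ (I : Ideal B))
          ((1 / 2 : ℝ) • (p ^ m) + (1 / 2 : ℝ) • (1 : B)) = 0 := by
        rw [_root_.map_add, _root_.map_smul, _root_.map_smul, hπq, _root_.map_one, smul_neg, neg_add_cancel]
      rw [hz0] at hzunit
      exact not_isUnit_zero hzunit
    constructor
    · exact hqinj
    · exact (LinearMap.injective_iff_surjective_of_finrank_eq_finrank
        (f := Algebra.linearMap ℝ (B ⧸ (I : Ideal B)))
        (by rw [hrank1, Module.finrank_self])).mp hqinj
  -- the splitting into characters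
  let ψ₀ : B ≃+* ((I : {I : Ideal B | I.IsMaximal}) → B ⧸ (I : Ideal B)) :=
    (IsArtinianRing.equivPi B).toRingEquiv.trans
      (RingEquiv.piCongrLeft (fun I : {I : Ideal B | I.IsMaximal} => B ⧸ (I : Ideal B))
        ({ toFun := fun I : MaximalSpectrum B =>
              (⟨I.asIdeal, I.isMaximal⟩ : {I : Ideal B | I.IsMaximal}),
            invFun := fun I : {I : Ideal B | I.IsMaximal} => (⟨I.1, I.2⟩ : MaximalSpectrum B),
            left_inv := fun _ => rfl, right_inv := fun _ => rfl } :
          MaximalSpectrum B ≃ {I : Ideal B | I.IsMaximal}))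
  let ρ : ∀ I : {I : Ideal B | I.IsMaximal}, (B ⧸ (I : Ideal B)) ≃+* ℝ := fun I =>
    (RingEquiv.ofBijective (algebraMap ℝ (B ⧸ (I : Ideal B))) (hdim1 I)).symm
  let Ψ : B ≃+* ({I : Ideal B | I.IsMaximal} → ℝ) := ψ₀.trans (RingEquiv.piCongrRight ρ)
  have hRhom : ∀ (f : ℝ →+* ℝ) (r : ℝ), f r = r := fun f r => by
    rw [Subsingleton.elim f (RingHom.id ℝ)]; rfl
  let χ : {I : Ideal B | I.IsMaximal} → (B →+* ℝ) := fun I =>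
    (Pi.evalRingHom (fun _ : {I : Ideal B | I.IsMaximal} => ℝ) I).comp Ψ.toRingHom
  have hχdef : ∀ I a, χ I a = Ψ a I := fun _ _ => rfl
  have hχalg : ∀ I r, χ I (algebraMap ℝ B r) = r := fun I r =>
    hRhom ((χ I).comp (algebraMap ℝ B)) r
  have hχsmul : ∀ I (r : ℝ) (a : B), χ I (r • a) = r * χ I a := by
    intro I r a
    rw [Algebra.smul_def, _root_.map_mul, hχalg]
  let lmap : B →ₗ[ℝ] ({I : Ideal B | I.IsMaximal} → ℝ) :=
    { toFun := Ψ
      map_add' := fun a b => _root_.map_add Ψ a b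
      map_smul' := fun r a => funext fun I => by
        show Ψ (r • a) I = (r • (Ψ a : {I : Ideal B | I.IsMaximal} → ℝ)) I
        rw [Pi.smul_apply, smul_eq_mul, ← hχdef, ← hχdef, hχsmul] }
  let L : B ≃ₗ[ℝ] ({I : Ideal B | I.IsMaximal} → ℝ) :=
    LinearEquiv.ofBijective lmap (EquivLike.bijective Ψ)
  have hcard : Fintype.card {I : Ideal B | I.IsMaximal} = n + 1 := by
    have h3 := (L.symm.trans e).finrank_eq
    rwa [Module.finrank_fintype_fun_eq_card, Module.finrank_fintype_fun_eq_card,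
      Fintype.card_fin] at h3
  let σ : {I : Ideal B | I.IsMaximal} ≃ Fin (n + 1) := Fintype.equivFinOfCardEq hcard
  have hχne : ∀ p ∈ P, ∀ I, χ I p ≠ 0 := fun p hp I => ((hPunit p hp).map (χ I)).ne_zero
  have hχpos : ∀ p ∈ P, ∀ I, 0 < χ I p := by
    intro p hp I
    rcases lt_trichotomy (χ I p) 0 with hneg | hzero | hpos
    · exfalso
      set c := χ I p with hcdef
      set s : ℝ := c / (c - 1) with hsdef
      have hc1 : c - 1 < 0 := by linarith
      have hc1' : c - 1 ≠ 0 := ne_of_lt hc1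
      have hs0 : 0 < s := div_pos_of_neg_of_neg hneg hc1
      have hs1 : s < 1 := by
        have h1 : s - 1 = 1 / (c - 1) := by
          rw [hsdef]
          field_simp
          ring
        have h2 : 1 / (c - 1) < 0 := div_neg_of_pos_of_neg one_pos hc1
        linarith
      have hqmem : s • (1 : B) + (1 - s) • p ∈ P :=
        hPconv hP1 hp (le_of_lt hs0) (by linarith) (by ring)
      have h0 : χ I (s • (1 : B) + (1 - s) • p) = 0 := by
        rw [_root_.map_add, hχsmul, hχsmul, _root_.map_one, mul_one, ← hcdef, hsdef]
        field_simp
        ring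
      exact hχne _ hqmem I h0
    · exact absurd hzero (hχne p hp I)
    · exact hpos
  have hOunit : ∀ a : B, (∀ I, 0 < χ I a) → IsUnit a := by
    intro a ha
    set b : B := Ψ.symm (fun I => (Ψ a I)⁻¹) with hbdef
    have hab : a * b = 1 := by
      have h1 : Ψ (a * b) = 1 := by
        rw [_root_.map_mul, hbdef, RingEquiv.apply_symm_apply]
        funext I
        show Ψ a I * (Ψ a I)⁻¹ = 1
        refine mul_inv_cancel₀ ?_
        have h2 := ha I
        rw [hχdef] at h2
        exact ne_of_gt h2
      have h2 := congrArg Ψ.symm h1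
      rwa [RingEquiv.symm_apply_apply, _root_.map_one] at h2
    exact IsUnit.of_mul_eq_one _ hab
  have hOP : ∀ a : B, (∀ I, 0 < χ I a) → a ∈ P := by
    intro a₀ ha₀
    by_contra ha₀P
    set O : Set B := {a | ∀ I, 0 < χ I a} with hOdef
    have hO1 : (1 : B) ∈ O := fun I => by rw [_root_.map_one]; norm_num
    have hOconv : Convex ℝ O := by
      intro x hx y hy sa sb hsa hsb hsum
      intro I
      have hx' := hx I
      have hy' := hy I
      have heq : χ I (sa • x + sb • y) = sa * χ I x + sb * χ I y := by
        rw [_root_.map_add, hχsmul, hχsmul]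
      show 0 < χ I (sa • x + sb • y)
      rw [heq]
      rcases hsa.eq_or_lt with h | h
      · have hsb1 : sb = 1 := by linarith
        rw [← h, hsb1]
        simpa using hy'
      · have hterm1 : 0 < sa * χ I x := mul_pos h hx'
        have hterm2 : 0 ≤ sb * χ I y := mul_nonneg hsb (le_of_lt hy')
        linarith
    -- transport everything to the vector space side through `e`
    set OV : Set (Fin (n + 1) → ℝ) := e.symm ⁻¹' O with hOV
    have hOVconv : Convex ℝ OV := by
      intro x hx y hy sa sb hsa hsb hsum
      have hlin : e.symm (sa • x + sb • y) = sa • e.symm x + sb • e.symm y := by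
        rw [_root_.map_add, _root_.map_smul, _root_.map_smul]
      show e.symm (sa • x + sb • y) ∈ O
      rw [hlin]
      exact hOconv hx hy hsa hsb hsum
    have hmemP : ∀ b : B, b ∈ P ↔ e b ∈ C := fun b => Iff.rfl
    have hmemOV : ∀ b : B, e b ∈ OV ↔ b ∈ O := fun b => by
      rw [hOV, Set.mem_preimage, LinearEquiv.symm_apply_apply]
    set UV : Set (Fin (n + 1) → ℝ) := ⋃ (b ∈ O \ P), {x | ∃ p ∈ P, x = e (b * p)} with hUV
    have hUVopen : IsOpen UV := by
      refine isOpen_biUnion ?_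
      rintro b ⟨hbO, hbP⟩
      obtain ⟨u, hu⟩ := hOunit b hbO
      set f : (Fin (n + 1) → ℝ) →ₗ[ℝ] (Fin (n + 1) → ℝ) :=
        ev.comp ((LinearMap.mulLeft ℝ ((↑u⁻¹ : B))).comp e.symm.toLinearMap) with hf
      have hfapp : ∀ x, f x = ev ((↑u⁻¹ : B) * e.symm x) := fun x => rfl
      have hset : {x | ∃ p ∈ P, x = e (b * p)} = f ⁻¹' C := by
        ext x
        simp only [Set.mem_setOf_eq, Set.mem_preimage, hfapp]
        constructor
        · rintro ⟨q, hq, rfl⟩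
          have heq1 : (↑u⁻¹ : B) * e.symm (e (b * q)) = q := by
            rw [LinearEquiv.symm_apply_apply, ← hu, ← mul_assoc, Units.inv_mul, one_mul]
          rw [heq1]
          exact hq
        · intro hx
          refine ⟨(↑u⁻¹ : B) * e.symm x, hx, ?_⟩
          rw [← mul_assoc, ← hu, Units.mul_inv, one_mul, LinearEquiv.apply_symm_apply]
      rw [hset]
      exact hopen.preimage f.continuous_of_finiteDimensional
    have hUVP : ∀ x ∈ UV, x ∉ C := by
      rintro x hx hxC
      simp only [hUV, Set.mem_iUnion] at hx
      obtain ⟨b, ⟨hbO, hbP⟩, q, hq, rfl⟩ := hx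
      have hbqP : b * q ∈ P := by
        rw [hmemP]
        exact hxC
      obtain ⟨q', hq', hqq'⟩ := hPinv q hq
      have heq2 : b = (b * q) * q' := by rw [mul_assoc, hqq', mul_one]
      exact hbP (heq2 ▸ hPmul _ hbqP _ hq')
    have hsub : OV ⊆ C ∪ UV := by
      intro x hx
      by_cases hxC : x ∈ C
      · exact Or.inl hxC
      · refine Or.inr ?_
        simp only [hUV, Set.mem_iUnion]
        have hxO : e.symm x ∈ O := hx
        have hxP : e.symm x ∉ P := by
          rw [hmemP, LinearEquiv.apply_symm_apply]
          exact hxC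
        exact ⟨e.symm x, ⟨hxO, hxP⟩, 1, hP1,
          by rw [mul_one, LinearEquiv.apply_symm_apply]⟩
    have hOpne : (OV ∩ C).Nonempty := by
      refine ⟨e 1, ?_, ?_⟩
      · rw [hmemOV]
        exact hO1
      · exact hP1
    have hOU'ne : (OV ∩ UV).Nonempty := by
      refine ⟨e a₀, ?_, ?_⟩
      · rw [hmemOV]
        exact ha₀
      · simp only [hUV, Set.mem_iUnion]
        exact ⟨a₀, ⟨ha₀, ha₀P⟩, 1, hP1, by rw [mul_one]⟩
    obtain ⟨x, hxOV, hxC, hxUV⟩ :=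
      hOVconv.isPreconnected C UV hopen hUVopen hsub hOpne hOU'ne
    exact hUVP x hxUV hxC
  -- final basis
  let W : B ≃ₗ[ℝ] (Fin (n + 1) → ℝ) := L.trans (LinearEquiv.funCongrLeft ℝ ℝ σ.symm)
  have hW : ∀ (a : B) (j : Fin (n + 1)), W a j = χ (σ.symm j) a := by
    intro a j
    show (LinearEquiv.funCongrLeft ℝ ℝ σ.symm) (L a) j = χ (σ.symm j) a
    rw [LinearEquiv.funCongrLeft_apply, LinearMap.funLeft_apply, hχdef]
    rfl
  let F : (Fin (n + 1) → ℝ) ≃ₗ[ℝ] (Fin (n + 1) → ℝ) := W.symm.trans e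
  let v : Module.Basis (Fin (n + 1)) ℝ (Fin (n + 1) → ℝ) := (Pi.basisFun ℝ (Fin (n + 1))).map F
  have hvB : ∀ i, v i = F (Pi.single i 1) := by
    intro i
    rw [Module.Basis.map_apply, Pi.basisFun_apply]
  have hsum : ∀ t : Fin (n + 1) → ℝ, ∑ i, t i • v i = F t := by
    intro t
    have h1 : ∑ i, t i • v i = F (∑ i, t i • (Pi.single i 1 : Fin (n + 1) → ℝ)) := by
      rw [_root_.map_sum]
      refine Finset.sum_congr rfl fun i _ => ?_
      rw [hvB, _root_.map_smul]
    rw [h1]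
    congr 1
    funext j
    rw [Finset.sum_apply]
    simp [Pi.single_apply]
  refine ⟨v, ?_⟩
  ext x
  simp only [Set.mem_setOf_eq]
  constructor
  · intro hx
    have haP : e.symm x ∈ P := by
      show ev (e.symm x) ∈ C
      have hee : ev (e.symm x) = x := e.apply_symm_apply x
      rwa [hee]
    refine ⟨W (e.symm x), fun j => ?_, ?_⟩
    · rw [hW]
      exact hχpos _ haP _
    · rw [hsum]
      show x = (W.symm.trans e) (W (e.symm x))
      rw [LinearEquiv.trans_apply, LinearEquiv.symm_apply_apply, LinearEquiv.apply_symm_apply]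
  · rintro ⟨t, ht, rfl⟩
    rw [hsum]
    have haO : ∀ I, 0 < χ I (W.symm t) := by
      intro I
      have h1 : χ I (W.symm t) = W (W.symm t) (σ I) := by
        rw [hW, Equiv.symm_apply_apply]
      rw [h1, W.apply_symm_apply]
      exact ht (σ I)
    have haP := hOP _ haO
    show (W.symm.trans e) t ∈ C
    rw [LinearEquiv.trans_apply]
    exact haP

end SimplicialAux

/-- If a connected abelian subgroup of `GL(n+1,ℝ)` preserves a properly convex open
cone and acts simply transitively on its rays, then the cone is simplicial:
it is the set of strictly positive linear combinations of some basis of `ℝ^{n+1}`. -/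
theorem simplicial_of_simply_transitive_abelian (n : ℕ)
    (C : Set (Fin (n + 1) → ℝ)) (hC : IsProperlyConvexOpenCone (n + 1) C)
    (T : Subgroup (Matrix.GeneralLinearGroup (Fin (n + 1)) ℝ))
    (habel : ∀ g ∈ T, ∀ h ∈ T, g * h = h * g)
    (hconn : IsConnected (T : Set (Matrix.GeneralLinearGroup (Fin (n + 1)) ℝ)))
    (hpres : ∀ g ∈ T, Matrix.mulVec ((g : Matrix.GeneralLinearGroup (Fin (n + 1)) ℝ) :
      Matrix (Fin (n + 1)) (Fin (n + 1)) ℝ) '' C = C)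
    (htrans : ∀ x ∈ C, ∀ y ∈ C, ∃ g ∈ T, ∃ c : ℝ, 0 < c ∧
      Matrix.mulVec ((g : Matrix.GeneralLinearGroup (Fin (n + 1)) ℝ) :
        Matrix (Fin (n + 1)) (Fin (n + 1)) ℝ) x = c • y)
    (hfree : ∀ g ∈ T, (∃ x ∈ C, ∃ c : ℝ, 0 < c ∧
      Matrix.mulVec ((g : Matrix.GeneralLinearGroup (Fin (n + 1)) ℝ) :
        Matrix (Fin (n + 1)) (Fin (n + 1)) ℝ) x = c • x) →
      ∃ lam : ℝ, ((g : Matrix.GeneralLinearGroup (Fin (n + 1)) ℝ) :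
        Matrix (Fin (n + 1)) (Fin (n + 1)) ℝ) = lam • (1 : Matrix (Fin (n + 1)) (Fin (n + 1)) ℝ)) :
    ∃ v : Module.Basis (Fin (n + 1)) ℝ (Fin (n + 1) → ℝ),
      C = {x | ∃ t : Fin (n + 1) → ℝ, (∀ i, 0 < t i) ∧ x = ∑ i, t i • v i} := by
  obtain ⟨hne, hopen, hconv, hcone, hproper⟩ := hC
  obtain ⟨x₀, hx₀⟩ := hne
  classical
  -- the set of matrices coming from `T`
  set S : Set (Matrix (Fin (n + 1)) (Fin (n + 1)) ℝ) :=
    (fun g : Matrix.GeneralLinearGroup (Fin (n + 1)) ℝ =>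
      (g : Matrix (Fin (n + 1)) (Fin (n + 1)) ℝ)) '' (T : Set _) with hS
  have hScomm : ∀ a ∈ S, ∀ b ∈ S, a * b = b * a := by
    rintro a ⟨g, hg, rfl⟩ b ⟨h, hh, rfl⟩
    have := habel g hg h hh
    calc (g : Matrix (Fin (n + 1)) (Fin (n + 1)) ℝ) * h = ((g * h : Matrix.GeneralLinearGroup (Fin (n + 1)) ℝ) : Matrix (Fin (n + 1)) (Fin (n + 1)) ℝ) := rfl
    _ = ((h * g : Matrix.GeneralLinearGroup (Fin (n + 1)) ℝ) : Matrix (Fin (n + 1)) (Fin (n + 1)) ℝ) := by rw [this]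
    _ = (h : Matrix (Fin (n + 1)) (Fin (n + 1)) ℝ) * g := rfl
  set A : Subalgebra ℝ (Matrix (Fin (n + 1)) (Fin (n + 1)) ℝ) := Algebra.adjoin ℝ S with hA
  have hcomm : ∀ a b : ↥A, a * b = b * a := by
    intro a b
    letI := Algebra.adjoinCommRingOfComm ℝ hScomm
    exact mul_comm a b
  have memA : ∀ g ∈ T, ((g : Matrix.GeneralLinearGroup (Fin (n + 1)) ℝ) :
      Matrix (Fin (n + 1)) (Fin (n + 1)) ℝ) ∈ A := by
    intro g hg
    exact Algebra.subset_adjoin ⟨g, hg, rfl⟩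
  have hsurjC : ∀ y ∈ C, ∃ a : ↥A, (a : Matrix (Fin (n + 1)) (Fin (n + 1)) ℝ).mulVec x₀ = y := by
    intro y hy
    obtain ⟨g, hgT, c, hc, hgx⟩ := htrans x₀ hx₀ y hy
    refine ⟨c⁻¹ • ⟨_, memA g hgT⟩, ?_⟩
    have : ((c⁻¹ • (⟨_, memA g hgT⟩ : ↥A) : ↥A) : Matrix (Fin (n + 1)) (Fin (n + 1)) ℝ)
        = c⁻¹ • ((g : Matrix.GeneralLinearGroup (Fin (n + 1)) ℝ) :
          Matrix (Fin (n + 1)) (Fin (n + 1)) ℝ) := rfl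
    rw [this, Matrix.smul_mulVec, hgx, smul_smul, inv_mul_cancel₀ hc.ne', one_smul]
  -- key decomposition
  have key : ∀ a : ↥A, (a : Matrix (Fin (n + 1)) (Fin (n + 1)) ℝ).mulVec x₀ ∈ C →
      ∃ g ∈ T, ∃ c : ℝ, 0 < c ∧ (a : Matrix (Fin (n + 1)) (Fin (n + 1)) ℝ)
        = c • ((g : Matrix.GeneralLinearGroup (Fin (n + 1)) ℝ) :
          Matrix (Fin (n + 1)) (Fin (n + 1)) ℝ) := by
    intro a ha
    obtain ⟨g, hgT, c, hc, hgx⟩ := htrans x₀ hx₀ _ ha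
    set b : ↥A := c⁻¹ • ⟨_, memA g hgT⟩ with hb
    have hbval : (b : Matrix (Fin (n + 1)) (Fin (n + 1)) ℝ)
        = c⁻¹ • ((g : Matrix.GeneralLinearGroup (Fin (n + 1)) ℝ) :
          Matrix (Fin (n + 1)) (Fin (n + 1)) ℝ) := rfl
    have hker := SimplicialAux.ev_ker hopen ⟨x₀, hx₀⟩ A hcomm x₀ hsurjC (a - b) ?_
    · refine ⟨g, hgT, c⁻¹, by positivity, ?_⟩
      have : (a : Matrix (Fin (n + 1)) (Fin (n + 1)) ℝ)
          - (b : Matrix (Fin (n + 1)) (Fin (n + 1)) ℝ) = 0 := by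
        rw [← hker]; rfl
      rw [← hbval, ← sub_eq_zero]; exact this
    · have hsub : ((a - b : ↥A) : Matrix (Fin (n + 1)) (Fin (n + 1)) ℝ)
        = (a : Matrix (Fin (n + 1)) (Fin (n + 1)) ℝ) - (b : Matrix (Fin (n + 1)) (Fin (n + 1)) ℝ) := rfl
      rw [hsub, Matrix.sub_mulVec, hbval, Matrix.smul_mulVec, hgx, smul_smul,
        inv_mul_cancel₀ hc.ne', one_smul, sub_self]
  have hact : ∀ a : ↥A, (a : Matrix (Fin (n + 1)) (Fin (n + 1)) ℝ).mulVec x₀ ∈ C →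
      ∀ y ∈ C, (a : Matrix (Fin (n + 1)) (Fin (n + 1)) ℝ).mulVec y ∈ C := by
    intro a ha y hy
    obtain ⟨g, hgT, c, hc, haeq⟩ := key a ha
    rw [haeq, Matrix.smul_mulVec]
    have hgy : ((g : Matrix.GeneralLinearGroup (Fin (n + 1)) ℝ) :
        Matrix (Fin (n + 1)) (Fin (n + 1)) ℝ).mulVec y ∈ C := by
      rw [← hpres g hgT]; exact ⟨y, hy, rfl⟩
    exact hcone _ hgy c hc
  have hinv : ∀ a : ↥A, (a : Matrix (Fin (n + 1)) (Fin (n + 1)) ℝ).mulVec x₀ ∈ C →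
      ∃ b : ↥A, (b : Matrix (Fin (n + 1)) (Fin (n + 1)) ℝ).mulVec x₀ ∈ C ∧ a * b = 1 := by
    intro a ha
    obtain ⟨g, hgT, c, hc, haeq⟩ := key a ha
    refine ⟨c⁻¹ • ⟨_, memA g⁻¹ (inv_mem hgT)⟩, ?_, ?_⟩
    · have hval : ((c⁻¹ • (⟨_, memA g⁻¹ (inv_mem hgT)⟩ : ↥A) : ↥A) :
          Matrix (Fin (n + 1)) (Fin (n + 1)) ℝ)
          = c⁻¹ • (((g⁻¹ : Matrix.GeneralLinearGroup (Fin (n + 1)) ℝ)) :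
            Matrix (Fin (n + 1)) (Fin (n + 1)) ℝ) := rfl
      rw [hval, Matrix.smul_mulVec]
      have hmem : (((g⁻¹ : Matrix.GeneralLinearGroup (Fin (n + 1)) ℝ)) :
          Matrix (Fin (n + 1)) (Fin (n + 1)) ℝ).mulVec x₀ ∈ C := by
        rw [← hpres g⁻¹ (inv_mem hgT)]; exact ⟨x₀, hx₀, rfl⟩
      exact hcone _ hmem c⁻¹ (by positivity)
    · apply Subtype.ext
      have hval : ((c⁻¹ • (⟨_, memA g⁻¹ (inv_mem hgT)⟩ : ↥A) : ↥A) :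
          Matrix (Fin (n + 1)) (Fin (n + 1)) ℝ)
          = c⁻¹ • (((g⁻¹ : Matrix.GeneralLinearGroup (Fin (n + 1)) ℝ)) :
            Matrix (Fin (n + 1)) (Fin (n + 1)) ℝ) := rfl
      show (a : Matrix (Fin (n + 1)) (Fin (n + 1)) ℝ) * _ = (1 : Matrix (Fin (n + 1)) (Fin (n + 1)) ℝ)
      rw [hval, haeq, smul_mul_smul_comm]
      have : ((g : Matrix.GeneralLinearGroup (Fin (n + 1)) ℝ) :
          Matrix (Fin (n + 1)) (Fin (n + 1)) ℝ) *
          (((g⁻¹ : Matrix.GeneralLinearGroup (Fin (n + 1)) ℝ)) :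
            Matrix (Fin (n + 1)) (Fin (n + 1)) ℝ) = 1 := by
        rw [← Units.val_mul, mul_inv_cancel, Units.val_one]
      rw [this, mul_inv_cancel₀ hc.ne', one_smul]
  -- package into the abstract core
  let ev : ↥A → (Fin (n + 1) → ℝ) :=
    fun a => (a : Matrix (Fin (n + 1)) (Fin (n + 1)) ℝ).mulVec x₀
  have hadd : ∀ a b : ↥A, ev (a + b) = ev a + ev b := by
    intro a b
    show ((a : Matrix (Fin (n + 1)) (Fin (n + 1)) ℝ)
      + (b : Matrix (Fin (n + 1)) (Fin (n + 1)) ℝ)).mulVec x₀ = _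
    rw [Matrix.add_mulVec]
  have hsmul : ∀ (c : ℝ) (a : ↥A), ev (algebraMap ℝ ↥A c * a) = c • ev a := by
    intro c a
    show ((algebraMap ℝ ↥A c * a : ↥A) : Matrix (Fin (n + 1)) (Fin (n + 1)) ℝ).mulVec x₀
      = c • ev a
    rw [MulMemClass.coe_mul]
    have h1 : ((algebraMap ℝ ↥A c : ↥A) : Matrix (Fin (n + 1)) (Fin (n + 1)) ℝ)
        = algebraMap ℝ (Matrix (Fin (n + 1)) (Fin (n + 1)) ℝ) c := rfl
    rw [h1, Algebra.algebraMap_eq_smul_one, smul_mul_assoc, one_mul,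
      Matrix.smul_mulVec]
  have hevinj : ∀ b : ↥A, ev b = 0 → b = 0 := by
    intro b hb
    exact Subtype.ext (SimplicialAux.ev_ker hopen ⟨x₀, hx₀⟩ A hcomm x₀ hsurjC b hb)
  have hevsurjC : ∀ y ∈ C, ∃ b : ↥A, ev b = y := hsurjC
  have hone : ev 1 ∈ C := by
    have h1 : ev 1 = x₀ := by
      show ((1 : ↥A) : Matrix (Fin (n + 1)) (Fin (n + 1)) ℝ).mulVec x₀ = x₀
      rw [OneMemClass.coe_one, Matrix.one_mulVec]
    rwa [h1]
  have hmul : ∀ p q : ↥A, ev p ∈ C → ev q ∈ C → ev (p * q) ∈ C := by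
    intro p q hp hq
    have h1 : ev (p * q) = (p : Matrix (Fin (n + 1)) (Fin (n + 1)) ℝ).mulVec (ev q) := by
      show ((p * q : ↥A) : Matrix (Fin (n + 1)) (Fin (n + 1)) ℝ).mulVec x₀ = _
      rw [MulMemClass.coe_mul, ← Matrix.mulVec_mulVec]
    rw [h1]
    exact hact p hp (ev q) hq
  have hqinv : ∀ p : ↥A, ev p ∈ C → ∃ q : ↥A, ev q ∈ C ∧ p * q = 1 := fun p hp => hinv p hp
  letI iCR : CommRing ↥A := { (inferInstance : Ring ↥A) with mul_comm := hcomm }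
  exact @SimplicialAux.absCore ↥A iCR A.algebra n C
    ⟨⟨x₀, hx₀⟩, hopen, hconv, hcone, hproper⟩ ev hadd hsmul hevinj hevsurjC hone hmul hqinv
end

section
/- Let G be a torsion-free group and let H ≤ G be a subgroup of finite index whose center Z(H) is nontrivial. Then G contains a nontrivial normal abelian subgroup. -/
/-- A monoid is torsion-free if no nontrivial element has finite order
(the definition of `Monoid.IsTorsionFree` in the older Mathlib). -/
def Monoid.IsTorsionFree (G : Type*) [Monoid G] : Prop :=
  ∀ g : G, g ≠ 1 → ¬IsOfFinOrder g

lemma centralizer_normal_of_normal {G : Type*} [Group G] (K : Subgroup G) (hK : K.Normal) :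
    (Subgroup.centralizer (K : Set G)).Normal := by
  constructor
  intro n hn g
  rw [Subgroup.mem_centralizer_iff] at hn ⊢
  intro h hh
  have h1 : g⁻¹ * h * g ∈ K := by
    simpa using hK.conj_mem h hh g⁻¹
  have key : h * (g * n * g⁻¹) = g * ((g⁻¹ * h * g) * n) * g⁻¹ := by group
  rw [key, hn _ h1]
  group

/-- If `G` is torsion-free and `H ≤ G` has finite index and nontrivial center, then
`G` contains a nontrivial normal abelian subgroup. -/
theorem nontrivial_normal_abelian_of_finiteIndex_center
    (G : Type*) [Group G] (htf : Monoid.IsTorsionFree G)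
    (H : Subgroup G) (hfin : H.FiniteIndex) (hcent : Subgroup.center H ≠ ⊥) :
    ∃ A : Subgroup G, A.Normal ∧ A ≠ ⊥ ∧ ∀ a ∈ A, ∀ b ∈ A, a * b = b * a := by
  -- get a nontrivial central element of H
  rw [Subgroup.ne_bot_iff_exists_ne_one] at hcent
  obtain ⟨⟨z, hzc⟩, hz1⟩ := hcent
  set K := H.normalCore with hKdef
  have hKnormal : K.Normal := H.normalCore_normal
  have hKle : K ≤ H := H.normalCore_le
  have hKfin : K.FiniteIndex := Subgroup.finiteIndex_normalCore H
  -- z, as an element of G, commutes with all of H, hence with all of K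
  have hzG : (z : G) ∈ Subgroup.centralizer (K : Set G) := by
    rw [Subgroup.mem_centralizer_iff]
    intro h hh
    have hhH : h ∈ H := hKle hh
    have := (Subgroup.mem_center_iff.mp hzc) ⟨h, hhH⟩
    exact congrArg Subtype.val this
  -- some power of z lies in K
  obtain ⟨n, hn0, -, hnK⟩ := Subgroup.exists_pow_mem_of_index_ne_zero hKfin.index_ne_zero (z : G)
  set A := Subgroup.centralizer (K : Set G) ⊓ K with hAdef
  refine ⟨A, ?_, ?_, ?_⟩
  · have := centralizer_normal_of_normal K hKnormal
    exact Subgroup.normal_inf_normal _ _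
  · intro hbot
    have hzn : (z : G) ^ n ∈ A := by
      refine ⟨pow_mem hzG n, hnK⟩
    rw [hbot, Subgroup.mem_bot] at hzn
    have hfo : IsOfFinOrder (z : G) := isOfFinOrder_iff_pow_eq_one.mpr ⟨n, hn0, hzn⟩
    have : (z : G) ≠ 1 := by
      intro h
      apply hz1
      ext
      exact h
    exact htf _ this hfo
  · intro a ha b hb
    have hac := ha.1
    have hbk := hb.2
    exact (Subgroup.mem_centralizer_iff.mp hac b hbk).symm
end

section
/- Let Λ ⊆ ℝ^m be the subgroup generated over ℤ by a basis of ℝ^m (a full-rank lattice). Then for every v ∈ ℝ^m, every ε > 0 and every s ∈ ℝ, there exist λ ∈ Λ and t > s with ‖λ − t·v‖ < ε. (In particular, a lattice in an abelian group T ≅ ℝ^m approaches every one-parameter subgroup of T at infinity.) -/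
/-- A full-rank lattice `Λ = ℤ⟨v₁,…,v_m⟩` in Euclidean space approaches every
one-parameter subgroup `t ↦ t • v` at infinity: lattice points come within `ε` of
`t • v` for arbitrarily large `t`. -/
theorem lattice_approaches_one_parameter_subgroup (m : ℕ)
    (b : Module.Basis (Fin m) ℝ (EuclideanSpace ℝ (Fin m))) :
    ∀ v : EuclideanSpace ℝ (Fin m), ∀ ε : ℝ, 0 < ε → ∀ s : ℝ,
      ∃ lam ∈ AddSubgroup.closure (Set.range b), ∃ t : ℝ, t > s ∧ ‖lam - t • v‖ < ε := by
  intro v ε hε s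
  set N : ℕ := ⌈s⌉₊ + 1 with hN
  have hNs : (N : ℝ) > s := lt_of_le_of_lt (Nat.le_ceil s) (by exact_mod_cast Nat.lt_succ_self _)
  -- the sequence of fractional parts of multiples of v
  set a : ℕ → EuclideanSpace ℝ (Fin m) := fun n => ((n * N : ℕ) : ℝ) • v with ha
  set g : ℕ → EuclideanSpace ℝ (Fin m) := fun n => ZSpan.fract b (a n) with hg
  -- each a n - g n lies in the lattice
  have hmem : ∀ n, a n - g n ∈ Submodule.span ℤ (Set.range b) := by
    intro n
    have h : -(a n) + ZSpan.fract b (a n) ∈ Submodule.span ℤ (Set.range b) := by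
      rw [← ZSpan.fract_eq_fract]
      exact (ZSpan.fract_fract b (a n)).symm
    have h2 := Submodule.neg_mem _ h
    have : a n - g n = -(-(a n) + ZSpan.fract b (a n)) := by simp [hg]; abel
    rw [this]; exact h2
  -- g lands in the closure of the bounded fundamental domain, which is compact
  have hcpt : IsCompact (closure (ZSpan.fundamentalDomain b)) :=
    (ZSpan.fundamentalDomain_isBounded b).isCompact_closure
  have hgmem : ∀ n, g n ∈ closure (ZSpan.fundamentalDomain b) := fun n =>
    subset_closure (ZSpan.fract_mem_fundamentalDomain b (a n))
  obtain ⟨x, -, φ, hφ, hconv⟩ := hcpt.tendsto_subseq hgmem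
  have hclose : ∀ᶠ n in Filter.atTop, dist (g (φ n)) x < ε / 2 :=
    (Metric.tendsto_nhds.mp hconv) (ε / 2) (by linarith)
  obtain ⟨n₀, hn₀⟩ := Filter.eventually_atTop.mp hclose
  set j : ℕ := φ n₀ with hj
  set k : ℕ := φ (n₀ + 1) with hk
  have hjk : j < k := hφ (Nat.lt_succ_self n₀)
  have hd : dist (g k) (g j) < ε := by
    calc dist (g k) (g j) ≤ dist (g k) x + dist (g j) x := dist_triangle_right _ _ _
    _ < ε / 2 + ε / 2 := add_lt_add (hn₀ _ (Nat.le_succ n₀)) (hn₀ _ le_rfl)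
    _ = ε := by ring
  refine ⟨(a k - g k) - (a j - g j), ?_, ((k * N : ℕ) : ℝ) - ((j * N : ℕ) : ℝ), ?_, ?_⟩
  · rw [← Submodule.span_int_eq_addSubgroupClosure]
    exact Submodule.sub_mem _ (hmem k) (hmem j)
  · have h1 : j + 1 ≤ k := hjk
    have h2 : (j + 1) * N ≤ k * N := Nat.mul_le_mul_right N h1
    have h2' : j * N + N ≤ k * N := by rw [← Nat.succ_mul]; exact h2
    have h3 : ((j * N : ℕ) : ℝ) + (N : ℝ) ≤ ((k * N : ℕ) : ℝ) := by exact_mod_cast h2'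
    linarith
  · have : a k - a j = (((k * N : ℕ) : ℝ) - ((j * N : ℕ) : ℝ)) • v := by
      rw [sub_smul]
    have heq : (a k - g k) - (a j - g j) - (((k * N : ℕ) : ℝ) - ((j * N : ℕ) : ℝ)) • v
        = g j - g k := by
      rw [← this]; abel
    rw [heq, ← dist_eq_norm, dist_comm]
    exact hd
end
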